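/- arXiv:2601.15990 — 8 statements merged into one kernel-verified Lean document; each statement's English description precedes it below -/
import Mathlib

section
/- (Time monotonicity of mass functions under stationarily supersolution data.) Let d ≥ 5 be an integer and T > 0. Let M, W : [0,∞)×[0,T) → ℝ be continuous, continuously differentiable on [0,∞)×(0,T), twice continuously differentiable in r on (0,∞)×(0,T), bounded on [0,∞)×[0,T₀] for every T₀ < T, satisfying r·∂_r M + d·M ≥ 0 on (0,∞)×(0,T) with sup_{(r,t)∈(0,∞)×(0,T₀)} |r·∂_r M(r,t)| < ∞ for every T₀ < T, and solving on (0,∞)×(0,T) the system ∂_t M = ∂_{rr} M + ((d+1)/r)∂_r M + r·(∂_r M)·W + d·M·W, ∂_t W = ∂_{rr} W + ((d+1)/r)∂_r W + M. Suppose M₀ := M(·,0) and W₀ := W(·,0) are twice continuously differentiable on (0,∞) and satisfy, for all r > 0, M₀''(r) + ((d+1)/r)M₀'(r) + r·M₀'(r)·W₀(r) + d·M₀(r)·W₀(r) ≤ 0 and W₀''(r) + ((d+1)/r)W₀'(r) + M₀(r) ≤ 0. Then for each fixed r ≥ 0 the maps t ↦ M(r,t) and t ↦ W(r,t) are nonincreasing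 on [0,T). -/
/-- Partial derivative in the time variable. -/
noncomputable def pderivT (f : ℝ → ℝ → ℝ) (r t : ℝ) : ℝ := deriv (fun s => f r s) t

/-- Partial derivative in the radial variable. -/
noncomputable def pderivR (f : ℝ → ℝ → ℝ) (r t : ℝ) : ℝ := deriv (fun ρ => f ρ t) r

/-- Second partial derivative in the radial variable. -/
noncomputable def pderivRR (f : ℝ → ℝ → ℝ) (r t : ℝ) : ℝ := deriv (fun ρ => pderivR f ρ t) r

/-- Regularity for the mass functions: continuous on `[0,∞) × [0,T)`, continuously
differentiable on `[0,∞) × (0,T)`, twice continuously differentiable in `r` on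
`(0,∞) × (0,T)`, and bounded on `[0,∞) × [0,T₀]` for every `T₀ < T`. -/
def MassReg (f : ℝ → ℝ → ℝ) (T : ℝ) : Prop :=
  ContinuousOn (fun p : ℝ × ℝ => f p.1 p.2) (Set.Ici 0 ×ˢ Set.Ico 0 T) ∧
  (∀ r ∈ Set.Ici (0 : ℝ), ∀ t ∈ Set.Ioo (0 : ℝ) T, DifferentiableAt ℝ (fun s => f r s) t) ∧
  (∀ r ∈ Set.Ici (0 : ℝ), ∀ t ∈ Set.Ioo (0 : ℝ) T, DifferentiableAt ℝ (fun ρ => f ρ t) r) ∧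
  ContinuousOn (fun p : ℝ × ℝ => pderivT f p.1 p.2) (Set.Ici 0 ×ˢ Set.Ioo 0 T) ∧
  ContinuousOn (fun p : ℝ × ℝ => pderivR f p.1 p.2) (Set.Ici 0 ×ˢ Set.Ioo 0 T) ∧
  (∀ r ∈ Set.Ioi (0 : ℝ), ∀ t ∈ Set.Ioo (0 : ℝ) T,
    DifferentiableAt ℝ (fun ρ => pderivR f ρ t) r) ∧
  ContinuousOn (fun p : ℝ × ℝ => pderivRR f p.1 p.2) (Set.Ioi 0 ×ˢ Set.Ioo 0 T) ∧
  (∀ T₀ < T, ∃ Cb : ℝ, ∀ r ∈ Set.Ici (0 : ℝ), ∀ t ∈ Set.Icc 0 T₀, |f r t| ≤ Cb)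


open Set Filter Topology

section helpers

lemma second_deriv_test {f f' : ℝ → ℝ} {x c : ℝ} (hx : 0 < x)
    (hf : ∀ y ∈ Set.Ioi (0:ℝ), HasDerivAt f (f' y) y)
    (hf' : HasDerivAt f' c x)
    (hmax : ∀ y ∈ Set.Ioi (0:ℝ), f y ≤ f x) : f' x = 0 ∧ c ≤ 0 := by
  have hloc : IsLocalMax f x :=
    Filter.eventually_of_mem (isOpen_Ioi.mem_nhds hx) (fun y hy => hmax y hy)
  have hd0 : f' x = 0 := hloc.hasDerivAt_eq_zero (hf x hx)
  refine ⟨hd0, ?_⟩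
  by_contra hc
  push_neg at hc
  have hslope : Filter.Tendsto (slope f' x) (nhdsWithin x (Set.Ioi x)) (nhds c) :=
    (hasDerivAt_iff_tendsto_slope.1 hf').mono_left
      (nhdsWithin_mono x (fun y hy => ne_of_gt hy))
  have hev : ∀ᶠ y in nhdsWithin x (Set.Ioi x), 0 < slope f' x y :=
    hslope.eventually (eventually_gt_nhds hc)
  obtain ⟨u, hu, hsub⟩ := mem_nhdsGT_iff_exists_Ioo_subset.1 hev
  have hupos : x < u := hu
  set b := (x + u) / 2 with hb
  have hxb : x < b := by rw [hb]; linarith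
  have hbu : b < u := by rw [hb]; linarith
  have hder : ∀ y ∈ Set.Ioo x u, 0 < f' y := by
    intro y hy
    have hsl0 : 0 < slope f' x y := hsub hy
    rw [slope_def_field] at hsl0
    have hyx : 0 < y - x := sub_pos.2 hy.1
    have := mul_pos hsl0 hyx
    rw [div_mul_cancel₀ _ (ne_of_gt hyx)] at this
    linarith [hd0 ▸ this]
  have hmono : StrictMonoOn f (Set.Icc x b) := by
    apply strictMonoOn_of_deriv_pos (convex_Icc x b)
    · intro y hy
      have hy0 : 0 < y := lt_of_lt_of_le hx hy.1
      exact ((hf y hy0).continuousAt).continuousWithinAt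
    · intro y hy
      rw [interior_Icc] at hy
      have hy0 : 0 < y := lt_trans hx hy.1
      rw [(hf y hy0).deriv]
      exact hder y ⟨hy.1, lt_trans hy.2 hbu⟩
  have : f x < f b := hmono ⟨le_refl x, le_of_lt hxb⟩ ⟨le_of_lt hxb, le_refl b⟩ hxb
  exact absurd (hmax b (lt_trans hx hxb)) (not_le.2 this)

lemma deriv_nonneg_of_left_le {g : ℝ → ℝ} {t c : ℝ} (ht : 0 < t)
    (hg : HasDerivAt g c t) (hle : ∀ s ∈ Set.Ico (0:ℝ) t, g s ≤ g t) : 0 ≤ c := by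
  have h1 : Filter.Tendsto (slope g t) (nhdsWithin t (Set.Iio t)) (nhds c) :=
    (hasDerivAt_iff_tendsto_slope.1 hg).mono_left
      (nhdsWithin_mono t (fun y hy => ne_of_lt hy))
  refine ge_of_tendsto h1 ?_
  filter_upwards [Ioo_mem_nhdsLT_of_mem (⟨ht, le_refl t⟩ : t ∈ Set.Ioc 0 t)] with s hs
  have h2 : g s - g t ≤ 0 := sub_nonpos.2 (hle s ⟨le_of_lt hs.1, hs.2⟩)
  have h3 : s - t ≤ 0 := le_of_lt (sub_neg.2 hs.2)
  rw [slope_def_field]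
  have hq : (g s - g t) / (s - t) = (g t - g s) / (t - s) := by
    rw [show g s - g t = -(g t - g s) by ring, show s - t = -(t - s) by ring, neg_div_neg_eq]
  rw [hq]
  exact div_nonneg (by linarith) (by linarith)

noncomputable def barrier (lam η r t : ℝ) : ℝ := Real.exp (lam * t) * (1 + r ^ 2 + η * r⁻¹)

lemma barrier_pos {lam η r t : ℝ} (hη : 0 < η) (hr : 0 < r) : 0 < barrier lam η r t := by
  have h1 : 0 < 1 + r ^ 2 + η * r⁻¹ := by positivity
  exact mul_pos (Real.exp_pos _) h1

lemma barrier_ge {lam η r t : ℝ} (hlam : 0 ≤ lam) (ht : 0 ≤ t) (hη : 0 < η) (hr : 0 < r) :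
    1 + r ^ 2 + η * r⁻¹ ≤ barrier lam η r t := by
  have h1 : 0 < 1 + r ^ 2 + η * r⁻¹ := by positivity
  have h2 : (1:ℝ) ≤ Real.exp (lam * t) := Real.one_le_exp (by positivity)
  unfold barrier
  nlinarith

lemma psi_hasDerivAt (η : ℝ) {r : ℝ} (hr : r ≠ 0) :
    HasDerivAt (fun ρ : ℝ => 1 + ρ ^ 2 + η * ρ⁻¹) (2 * r - η * (r⁻¹) ^ 2) r := by
  have h1 : HasDerivAt (fun ρ : ℝ => ρ ^ 2) (2 * r) r := by simpa using hasDerivAt_pow 2 r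
  have h2 : HasDerivAt (fun ρ : ℝ => ρ⁻¹) (-(r ^ 2)⁻¹) r := hasDerivAt_inv hr
  have h := (h1.const_add 1).add (h2.const_mul η)
  refine h.congr_deriv ?_
  rw [← inv_pow]; ring

lemma psi'_hasDerivAt (η : ℝ) {r : ℝ} (hr : r ≠ 0) :
    HasDerivAt (fun ρ : ℝ => 2 * ρ - η * (ρ⁻¹) ^ 2) (2 + 2 * η * (r⁻¹) ^ 3) r := by
  have h2 : HasDerivAt (fun ρ : ℝ => (ρ⁻¹) ^ 2) ((2:ℕ) * (r⁻¹) ^ 1 * (-(r ^ 2)⁻¹)) r :=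
    (hasDerivAt_inv hr).pow 2
  have h1 : HasDerivAt (fun ρ : ℝ => 2 * ρ) 2 r := by
    simpa using (hasDerivAt_id r).const_mul (2:ℝ)
  have h := h1.sub (h2.const_mul η)
  refine h.congr_deriv ?_
  rw [← inv_pow]; push_cast; ring

lemma barrier_hasDerivAt_r (lam η : ℝ) {r : ℝ} (hr : r ≠ 0) (t : ℝ) :
    HasDerivAt (fun ρ => barrier lam η ρ t)
      (Real.exp (lam * t) * (2 * r - η * (r⁻¹) ^ 2)) r :=
  (psi_hasDerivAt η hr).const_mul (Real.exp (lam * t))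

lemma barrier_hasDerivAt_t (lam η r : ℝ) (t : ℝ) :
    HasDerivAt (fun s => barrier lam η r s) (lam * barrier lam η r t) t := by
  have h1 : HasDerivAt (fun s : ℝ => Real.exp (lam * s)) (Real.exp (lam * t) * (lam * 1)) t :=
    ((hasDerivAt_id t).const_mul lam).exp
  have h := h1.mul_const (1 + r ^ 2 + η * r⁻¹)
  refine h.congr_deriv ?_
  unfold barrier; ring

end helpers

section master

set_option maxHeartbeats 1600000 in
/-- Comparison / maximum principle for the cooperative linear system. -/
lemma master (d : ℕ) (hd1 : 1 ≤ d) (T' T₀ K C : ℝ) (hT₀ : 0 < T₀) (hTT : T₀ < T') (hK : 1 ≤ K)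
    (A B At Ar Arr Bt Br Brr : ℝ → ℝ → ℝ)
    (hcontA : ContinuousOn (fun p : ℝ × ℝ => A p.1 p.2) (Set.Ici 0 ×ˢ Set.Icc 0 T₀))
    (hcontB : ContinuousOn (fun p : ℝ × ℝ => B p.1 p.2) (Set.Ici 0 ×ˢ Set.Icc 0 T₀))
    (hbd : ∀ r ∈ Set.Ioi (0:ℝ), ∀ t ∈ Set.Icc (0:ℝ) T₀, A r t ≤ C ∧ B r t ≤ C)
    (hAt : ∀ r ∈ Set.Ioi (0:ℝ), ∀ t ∈ Set.Ioo (0:ℝ) T',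
      HasDerivAt (fun s => A r s) (At r t) t)
    (hAr : ∀ r ∈ Set.Ioi (0:ℝ), ∀ t ∈ Set.Ioo (0:ℝ) T',
      HasDerivAt (fun ρ => A ρ t) (Ar r t) r)
    (hArr : ∀ r ∈ Set.Ioi (0:ℝ), ∀ t ∈ Set.Ioo (0:ℝ) T',
      HasDerivAt (fun ρ => Ar ρ t) (Arr r t) r)
    (hBt : ∀ r ∈ Set.Ioi (0:ℝ), ∀ t ∈ Set.Ioo (0:ℝ) T',
      HasDerivAt (fun s => B r s) (Bt r t) t)
    (hBr : ∀ r ∈ Set.Ioi (0:ℝ), ∀ t ∈ Set.Ioo (0:ℝ) T',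
      HasDerivAt (fun ρ => B ρ t) (Br r t) r)
    (hBrr : ∀ r ∈ Set.Ioi (0:ℝ), ∀ t ∈ Set.Ioo (0:ℝ) T',
      HasDerivAt (fun ρ => Br ρ t) (Brr r t) r)
    (hpdeA : ∀ r ∈ Set.Ioi (0:ℝ), ∀ t ∈ Set.Ioo (0:ℝ) T',
      At r t ≤ Arr r t + ((d:ℝ)+1)/r * Ar r t + K * |r * Ar r t| + K * |A r t|
        + K * max (B r t) 0)
    (hpdeB : ∀ r ∈ Set.Ioi (0:ℝ), ∀ t ∈ Set.Ioo (0:ℝ) T',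
      Bt r t ≤ Brr r t + ((d:ℝ)+1)/r * Br r t + K * max (A r t) 0)
    (hinit : ∀ r ∈ Set.Ioi (0:ℝ), A r 0 ≤ 0 ∧ B r 0 ≤ 0) :
    ∀ r ∈ Set.Ici (0:ℝ), ∀ t ∈ Set.Icc (0:ℝ) T₀, A r t ≤ 0 ∧ B r t ≤ 0 := by
  obtain ⟨lam, hlam⟩ : ∃ lam : ℝ, lam = 2 * (d:ℝ) + 4 * K + 5 := ⟨_, rfl⟩
  have hlam0 : 0 ≤ lam := by rw [hlam]; positivity
  have hK0 : (0:ℝ) < K := lt_of_lt_of_le one_pos hK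
  -- the key quantitative estimate
  have key : ∀ ε > (0:ℝ), ∀ η > (0:ℝ), ∀ r ∈ Set.Ioi (0:ℝ), ∀ t ∈ Set.Icc (0:ℝ) T₀,
      max (A r t) (B r t) < ε * barrier lam η r t := by
    intro ε hε η hη
    by_contra hbad
    push_neg at hbad
    obtain ⟨r1, hr1, t1, ht1, hbad1⟩ := hbad
    have hr1pos : (0:ℝ) < r1 := hr1
    have hCge : ε ≤ C := by
      have h1 := hbd r1 hr1 t1 ht1
      have h2 : max (A r1 t1) (B r1 t1) ≤ C := max_le h1.1 h1.2
      have h3 : 1 + r1 ^ 2 + η * r1⁻¹ ≤ barrier lam η r1 t1 := barrier_ge hlam0 ht1.1 hη hr1pos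
      have h5 : 0 < η * r1⁻¹ := by positivity
      nlinarith [sq_nonneg r1]
    have hC0 : (0:ℝ) < C := lt_of_lt_of_le hε hCge
    have hr₀ : 0 < ε * η / C := by positivity
    have hloc : ∀ r ∈ Set.Ioi (0:ℝ), ∀ t ∈ Set.Icc (0:ℝ) T₀,
        ε * barrier lam η r t ≤ max (A r t) (B r t) →
        r ∈ Set.Icc (ε * η / C) (Real.sqrt (C / ε)) := by
      intro r hr t ht hle
      have hrpos : (0:ℝ) < r := hr
      have hinv : 0 < r⁻¹ := inv_pos.2 hrpos
      have h2 : max (A r t) (B r t) ≤ C := max_le (hbd r hr t ht).1 (hbd r hr t ht).2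
      have h3 : ε * (1 + r ^ 2 + η * r⁻¹) ≤ C := by
        have := barrier_ge hlam0 ht.1 hη hrpos
        nlinarith
      constructor
      · have h4 : ε * (η * r⁻¹) ≤ C := by nlinarith [sq_nonneg r]
        have h5 : ε * η ≤ C * r := by
          have h6 := mul_le_mul_of_nonneg_right h4 (le_of_lt hrpos)
          calc ε * η = ε * (η * r⁻¹) * r := by field_simp
            _ ≤ C * r := h6
        exact (div_le_iff₀ hC0).2 (by linarith)
      · have h4 : r ^ 2 ≤ C / ε := by
          rw [le_div_iff₀ hε]; nlinarith [mul_pos hε (mul_pos hη hinv)]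
        exact Real.le_sqrt_of_sq_le h4
    have hSsub : (Set.Icc (ε * η / C) (Real.sqrt (C / ε)) ×ˢ Set.Icc (0:ℝ) T₀) ⊆
        Set.Ici 0 ×ˢ Set.Icc 0 T₀ :=
      fun p hp => ⟨le_trans (le_of_lt hr₀) hp.1.1, hp.2⟩
    have hSr : ∀ p ∈ Set.Icc (ε * η / C) (Real.sqrt (C / ε)) ×ˢ Set.Icc (0:ℝ) T₀,
        (0:ℝ) < p.1 := fun p hp => lt_of_lt_of_le hr₀ hp.1.1
    have hφcont : ContinuousOn (fun p : ℝ × ℝ => ε * barrier lam η p.1 p.2)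
        (Set.Icc (ε * η / C) (Real.sqrt (C / ε)) ×ˢ Set.Icc (0:ℝ) T₀) := by
      unfold barrier
      apply ContinuousOn.mul continuousOn_const
      apply ContinuousOn.mul
      · exact (Real.continuous_exp.comp (continuous_const.mul continuous_snd)).continuousOn
      · apply ContinuousOn.add
          (ContinuousOn.add continuousOn_const (continuous_fst.pow 2).continuousOn)
        exact continuousOn_const.mul
          (continuous_fst.continuousOn.inv₀ (fun p hp => ne_of_gt (hSr p hp)))
    have hFScont : ContinuousOn
        (fun p : ℝ × ℝ => max (A p.1 p.2) (B p.1 p.2) - ε * barrier lam η p.1 p.2)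
        (Set.Icc (ε * η / C) (Real.sqrt (C / ε)) ×ˢ Set.Icc (0:ℝ) T₀) :=
      ((hcontA.mono hSsub).sup (hcontB.mono hSsub)).sub hφcont
    set E : Set (ℝ × ℝ) := (Set.Icc (ε * η / C) (Real.sqrt (C / ε)) ×ˢ Set.Icc (0:ℝ) T₀) ∩
      (fun p : ℝ × ℝ => max (A p.1 p.2) (B p.1 p.2) - ε * barrier lam η p.1 p.2) ⁻¹'
        Set.Ici 0 with hEdef
    have hmemE : ∀ r ∈ Set.Ioi (0:ℝ), ∀ t ∈ Set.Icc (0:ℝ) T₀,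
        ε * barrier lam η r t ≤ max (A r t) (B r t) → (r, t) ∈ E := by
      intro r hr t ht hle
      exact ⟨⟨hloc r hr t ht hle, ht⟩,
        by simp only [Set.mem_preimage, Set.mem_Ici]; linarith⟩
    have hEclosed : IsClosed E :=
      hFScont.preimage_isClosed_of_isClosed (isClosed_Icc.prod isClosed_Icc) isClosed_Ici
    have hEcomp : IsCompact E :=
      (isCompact_Icc.prod isCompact_Icc).of_isClosed_subset hEclosed Set.inter_subset_left
    have hEne : E.Nonempty := ⟨(r1, t1), hmemE r1 hr1 t1 ht1 hbad1⟩
    obtain ⟨pstar, hpE, hmin⟩ := hEcomp.exists_isMinOn hEne continuous_snd.continuousOn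
    obtain ⟨x0, tstar⟩ := pstar
    have hx0 : x0 ∈ Set.Icc (ε * η / C) (Real.sqrt (C / ε)) := hpE.1.1
    have htstar : tstar ∈ Set.Icc (0:ℝ) T₀ := hpE.1.2
    have hx0pos : 0 < x0 := lt_of_lt_of_le hr₀ hx0.1
    have hp2 : ε * barrier lam η x0 tstar ≤ max (A x0 tstar) (B x0 tstar) := by
      have h := hpE.2
      simp only [Set.mem_preimage, Set.mem_Ici] at h
      linarith
    have htpos : 0 < tstar := by
      rcases eq_or_lt_of_le htstar.1 with h0 | h0
      · exfalso
        have hi := hinit x0 hx0pos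
        have hb := barrier_pos (lam := lam) (t := tstar) hη hx0pos
        have hmx : max (A x0 tstar) (B x0 tstar) ≤ 0 := by
          rw [← h0]
          exact max_le hi.1 hi.2
        nlinarith
      · exact h0
    have htT' : tstar ∈ Set.Ioo (0:ℝ) T' := ⟨htpos, lt_of_le_of_lt htstar.2 hTT⟩
    have hbefore : ∀ s ∈ Set.Ico (0:ℝ) tstar, ∀ r ∈ Set.Ioi (0:ℝ),
        max (A r s) (B r s) < ε * barrier lam η r s := by
      intro s hs r hr
      by_contra hcon
      push_neg at hcon
      have hsIcc : s ∈ Set.Icc (0:ℝ) T₀ := ⟨hs.1, le_trans (le_of_lt hs.2) htstar.2⟩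
      have hmem := hmemE r hr s hsIcc hcon
      have h5 : tstar ≤ s := isMinOn_iff.1 hmin (r, s) hmem
      exact absurd h5 (not_le.2 hs.2)
    set F : ℝ → ℝ :=
      fun r => max (A r tstar) (B r tstar) - ε * barrier lam η r tstar with hFdef
    have hFval : ∀ r, F r = max (A r tstar) (B r tstar) - ε * barrier lam η r tstar :=
      fun r => rfl
    have hFcont : ContinuousOn F (Set.Icc (ε * η / C) (Real.sqrt (C / ε))) := by
      have hmaps : Set.MapsTo (fun r : ℝ => (r, tstar))
          (Set.Icc (ε * η / C) (Real.sqrt (C / ε)))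
          (Set.Icc (ε * η / C) (Real.sqrt (C / ε)) ×ˢ Set.Icc (0:ℝ) T₀) :=
        fun r hrI => ⟨hrI, htstar⟩
      exact hFScont.comp ((continuous_id.prodMk continuous_const).continuousOn) hmaps
    obtain ⟨x, hxIcc, hxmax⟩ := isCompact_Icc.exists_isMaxOn ⟨x0, hx0⟩ hFcont
    have hxpos : 0 < x := lt_of_lt_of_le hr₀ hxIcc.1
    have hFx0 : 0 ≤ F x0 := by rw [hFval]; linarith
    have hFx : 0 ≤ F x := le_trans hFx0 (isMaxOn_iff.1 hxmax x0 hx0)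
    have hFglob : ∀ r ∈ Set.Ioi (0:ℝ), F r ≤ F x := by
      intro r hr
      rcases le_or_gt (F r) 0 with h | h
      · exact le_trans h hFx
      · have hle : ε * barrier lam η r tstar ≤ max (A r tstar) (B r tstar) := by
          rw [hFval] at h; linarith
        exact isMaxOn_iff.1 hxmax r (hloc r hr tstar htstar hle)
    have hgle : F x ≤ 0 := by
      have hgcont : ContinuousAt
          (fun s => max (A x s) (B x s) - ε * barrier lam η x s) tstar := by
        apply ContinuousAt.sub
        · exact ((hAt x hxpos tstar htT').continuousAt).max ((hBt x hxpos tstar htT').continuousAt)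
        · have hcφ : Continuous (fun s => ε * barrier lam η x s) := by
            unfold barrier; fun_prop
          exact hcφ.continuousAt
      have htend : Filter.Tendsto (fun s => max (A x s) (B x s) - ε * barrier lam η x s)
          (nhdsWithin tstar (Set.Iio tstar)) (nhds (F x)) :=
        (hgcont.tendsto).mono_left nhdsWithin_le_nhds
      refine le_of_tendsto htend ?_
      filter_upwards [Ioo_mem_nhdsLT_of_mem
        (⟨htpos, le_refl tstar⟩ : tstar ∈ Set.Ioc 0 tstar)] with s hs
      have hbs := hbefore s ⟨le_of_lt hs.1, hs.2⟩ x hxpos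
      linarith
    have hFeq : F x = 0 := le_antisymm hgle hFx
    have hcb : 0 < ε * Real.exp (lam * tstar) := by positivity
    have hxinv : 0 < x⁻¹ := inv_pos.2 hxpos
    have hxne : x ≠ 0 := ne_of_gt hxpos
    have hηinv : 0 < η * x⁻¹ := by positivity
    have hP1 : 1 ≤ 1 + x ^ 2 + η * x⁻¹ := by nlinarith [sq_nonneg x]
    have hP0 : (0:ℝ) < 1 + x ^ 2 + η * x⁻¹ := lt_of_lt_of_le one_pos hP1
    have hεφ : ε * barrier lam η x tstar
        = ε * Real.exp (lam * tstar) * (1 + x ^ 2 + η * x⁻¹) := by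
      unfold barrier; ring
    have hφr : ∀ y : ℝ, y ≠ 0 → HasDerivAt (fun ρ => ε * barrier lam η ρ tstar)
        (ε * Real.exp (lam * tstar) * (2 * y - η * (y⁻¹) ^ 2)) y := by
      intro y hy
      have h := (barrier_hasDerivAt_r lam η hy tstar).const_mul ε
      refine h.congr_deriv ?_
      ring
    have hφrr : HasDerivAt
        (fun y : ℝ => ε * Real.exp (lam * tstar) * (2 * y - η * (y⁻¹) ^ 2))
        (ε * Real.exp (lam * tstar) * (2 + 2 * η * (x⁻¹) ^ 3)) x :=
      (psi'_hasDerivAt η hxne).const_mul (ε * Real.exp (lam * tstar))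
    have hφt : HasDerivAt (fun s => ε * barrier lam η x s)
        (lam * (ε * Real.exp (lam * tstar) * (1 + x ^ 2 + η * x⁻¹))) tstar := by
      have h := (barrier_hasDerivAt_t lam η x tstar).const_mul ε
      refine h.congr_deriv ?_
      unfold barrier; ring
    have hd1' : (1:ℝ) ≤ (d:ℝ) := by exact_mod_cast hd1
    have hcube : (0:ℝ) ≤ η * (x⁻¹) ^ 3 := by positivity
    have hcbP : (0:ℝ) < ε * Real.exp (lam * tstar) * (1 + x ^ 2 + η * x⁻¹) := by positivity
    rcases le_total (B x tstar) (A x tstar) with hAB | hAB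
    · -- case: the max is attained by A
      have hmaxeq : max (A x tstar) (B x tstar) = A x tstar := max_eq_left hAB
      have hAeq : A x tstar = ε * Real.exp (lam * tstar) * (1 + x ^ 2 + η * x⁻¹) := by
        have h := hFval x
        rw [hmaxeq] at h
        rw [h] at hFeq
        linarith [hεφ.le, hεφ.ge]
      have hsd := second_deriv_test (f := fun ρ => A ρ tstar - ε * barrier lam η ρ tstar)
        (f' := fun ρ => Ar ρ tstar - ε * Real.exp (lam * tstar) * (2 * ρ - η * (ρ⁻¹) ^ 2))
        hxpos
        (fun y hy => (hAr y hy tstar htT').sub (hφr y (ne_of_gt hy)))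
        ((hArr x hxpos tstar htT').sub hφrr)
        (fun y hy => by
          show A y tstar - ε * barrier lam η y tstar
            ≤ A x tstar - ε * barrier lam η x tstar
          have h1 : A y tstar ≤ max (A y tstar) (B y tstar) := le_max_left _ _
          have h2 : F y ≤ F x := hFglob y hy
          rw [hFval, hFval] at h2
          linarith)
      have hAreq : Ar x tstar
          = ε * Real.exp (lam * tstar) * (2 * x - η * (x⁻¹) ^ 2) := by
        have h : Ar x tstar - ε * Real.exp (lam * tstar) * (2 * x - η * (x⁻¹) ^ 2) = 0 := hsd.1
        linarith
      have hArrle : Arr x tstar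
          ≤ ε * Real.exp (lam * tstar) * (2 + 2 * η * (x⁻¹) ^ 3) := by
        have h : Arr x tstar - ε * Real.exp (lam * tstar) * (2 + 2 * η * (x⁻¹) ^ 3) ≤ 0 := hsd.2
        linarith
      have htd : lam * (ε * Real.exp (lam * tstar) * (1 + x ^ 2 + η * x⁻¹)) ≤ At x tstar := by
        have h := deriv_nonneg_of_left_le htpos ((hAt x hxpos tstar htT').sub hφt) ?_
        · linarith
        · intro s hsI
          show A x s - ε * barrier lam η x s ≤ A x tstar - ε * barrier lam η x tstar
          have h1 := hbefore s hsI x hxpos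
          have h2 : A x s ≤ max (A x s) (B x s) := le_max_left _ _
          have h3 : A x tstar - ε * barrier lam η x tstar = 0 := by
            rw [hAeq, hεφ]; ring
          linarith
      have hpde := hpdeA x hxpos tstar htT'
      have hBle : max (B x tstar) 0
          ≤ ε * Real.exp (lam * tstar) * (1 + x ^ 2 + η * x⁻¹) :=
        max_le (by linarith) (le_of_lt hcbP)
      have habsA : |A x tstar| = ε * Real.exp (lam * tstar) * (1 + x ^ 2 + η * x⁻¹) := by
        rw [hAeq]; exact abs_of_pos hcbP
      have hrAr : x * Ar x tstar
          = ε * Real.exp (lam * tstar) * (2 * x ^ 2 - η * x⁻¹) := by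
        rw [hAreq]; field_simp
      have habsr : |x * Ar x tstar|
          ≤ ε * Real.exp (lam * tstar) * (2 * x ^ 2 + η * x⁻¹) := by
        rw [hrAr, abs_mul, abs_of_pos hcb]
        have h1 : |2 * x ^ 2 - η * x⁻¹| ≤ 2 * x ^ 2 + η * x⁻¹ := by
          apply abs_le.2
          constructor <;> nlinarith [sq_nonneg x]
        nlinarith
      have hdiv : ((d:ℝ) + 1) / x * Ar x tstar
          = ε * Real.exp (lam * tstar)
            * (2 * ((d:ℝ) + 1) - ((d:ℝ) + 1) * η * (x⁻¹) ^ 3) := by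
        rw [hAreq]; field_simp
      have hstep1 : Arr x tstar + ((d:ℝ) + 1) / x * Ar x tstar
          ≤ ε * Real.exp (lam * tstar) * (2 * (d:ℝ) + 4) := by
        rw [hdiv]
        nlinarith [mul_nonneg (le_of_lt hcb) hcube]
      have habsr2 : |x * Ar x tstar|
          ≤ 2 * (ε * Real.exp (lam * tstar) * (1 + x ^ 2 + η * x⁻¹)) := by
        nlinarith [habsr]
      have hstep2 : K * |x * Ar x tstar| + K * |A x tstar| + K * max (B x tstar) 0
          ≤ 4 * K * (ε * Real.exp (lam * tstar) * (1 + x ^ 2 + η * x⁻¹)) := by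
        have e1 := mul_le_mul_of_nonneg_left habsr2 (le_of_lt hK0)
        have e2 := mul_le_mul_of_nonneg_left hBle (le_of_lt hK0)
        rw [habsA]
        linarith
      have h2d : ε * Real.exp (lam * tstar) * (2 * (d:ℝ) + 4)
          ≤ (2 * (d:ℝ) + 4) * (ε * Real.exp (lam * tstar) * (1 + x ^ 2 + η * x⁻¹)) := by
        have hmul := mul_le_mul_of_nonneg_left hP1
          (by positivity : (0:ℝ) ≤ (2 * (d:ℝ) + 4) * (ε * Real.exp (lam * tstar)))
        calc ε * Real.exp (lam * tstar) * (2 * (d:ℝ) + 4)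
            = (2 * (d:ℝ) + 4) * (ε * Real.exp (lam * tstar)) * 1 := by ring
          _ ≤ (2 * (d:ℝ) + 4) * (ε * Real.exp (lam * tstar)) * (1 + x ^ 2 + η * x⁻¹) := hmul
          _ = (2 * (d:ℝ) + 4) * (ε * Real.exp (lam * tstar) * (1 + x ^ 2 + η * x⁻¹)) := by
              ring
      have hfinal : lam * (ε * Real.exp (lam * tstar) * (1 + x ^ 2 + η * x⁻¹))
          ≤ (2 * (d:ℝ) + 4 + 4 * K)
            * (ε * Real.exp (lam * tstar) * (1 + x ^ 2 + η * x⁻¹)) := by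
        linarith
      have hcontra : lam ≤ 2 * (d:ℝ) + 4 + 4 * K :=
        le_of_mul_le_mul_right
          (by linarith : lam * (ε * Real.exp (lam * tstar) * (1 + x ^ 2 + η * x⁻¹))
            ≤ (2 * (d:ℝ) + 4 + 4 * K)
              * (ε * Real.exp (lam * tstar) * (1 + x ^ 2 + η * x⁻¹))) hcbP
      rw [hlam] at hcontra
      linarith
    · -- case: the max is attained by B
      have hmaxeq : max (A x tstar) (B x tstar) = B x tstar := max_eq_right hAB
      have hBeq : B x tstar = ε * Real.exp (lam * tstar) * (1 + x ^ 2 + η * x⁻¹) := by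
        have h := hFval x
        rw [hmaxeq] at h
        rw [h] at hFeq
        linarith [hεφ.le, hεφ.ge]
      have hsd := second_deriv_test (f := fun ρ => B ρ tstar - ε * barrier lam η ρ tstar)
        (f' := fun ρ => Br ρ tstar - ε * Real.exp (lam * tstar) * (2 * ρ - η * (ρ⁻¹) ^ 2))
        hxpos
        (fun y hy => (hBr y hy tstar htT').sub (hφr y (ne_of_gt hy)))
        ((hBrr x hxpos tstar htT').sub hφrr)
        (fun y hy => by
          show B y tstar - ε * barrier lam η y tstar
            ≤ B x tstar - ε * barrier lam η x tstar
          have h1 : B y tstar ≤ max (A y tstar) (B y tstar) := le_max_right _ _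
          have h2 : F y ≤ F x := hFglob y hy
          rw [hFval, hFval] at h2
          linarith)
      have hBreq : Br x tstar
          = ε * Real.exp (lam * tstar) * (2 * x - η * (x⁻¹) ^ 2) := by
        have h : Br x tstar - ε * Real.exp (lam * tstar) * (2 * x - η * (x⁻¹) ^ 2) = 0 := hsd.1
        linarith
      have hBrrle : Brr x tstar
          ≤ ε * Real.exp (lam * tstar) * (2 + 2 * η * (x⁻¹) ^ 3) := by
        have h : Brr x tstar - ε * Real.exp (lam * tstar) * (2 + 2 * η * (x⁻¹) ^ 3) ≤ 0 := hsd.2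
        linarith
      have htd : lam * (ε * Real.exp (lam * tstar) * (1 + x ^ 2 + η * x⁻¹)) ≤ Bt x tstar := by
        have h := deriv_nonneg_of_left_le htpos ((hBt x hxpos tstar htT').sub hφt) ?_
        · linarith
        · intro s hsI
          show B x s - ε * barrier lam η x s ≤ B x tstar - ε * barrier lam η x tstar
          have h1 := hbefore s hsI x hxpos
          have h2 : B x s ≤ max (A x s) (B x s) := le_max_right _ _
          have h3 : B x tstar - ε * barrier lam η x tstar = 0 := by
            rw [hBeq, hεφ]; ring
          linarith
      have hpde := hpdeB x hxpos tstar htT'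
      have hAle : max (A x tstar) 0
          ≤ ε * Real.exp (lam * tstar) * (1 + x ^ 2 + η * x⁻¹) :=
        max_le (by linarith) (le_of_lt hcbP)
      have hdiv : ((d:ℝ) + 1) / x * Br x tstar
          = ε * Real.exp (lam * tstar)
            * (2 * ((d:ℝ) + 1) - ((d:ℝ) + 1) * η * (x⁻¹) ^ 3) := by
        rw [hBreq]; field_simp
      have hstep1 : Brr x tstar + ((d:ℝ) + 1) / x * Br x tstar
          ≤ ε * Real.exp (lam * tstar) * (2 * (d:ℝ) + 4) := by
        rw [hdiv]
        nlinarith [mul_nonneg (le_of_lt hcb) hcube]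
      have h2d : ε * Real.exp (lam * tstar) * (2 * (d:ℝ) + 4)
          ≤ (2 * (d:ℝ) + 4) * (ε * Real.exp (lam * tstar) * (1 + x ^ 2 + η * x⁻¹)) := by
        have hmul := mul_le_mul_of_nonneg_left hP1
          (by positivity : (0:ℝ) ≤ (2 * (d:ℝ) + 4) * (ε * Real.exp (lam * tstar)))
        calc ε * Real.exp (lam * tstar) * (2 * (d:ℝ) + 4)
            = (2 * (d:ℝ) + 4) * (ε * Real.exp (lam * tstar)) * 1 := by ring
          _ ≤ (2 * (d:ℝ) + 4) * (ε * Real.exp (lam * tstar)) * (1 + x ^ 2 + η * x⁻¹) := hmul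
          _ = (2 * (d:ℝ) + 4) * (ε * Real.exp (lam * tstar) * (1 + x ^ 2 + η * x⁻¹)) := by
              ring
      have e2 := mul_le_mul_of_nonneg_left hAle (le_of_lt hK0)
      have hcontra : lam ≤ 2 * (d:ℝ) + 4 + K :=
        le_of_mul_le_mul_right
          (by linarith : lam * (ε * Real.exp (lam * tstar) * (1 + x ^ 2 + η * x⁻¹))
            ≤ (2 * (d:ℝ) + 4 + K)
              * (ε * Real.exp (lam * tstar) * (1 + x ^ 2 + η * x⁻¹))) hcbP
      rw [hlam] at hcontra
      linarith
  -- conclusion for r > 0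
  have hpos : ∀ r ∈ Set.Ioi (0:ℝ), ∀ t ∈ Set.Icc (0:ℝ) T₀, A r t ≤ 0 ∧ B r t ≤ 0 := by
    intro r hr t ht
    have hr0 : (0:ℝ) < r := hr
    have base : ∀ δ > (0:ℝ), max (A r t) (B r t) ≤ δ := by
      intro δ hδ
      have hEx : (0:ℝ) < Real.exp (lam * t) := Real.exp_pos _
      have h1r : (0:ℝ) < 1 + r ^ 2 := by positivity
      have hε : 0 < δ / (2 * Real.exp (lam * t) * (1 + r ^ 2)) := by positivity
      have hη : 0 < r * (1 + r ^ 2) := by positivity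
      have h := le_of_lt (key _ hε _ hη r hr t ht)
      have heq : δ / (2 * Real.exp (lam * t) * (1 + r ^ 2))
          * barrier lam (r * (1 + r ^ 2)) r t = δ := by
        unfold barrier
        field_simp
        ring
      linarith
    have hmax0 : max (A r t) (B r t) ≤ 0 :=
      le_of_forall_pos_le_add (fun δ hδ => by simpa using base δ hδ)
    exact ⟨le_trans (le_max_left _ _) hmax0, le_trans (le_max_right _ _) hmax0⟩
  -- full conclusion
  intro r hr t ht
  rcases eq_or_lt_of_le (Set.mem_Ici.1 hr) with hr0 | hr0
  · subst hr0
    have hmapsA : Set.MapsTo (fun ρ : ℝ => (ρ, t)) (Set.Ici (0:ℝ)) (Set.Ici 0 ×ˢ Set.Icc 0 T₀) :=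
      fun ρ hρ => ⟨hρ, ht⟩
    have hcA : ContinuousWithinAt (fun ρ => A ρ t) (Set.Ici (0:ℝ)) 0 :=
      (hcontA.comp ((continuous_id.prodMk continuous_const).continuousOn) hmapsA) 0
        (le_refl (0:ℝ))
    have hcB : ContinuousWithinAt (fun ρ => B ρ t) (Set.Ici (0:ℝ)) 0 :=
      (hcontB.comp ((continuous_id.prodMk continuous_const).continuousOn) hmapsA) 0
        (le_refl (0:ℝ))
    constructor
    · refine le_of_tendsto (hcA.tendsto.mono_left (nhdsWithin_mono 0 Ioi_subset_Ici_self)) ?_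
      filter_upwards [self_mem_nhdsWithin] with ρ hρ
      exact (hpos ρ hρ t ht).1
    · refine le_of_tendsto (hcB.tendsto.mono_left (nhdsWithin_mono 0 Ioi_subset_Ici_self)) ?_
      filter_upwards [self_mem_nhdsWithin] with ρ hρ
      exact (hpos ρ hρ t ht).2
  · exact hpos r hr0 t ht

end master


set_option maxHeartbeats 1600000 in
/-- Time monotonicity of the mass functions when the initial data is a
time-independent supersolution of the mass-function system. -/
theorem stmt9 (d : ℕ) (hd : 5 ≤ d) (T : ℝ) (hT : 0 < T)
    (M W : ℝ → ℝ → ℝ)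
    (hM : MassReg M T) (hW : MassReg W T)
    (hflux : ∀ r ∈ Set.Ioi (0 : ℝ), ∀ t ∈ Set.Ioo (0 : ℝ) T,
      0 ≤ r * pderivR M r t + (d : ℝ) * M r t)
    (hflux_bdd : ∀ T₀ < T, ∃ Cb : ℝ, ∀ r ∈ Set.Ioi (0 : ℝ), ∀ t ∈ Set.Ioo (0 : ℝ) T₀,
      |r * pderivR M r t| ≤ Cb)
    (hpde1 : ∀ r ∈ Set.Ioi (0 : ℝ), ∀ t ∈ Set.Ioo (0 : ℝ) T,
      pderivT M r t = pderivRR M r t + ((d : ℝ) + 1) / r * pderivR M r t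
        + r * pderivR M r t * W r t + (d : ℝ) * M r t * W r t)
    (hpde2 : ∀ r ∈ Set.Ioi (0 : ℝ), ∀ t ∈ Set.Ioo (0 : ℝ) T,
      pderivT W r t = pderivRR W r t + ((d : ℝ) + 1) / r * pderivR W r t + M r t)
    (hM0_diff : ∀ r ∈ Set.Ioi (0 : ℝ), DifferentiableAt ℝ (fun ρ => M ρ 0) r ∧
      DifferentiableAt ℝ (deriv (fun ρ => M ρ 0)) r)
    (hM0_cont : ContinuousOn (deriv (deriv (fun ρ => M ρ 0))) (Set.Ioi 0))
    (hW0_diff : ∀ r ∈ Set.Ioi (0 : ℝ), DifferentiableAt ℝ (fun ρ => W ρ 0) r ∧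
      DifferentiableAt ℝ (deriv (fun ρ => W ρ 0)) r)
    (hW0_cont : ContinuousOn (deriv (deriv (fun ρ => W ρ 0))) (Set.Ioi 0))
    (hinit1 : ∀ r ∈ Set.Ioi (0 : ℝ),
      deriv (deriv (fun ρ => M ρ 0)) r + ((d : ℝ) + 1) / r * deriv (fun ρ => M ρ 0) r
        + r * deriv (fun ρ => M ρ 0) r * W r 0 + (d : ℝ) * M r 0 * W r 0 ≤ 0)
    (hinit2 : ∀ r ∈ Set.Ioi (0 : ℝ),
      deriv (deriv (fun ρ => W ρ 0)) r + ((d : ℝ) + 1) / r * deriv (fun ρ => W ρ 0) r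
        + M r 0 ≤ 0) :
    ∀ r ∈ Set.Ici (0 : ℝ),
      AntitoneOn (fun t => M r t) (Set.Ico 0 T) ∧ AntitoneOn (fun t => W r t) (Set.Ico 0 T) := by
  have hd1 : 1 ≤ d := le_trans (by norm_num) hd
  obtain ⟨hMc, hMdt, hMdr, hMtc, hMrc, hMdrr, hMrrc, hMbd⟩ := hM
  obtain ⟨hWc, hWdt, hWdr, hWtc, hWrc, hWdrr, hWrrc, hWbd⟩ := hW
  -- Step 1: comparison with the initial data
  have step1 : ∀ r ∈ Set.Ici (0:ℝ), ∀ t ∈ Set.Ico (0:ℝ) T,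
      M r t ≤ M r 0 ∧ W r t ≤ W r 0 := by
    intro r hrI t htI
    rcases eq_or_lt_of_le htI.1 with h0 | h0
    · rw [← h0]; exact ⟨le_refl _, le_refl _⟩
    -- use T₀ := t
    obtain ⟨T₁, hT₁a, hT₁b⟩ : ∃ T₁, t < T₁ ∧ T₁ < T :=
      ⟨(t + T) / 2, by linarith [htI.2], by linarith [htI.2]⟩
    obtain ⟨T₂, hT₂a, hT₂b⟩ : ∃ T₂, T₁ < T₂ ∧ T₂ < T :=
      ⟨(T₁ + T) / 2, by linarith, by linarith⟩
    have hT₂0 : 0 < T₂ := by linarith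
    obtain ⟨CM, hCM⟩ := hMbd T₂ hT₂b
    obtain ⟨CW, hCW⟩ := hWbd T₂ hT₂b
    obtain ⟨CF, hCF⟩ := hflux_bdd T₂ hT₂b
    have hCM0 : 0 ≤ CM := le_trans (abs_nonneg _)
      (hCM 0 Set.self_mem_Ici 0 ⟨le_refl _, le_of_lt hT₂0⟩)
    have hCW0 : 0 ≤ CW := le_trans (abs_nonneg _)
      (hCW 0 Set.self_mem_Ici 0 ⟨le_refl _, le_of_lt hT₂0⟩)
    have hCF0 : 0 ≤ CF := le_trans (abs_nonneg _)
      (hCF 1 (by norm_num) (T₂ / 2) ⟨by linarith, by linarith⟩)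
    obtain ⟨K, hKdef⟩ : ∃ K : ℝ, K = 1 + CF + (d:ℝ) * CM + (d:ℝ) * CW + CW := ⟨_, rfl⟩
    have hdCM : 0 ≤ (d:ℝ) * CM := by positivity
    have hdCW : 0 ≤ (d:ℝ) * CW := by positivity
    have hK1 : 1 ≤ K := by rw [hKdef]; linarith
    have hCWK : CW ≤ K := by rw [hKdef]; linarith
    have hsub : (Set.Ici (0:ℝ) ×ˢ Set.Icc (0:ℝ) t) ⊆ Set.Ici 0 ×ˢ Set.Ico 0 T :=
      fun p hp => ⟨hp.1, hp.2.1, lt_of_le_of_lt hp.2.2 htI.2⟩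
    have hmaps0 : Set.MapsTo (fun p : ℝ × ℝ => (p.1, (0:ℝ)))
        (Set.Ici (0:ℝ) ×ˢ Set.Icc (0:ℝ) t) (Set.Ici 0 ×ˢ Set.Ico 0 T) :=
      fun p hp => ⟨hp.1, le_refl 0, hT⟩
    have hkey := master d hd1 T₁ t K (2 * CM + 2 * CW) h0 hT₁a hK1
      (fun r t => M r t - M r 0) (fun r t => W r t - W r 0)
      (fun r t => pderivT M r t)
      (fun r t => pderivR M r t - deriv (fun ρ => M ρ 0) r)
      (fun r t => pderivRR M r t - deriv (deriv (fun ρ => M ρ 0)) r)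
      (fun r t => pderivT W r t)
      (fun r t => pderivR W r t - deriv (fun ρ => W ρ 0) r)
      (fun r t => pderivRR W r t - deriv (deriv (fun ρ => W ρ 0)) r)
      ((hMc.mono hsub).sub
        (hMc.comp ((continuous_fst.prodMk continuous_const).continuousOn) hmaps0))
      ((hWc.mono hsub).sub
        (hWc.comp ((continuous_fst.prodMk continuous_const).continuousOn) hmaps0))
      (by -- boundedness
        intro ρ hρ s hs
        have hsIcc : s ∈ Set.Icc (0:ℝ) T₂ := ⟨hs.1, by linarith [hs.2]⟩
        have h0Icc : (0:ℝ) ∈ Set.Icc (0:ℝ) T₂ := ⟨le_refl _, le_of_lt hT₂0⟩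
        have h1 := abs_le.1 (hCM ρ (Set.mem_Ici.2 (le_of_lt hρ)) s hsIcc)
        have h2 := abs_le.1 (hCM ρ (Set.mem_Ici.2 (le_of_lt hρ)) 0 h0Icc)
        have h3 := abs_le.1 (hCW ρ (Set.mem_Ici.2 (le_of_lt hρ)) s hsIcc)
        have h4 := abs_le.1 (hCW ρ (Set.mem_Ici.2 (le_of_lt hρ)) 0 h0Icc)
        show M ρ s - M ρ 0 ≤ 2 * CM + 2 * CW ∧ W ρ s - W ρ 0 ≤ 2 * CM + 2 * CW
        constructor <;> linarith)
      (by -- hAt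
        intro ρ hρ s hs
        have hsT : s ∈ Set.Ioo (0:ℝ) T := ⟨hs.1, lt_trans hs.2 hT₁b⟩
        exact ((hMdt ρ (Set.mem_Ici.2 (le_of_lt hρ)) s hsT).hasDerivAt).sub_const _)
      (by -- hAr
        intro ρ hρ s hs
        have hsT : s ∈ Set.Ioo (0:ℝ) T := ⟨hs.1, lt_trans hs.2 hT₁b⟩
        exact ((hMdr ρ (Set.mem_Ici.2 (le_of_lt hρ)) s hsT).hasDerivAt).sub ((hM0_diff ρ hρ).1.hasDerivAt))
      (by -- hArr
        intro ρ hρ s hs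
        have hsT : s ∈ Set.Ioo (0:ℝ) T := ⟨hs.1, lt_trans hs.2 hT₁b⟩
        exact ((hMdrr ρ hρ s hsT).hasDerivAt).sub ((hM0_diff ρ hρ).2.hasDerivAt))
      (by -- hBt
        intro ρ hρ s hs
        have hsT : s ∈ Set.Ioo (0:ℝ) T := ⟨hs.1, lt_trans hs.2 hT₁b⟩
        exact ((hWdt ρ (Set.mem_Ici.2 (le_of_lt hρ)) s hsT).hasDerivAt).sub_const _)
      (by -- hBr
        intro ρ hρ s hs
        have hsT : s ∈ Set.Ioo (0:ℝ) T := ⟨hs.1, lt_trans hs.2 hT₁b⟩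
        exact ((hWdr ρ (Set.mem_Ici.2 (le_of_lt hρ)) s hsT).hasDerivAt).sub ((hW0_diff ρ hρ).1.hasDerivAt))
      (by -- hBrr
        intro ρ hρ s hs
        have hsT : s ∈ Set.Ioo (0:ℝ) T := ⟨hs.1, lt_trans hs.2 hT₁b⟩
        exact ((hWdrr ρ hρ s hsT).hasDerivAt).sub ((hW0_diff ρ hρ).2.hasDerivAt))
      (by -- hpdeA
        intro ρ hρ s hs
        have hρ0 : (0:ℝ) < ρ := hρ
        have hsT : s ∈ Set.Ioo (0:ℝ) T := ⟨hs.1, lt_trans hs.2 hT₁b⟩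
        have hsT₂ : s ∈ Set.Ioo (0:ℝ) T₂ := ⟨hs.1, lt_trans hs.2 hT₂a⟩
        have hsIcc : s ∈ Set.Icc (0:ℝ) T₂ := ⟨le_of_lt hs.1, by linarith [hs.2]⟩
        have h0Icc : (0:ℝ) ∈ Set.Icc (0:ℝ) T₂ := ⟨le_refl _, le_of_lt hT₂0⟩
        rw [hpde1 ρ hρ s hsT]
        have hin := hinit1 ρ hρ
        have hq0 : 0 ≤ ρ * pderivR M ρ s + (d:ℝ) * M ρ s := hflux ρ hρ s hsT
        have hM1 := abs_le.1 (hCM ρ (Set.mem_Ici.2 (le_of_lt hρ)) s hsIcc)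
        have hF1 := abs_le.1 (hCF ρ hρ s hsT₂)
        have hW0b := abs_le.1 (hCW ρ (Set.mem_Ici.2 (le_of_lt hρ)) 0 h0Icc)
        have hdM : (d:ℝ) * M ρ s ≤ (d:ℝ) * CM :=
          mul_le_mul_of_nonneg_left hM1.2 (by positivity)
        have hqK : ρ * pderivR M ρ s + (d:ℝ) * M ρ s ≤ K := by
          rw [hKdef]; linarith
        have e1 : (ρ * pderivR M ρ s + (d:ℝ) * M ρ s) * (W ρ s - W ρ 0)
            ≤ K * max (W ρ s - W ρ 0) 0 := by
          rcases le_total 0 (W ρ s - W ρ 0) with h | h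
          · rw [max_eq_left h]
            exact mul_le_mul_of_nonneg_right hqK h
          · rw [max_eq_right h, mul_zero]
            exact mul_nonpos_iff.2 (Or.inl ⟨hq0, h⟩)
        have e2 : ρ * (pderivR M ρ s - deriv (fun ρ' => M ρ' 0) ρ) * W ρ 0
            ≤ K * |ρ * (pderivR M ρ s - deriv (fun ρ' => M ρ' 0) ρ)| := by
          calc ρ * (pderivR M ρ s - deriv (fun ρ' => M ρ' 0) ρ) * W ρ 0
              ≤ |ρ * (pderivR M ρ s - deriv (fun ρ' => M ρ' 0) ρ) * W ρ 0| := le_abs_self _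
            _ = |ρ * (pderivR M ρ s - deriv (fun ρ' => M ρ' 0) ρ)| * |W ρ 0| := abs_mul _ _
            _ ≤ |ρ * (pderivR M ρ s - deriv (fun ρ' => M ρ' 0) ρ)| * K := by
                have := abs_le.1 (hCW ρ (Set.mem_Ici.2 (le_of_lt hρ)) 0 h0Icc)
                have habs : |W ρ 0| ≤ K := by
                  rw [abs_le]; constructor <;> [linarith; linarith]
                exact mul_le_mul_of_nonneg_left habs (abs_nonneg _)
            _ = K * |ρ * (pderivR M ρ s - deriv (fun ρ' => M ρ' 0) ρ)| := mul_comm _ _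
        have e3 : (d:ℝ) * (M ρ s - M ρ 0) * W ρ 0 ≤ K * |M ρ s - M ρ 0| := by
          calc (d:ℝ) * (M ρ s - M ρ 0) * W ρ 0
              ≤ |(d:ℝ) * (M ρ s - M ρ 0) * W ρ 0| := le_abs_self _
            _ = (d:ℝ) * |M ρ s - M ρ 0| * |W ρ 0| := by
                rw [abs_mul, abs_mul, Nat.abs_cast]
            _ ≤ K * |M ρ s - M ρ 0| := by
                have hWb : |W ρ 0| ≤ CW := hCW ρ (Set.mem_Ici.2 (le_of_lt hρ)) 0 h0Icc
                have hdK : (d:ℝ) * CW ≤ K := by rw [hKdef]; linarith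
                have h1 : (d:ℝ) * |M ρ s - M ρ 0| * |W ρ 0|
                    ≤ (d:ℝ) * |M ρ s - M ρ 0| * CW := by
                  apply mul_le_mul_of_nonneg_left hWb; positivity
                have h2 : (d:ℝ) * |M ρ s - M ρ 0| * CW = ((d:ℝ) * CW) * |M ρ s - M ρ 0| := by
                  ring
                have h3 : ((d:ℝ) * CW) * |M ρ s - M ρ 0| ≤ K * |M ρ s - M ρ 0| :=
                  mul_le_mul_of_nonneg_right hdK (abs_nonneg _)
                linarith
        have hid : ρ * pderivR M ρ s * W ρ s + (d:ℝ) * M ρ s * W ρ s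
            = (ρ * pderivR M ρ s + (d:ℝ) * M ρ s) * (W ρ s - W ρ 0)
              + ρ * (pderivR M ρ s - deriv (fun ρ' => M ρ' 0) ρ) * W ρ 0
              + (d:ℝ) * (M ρ s - M ρ 0) * W ρ 0
              + (ρ * deriv (fun ρ' => M ρ' 0) ρ * W ρ 0 + (d:ℝ) * M ρ 0 * W ρ 0) := by
          ring
        have hdivid : ((d:ℝ) + 1) / ρ * (pderivR M ρ s - deriv (fun ρ' => M ρ' 0) ρ)
            = ((d:ℝ) + 1) / ρ * pderivR M ρ s
              - ((d:ℝ) + 1) / ρ * deriv (fun ρ' => M ρ' 0) ρ := by ring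
        linarith)
      (by -- hpdeB
        intro ρ hρ s hs
        have hsT : s ∈ Set.Ioo (0:ℝ) T := ⟨hs.1, lt_trans hs.2 hT₁b⟩
        rw [hpde2 ρ hρ s hsT]
        have hin := hinit2 ρ hρ
        have hmx : M ρ s - M ρ 0 ≤ K * max (M ρ s - M ρ 0) 0 := by
          have h1 : M ρ s - M ρ 0 ≤ max (M ρ s - M ρ 0) 0 := le_max_left _ _
          have h2 : max (M ρ s - M ρ 0) 0 ≤ K * max (M ρ s - M ρ 0) 0 :=
            le_mul_of_one_le_left (le_max_right _ _) hK1
          linarith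
        have hdivid : ((d:ℝ) + 1) / ρ * (pderivR W ρ s - deriv (fun ρ' => W ρ' 0) ρ)
            = ((d:ℝ) + 1) / ρ * pderivR W ρ s
              - ((d:ℝ) + 1) / ρ * deriv (fun ρ' => W ρ' 0) ρ := by ring
        linarith)
      (by intro ρ hρ; constructor <;> simp)
    have hres := hkey r hrI t ⟨htI.1, le_refl t⟩
    have hres1 : M r t - M r 0 ≤ 0 := hres.1
    have hres2 : W r t - W r 0 ≤ 0 := hres.2
    constructor <;> linarith
    -- Step 2: monotonicity via time shifting
  have mono : ∀ r ∈ Set.Ici (0:ℝ), ∀ t₁ ∈ Set.Ico (0:ℝ) T, ∀ t₂ ∈ Set.Ico (0:ℝ) T,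
      t₁ ≤ t₂ → M r t₂ ≤ M r t₁ ∧ W r t₂ ≤ W r t₁ := by
    intro r hrI t₁ ht₁ t₂ ht₂ h12
    rcases eq_or_lt_of_le h12 with he | hlt
    · rw [← he]; exact ⟨le_refl _, le_refl _⟩
    obtain ⟨hh, hhdef⟩ : ∃ hh : ℝ, hh = t₂ - t₁ := ⟨_, rfl⟩
    have hhpos : 0 < hh := by rw [hhdef]; linarith
    have ht₁T : t₁ < T - hh := by rw [hhdef]; linarith [ht₂.2]
    obtain ⟨T₀, hT₀pos, hT₀t₁, hT₀lt⟩ : ∃ T₀, 0 < T₀ ∧ t₁ ≤ T₀ ∧ T₀ < T - hh :=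
      ⟨(t₁ + (T - hh)) / 2, by linarith [ht₁.1], by linarith, by linarith⟩
    obtain ⟨T₁, hT₁a, hT₁b⟩ : ∃ T₁, T₀ < T₁ ∧ T₁ < T - hh :=
      ⟨(T₀ + (T - hh)) / 2, by linarith, by linarith⟩
    obtain ⟨T₂, hT₂a, hT₂b⟩ : ∃ T₂, T₁ + hh < T₂ ∧ T₂ < T :=
      ⟨(T₁ + hh + T) / 2, by linarith, by linarith⟩
    have hT₂0 : 0 < T₂ := by linarith
    obtain ⟨CM, hCM⟩ := hMbd T₂ hT₂b
    obtain ⟨CW, hCW⟩ := hWbd T₂ hT₂b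
    obtain ⟨CF, hCF⟩ := hflux_bdd T₂ hT₂b
    have hCM0 : 0 ≤ CM := le_trans (abs_nonneg _)
      (hCM 0 Set.self_mem_Ici 0 ⟨le_refl _, le_of_lt hT₂0⟩)
    have hCW0 : 0 ≤ CW := le_trans (abs_nonneg _)
      (hCW 0 Set.self_mem_Ici 0 ⟨le_refl _, le_of_lt hT₂0⟩)
    have hCF0 : 0 ≤ CF := le_trans (abs_nonneg _)
      (hCF 1 (by norm_num) (T₂ / 2) ⟨by linarith, by linarith⟩)
    obtain ⟨K, hKdef⟩ : ∃ K : ℝ, K = 1 + CF + (d:ℝ) * CM + (d:ℝ) * CW + CW := ⟨_, rfl⟩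
    have hdCM : 0 ≤ (d:ℝ) * CM := by positivity
    have hdCW : 0 ≤ (d:ℝ) * CW := by positivity
    have hK1 : 1 ≤ K := by rw [hKdef]; linarith
    have hsub : (Set.Ici (0:ℝ) ×ˢ Set.Icc (0:ℝ) T₀) ⊆ Set.Ici 0 ×ˢ Set.Ico 0 T :=
      fun p hp => ⟨hp.1, hp.2.1, by
        have := hp.2.2
        linarith⟩
    have hmapsh : Set.MapsTo (fun p : ℝ × ℝ => (p.1, p.2 + hh))
        (Set.Ici (0:ℝ) ×ˢ Set.Icc (0:ℝ) T₀) (Set.Ici 0 ×ˢ Set.Ico 0 T) :=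
      fun p hp => ⟨hp.1, by
        have h1 := hp.2.1
        have h2 := hp.2.2
        simp only at h1 h2 ⊢
        exact ⟨by linarith, by linarith⟩⟩
    have hkey := master d hd1 T₁ T₀ K (2 * CM + 2 * CW) hT₀pos hT₁a hK1
      (fun r t => M r (t + hh) - M r t) (fun r t => W r (t + hh) - W r t)
      (fun r t => pderivT M r (t + hh) - pderivT M r t)
      (fun r t => pderivR M r (t + hh) - pderivR M r t)
      (fun r t => pderivRR M r (t + hh) - pderivRR M r t)
      (fun r t => pderivT W r (t + hh) - pderivT W r t)
      (fun r t => pderivR W r (t + hh) - pderivR W r t)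
      (fun r t => pderivRR W r (t + hh) - pderivRR W r t)
      ((hMc.comp ((continuous_fst.prodMk
        (continuous_snd.add continuous_const)).continuousOn) hmapsh).sub (hMc.mono hsub))
      ((hWc.comp ((continuous_fst.prodMk
        (continuous_snd.add continuous_const)).continuousOn) hmapsh).sub (hWc.mono hsub))
      (by -- boundedness
        intro ρ hρ s hs
        have hsIcc : s ∈ Set.Icc (0:ℝ) T₂ := ⟨hs.1, by linarith [hs.2]⟩
        have hshIcc : s + hh ∈ Set.Icc (0:ℝ) T₂ := ⟨by linarith [hs.1], by linarith [hs.2]⟩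
        have h1 := abs_le.1 (hCM ρ (Set.mem_Ici.2 (le_of_lt hρ)) s hsIcc)
        have h2 := abs_le.1 (hCM ρ (Set.mem_Ici.2 (le_of_lt hρ)) (s + hh) hshIcc)
        have h3 := abs_le.1 (hCW ρ (Set.mem_Ici.2 (le_of_lt hρ)) s hsIcc)
        have h4 := abs_le.1 (hCW ρ (Set.mem_Ici.2 (le_of_lt hρ)) (s + hh) hshIcc)
        show M ρ (s + hh) - M ρ s ≤ 2 * CM + 2 * CW ∧ W ρ (s + hh) - W ρ s ≤ 2 * CM + 2 * CW
        constructor <;> linarith)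
      (by -- hAt
        intro ρ hρ s hs
        have hsT : s ∈ Set.Ioo (0:ℝ) T := ⟨hs.1, by linarith [hs.2]⟩
        have hshT : s + hh ∈ Set.Ioo (0:ℝ) T := ⟨by linarith [hs.1], by linarith [hs.2]⟩
        have h1 : HasDerivAt (fun u : ℝ => u + hh) 1 s := (hasDerivAt_id s).add_const hh
        have h2 := (hMdt ρ (Set.mem_Ici.2 (le_of_lt hρ)) (s + hh) hshT).hasDerivAt
        have h3 : HasDerivAt (fun u => M ρ (u + hh)) (pderivT M ρ (s + hh)) s := by
          simpa [Function.comp_def, pderivT] using h2.comp s h1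
        exact h3.sub ((hMdt ρ (Set.mem_Ici.2 (le_of_lt hρ)) s hsT).hasDerivAt))
      (by -- hAr
        intro ρ hρ s hs
        have hsT : s ∈ Set.Ioo (0:ℝ) T := ⟨hs.1, by linarith [hs.2]⟩
        have hshT : s + hh ∈ Set.Ioo (0:ℝ) T := ⟨by linarith [hs.1], by linarith [hs.2]⟩
        exact ((hMdr ρ (Set.mem_Ici.2 (le_of_lt hρ)) (s + hh) hshT).hasDerivAt).sub
          ((hMdr ρ (Set.mem_Ici.2 (le_of_lt hρ)) s hsT).hasDerivAt))
      (by -- hArr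
        intro ρ hρ s hs
        have hsT : s ∈ Set.Ioo (0:ℝ) T := ⟨hs.1, by linarith [hs.2]⟩
        have hshT : s + hh ∈ Set.Ioo (0:ℝ) T := ⟨by linarith [hs.1], by linarith [hs.2]⟩
        exact ((hMdrr ρ hρ (s + hh) hshT).hasDerivAt).sub ((hMdrr ρ hρ s hsT).hasDerivAt))
      (by -- hBt
        intro ρ hρ s hs
        have hsT : s ∈ Set.Ioo (0:ℝ) T := ⟨hs.1, by linarith [hs.2]⟩
        have hshT : s + hh ∈ Set.Ioo (0:ℝ) T := ⟨by linarith [hs.1], by linarith [hs.2]⟩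
        have h1 : HasDerivAt (fun u : ℝ => u + hh) 1 s := (hasDerivAt_id s).add_const hh
        have h2 := (hWdt ρ (Set.mem_Ici.2 (le_of_lt hρ)) (s + hh) hshT).hasDerivAt
        have h3 : HasDerivAt (fun u => W ρ (u + hh)) (pderivT W ρ (s + hh)) s := by
          simpa [Function.comp_def, pderivT] using h2.comp s h1
        exact h3.sub ((hWdt ρ (Set.mem_Ici.2 (le_of_lt hρ)) s hsT).hasDerivAt))
      (by -- hBr
        intro ρ hρ s hs
        have hsT : s ∈ Set.Ioo (0:ℝ) T := ⟨hs.1, by linarith [hs.2]⟩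
        have hshT : s + hh ∈ Set.Ioo (0:ℝ) T := ⟨by linarith [hs.1], by linarith [hs.2]⟩
        exact ((hWdr ρ (Set.mem_Ici.2 (le_of_lt hρ)) (s + hh) hshT).hasDerivAt).sub
          ((hWdr ρ (Set.mem_Ici.2 (le_of_lt hρ)) s hsT).hasDerivAt))
      (by -- hBrr
        intro ρ hρ s hs
        have hsT : s ∈ Set.Ioo (0:ℝ) T := ⟨hs.1, by linarith [hs.2]⟩
        have hshT : s + hh ∈ Set.Ioo (0:ℝ) T := ⟨by linarith [hs.1], by linarith [hs.2]⟩
        exact ((hWdrr ρ hρ (s + hh) hshT).hasDerivAt).sub ((hWdrr ρ hρ s hsT).hasDerivAt))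
      (by -- hpdeA
        intro ρ hρ s hs
        have hρ0 : (0:ℝ) < ρ := hρ
        have hsT : s ∈ Set.Ioo (0:ℝ) T := ⟨hs.1, by linarith [hs.2]⟩
        have hshT : s + hh ∈ Set.Ioo (0:ℝ) T := ⟨by linarith [hs.1], by linarith [hs.2]⟩
        have hshT₂ : s + hh ∈ Set.Ioo (0:ℝ) T₂ := ⟨by linarith [hs.1], by linarith [hs.2]⟩
        have hsIcc : s ∈ Set.Icc (0:ℝ) T₂ := ⟨le_of_lt hs.1, by linarith [hs.2]⟩
        have hshIcc : s + hh ∈ Set.Icc (0:ℝ) T₂ := ⟨by linarith [hs.1], by linarith [hs.2]⟩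
        rw [hpde1 ρ hρ (s + hh) hshT, hpde1 ρ hρ s hsT]
        have hq0 : 0 ≤ ρ * pderivR M ρ (s + hh) + (d:ℝ) * M ρ (s + hh) :=
          hflux ρ hρ (s + hh) hshT
        have hM1 := abs_le.1 (hCM ρ (Set.mem_Ici.2 (le_of_lt hρ)) (s + hh) hshIcc)
        have hF1 := abs_le.1 (hCF ρ hρ (s + hh) hshT₂)
        have hWsb := abs_le.1 (hCW ρ (Set.mem_Ici.2 (le_of_lt hρ)) s hsIcc)
        have hdM : (d:ℝ) * M ρ (s + hh) ≤ (d:ℝ) * CM :=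
          mul_le_mul_of_nonneg_left hM1.2 (by positivity)
        have hqK : ρ * pderivR M ρ (s + hh) + (d:ℝ) * M ρ (s + hh) ≤ K := by
          rw [hKdef]; linarith
        have e1 : (ρ * pderivR M ρ (s + hh) + (d:ℝ) * M ρ (s + hh))
            * (W ρ (s + hh) - W ρ s) ≤ K * max (W ρ (s + hh) - W ρ s) 0 := by
          rcases le_total 0 (W ρ (s + hh) - W ρ s) with h | h
          · rw [max_eq_left h]
            exact mul_le_mul_of_nonneg_right hqK h
          · rw [max_eq_right h, mul_zero]
            exact mul_nonpos_iff.2 (Or.inl ⟨hq0, h⟩)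
        have e2 : ρ * (pderivR M ρ (s + hh) - pderivR M ρ s) * W ρ s
            ≤ K * |ρ * (pderivR M ρ (s + hh) - pderivR M ρ s)| := by
          calc ρ * (pderivR M ρ (s + hh) - pderivR M ρ s) * W ρ s
              ≤ |ρ * (pderivR M ρ (s + hh) - pderivR M ρ s) * W ρ s| := le_abs_self _
            _ = |ρ * (pderivR M ρ (s + hh) - pderivR M ρ s)| * |W ρ s| := abs_mul _ _
            _ ≤ |ρ * (pderivR M ρ (s + hh) - pderivR M ρ s)| * K := by
                have habs : |W ρ s| ≤ K := by
                  rw [abs_le, hKdef]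
                  constructor <;> linarith
                exact mul_le_mul_of_nonneg_left habs (abs_nonneg _)
            _ = K * |ρ * (pderivR M ρ (s + hh) - pderivR M ρ s)| := mul_comm _ _
        have e3 : (d:ℝ) * (M ρ (s + hh) - M ρ s) * W ρ s
            ≤ K * |M ρ (s + hh) - M ρ s| := by
          calc (d:ℝ) * (M ρ (s + hh) - M ρ s) * W ρ s
              ≤ |(d:ℝ) * (M ρ (s + hh) - M ρ s) * W ρ s| := le_abs_self _
            _ = (d:ℝ) * |M ρ (s + hh) - M ρ s| * |W ρ s| := by
                rw [abs_mul, abs_mul, Nat.abs_cast]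
            _ ≤ K * |M ρ (s + hh) - M ρ s| := by
                have hWb : |W ρ s| ≤ CW := hCW ρ (Set.mem_Ici.2 (le_of_lt hρ)) s hsIcc
                have hdK : (d:ℝ) * CW ≤ K := by rw [hKdef]; linarith
                have h1 : (d:ℝ) * |M ρ (s + hh) - M ρ s| * |W ρ s|
                    ≤ (d:ℝ) * |M ρ (s + hh) - M ρ s| * CW := by
                  apply mul_le_mul_of_nonneg_left hWb; positivity
                have h2 : (d:ℝ) * |M ρ (s + hh) - M ρ s| * CW
                    = ((d:ℝ) * CW) * |M ρ (s + hh) - M ρ s| := by ring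
                have h3 : ((d:ℝ) * CW) * |M ρ (s + hh) - M ρ s|
                    ≤ K * |M ρ (s + hh) - M ρ s| :=
                  mul_le_mul_of_nonneg_right hdK (abs_nonneg _)
                linarith
        have hid : ρ * pderivR M ρ (s + hh) * W ρ (s + hh)
              + (d:ℝ) * M ρ (s + hh) * W ρ (s + hh)
              - ρ * pderivR M ρ s * W ρ s - (d:ℝ) * M ρ s * W ρ s
            = (ρ * pderivR M ρ (s + hh) + (d:ℝ) * M ρ (s + hh)) * (W ρ (s + hh) - W ρ s)
              + ρ * (pderivR M ρ (s + hh) - pderivR M ρ s) * W ρ s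
              + (d:ℝ) * (M ρ (s + hh) - M ρ s) * W ρ s := by ring
        have hdivid : ((d:ℝ) + 1) / ρ * (pderivR M ρ (s + hh) - pderivR M ρ s)
            = ((d:ℝ) + 1) / ρ * pderivR M ρ (s + hh)
              - ((d:ℝ) + 1) / ρ * pderivR M ρ s := by ring
        linarith)
      (by -- hpdeB
        intro ρ hρ s hs
        have hsT : s ∈ Set.Ioo (0:ℝ) T := ⟨hs.1, by linarith [hs.2]⟩
        have hshT : s + hh ∈ Set.Ioo (0:ℝ) T := ⟨by linarith [hs.1], by linarith [hs.2]⟩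
        rw [hpde2 ρ hρ (s + hh) hshT, hpde2 ρ hρ s hsT]
        have hmx : M ρ (s + hh) - M ρ s ≤ K * max (M ρ (s + hh) - M ρ s) 0 := by
          have h1 : M ρ (s + hh) - M ρ s ≤ max (M ρ (s + hh) - M ρ s) 0 := le_max_left _ _
          have h2 : max (M ρ (s + hh) - M ρ s) 0 ≤ K * max (M ρ (s + hh) - M ρ s) 0 :=
            le_mul_of_one_le_left (le_max_right _ _) hK1
          linarith
        have hdivid : ((d:ℝ) + 1) / ρ * (pderivR W ρ (s + hh) - pderivR W ρ s)
            = ((d:ℝ) + 1) / ρ * pderivR W ρ (s + hh)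
              - ((d:ℝ) + 1) / ρ * pderivR W ρ s := by ring
        linarith)
      (by -- initial data via Step 1
        intro ρ hρ
        have hhT : hh ∈ Set.Ico (0:ℝ) T := ⟨le_of_lt hhpos, by rw [hhdef]; linarith [ht₂.2, ht₁.1]⟩
        have h := step1 ρ (Set.mem_Ici.2 (le_of_lt hρ)) hh hhT
        show M ρ (0 + hh) - M ρ 0 ≤ 0 ∧ W ρ (0 + hh) - W ρ 0 ≤ 0
        rw [zero_add]
        constructor <;> linarith [h.1, h.2])
    have hres := hkey r hrI t₁ ⟨ht₁.1, hT₀t₁⟩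
    have hres1 : M r (t₁ + hh) - M r t₁ ≤ 0 := hres.1
    have hres2 : W r (t₁ + hh) - W r t₁ ≤ 0 := hres.2
    have ht12 : t₁ + hh = t₂ := by rw [hhdef]; ring
    rw [ht12] at hres1 hres2
    exact ⟨by linarith, by linarith⟩
  intro r hr
  exact ⟨fun t₁ ht₁ t₂ ht₂ h12 => (mono r hr t₁ ht₁ t₂ ht₂ h12).1,
         fun t₁ ht₁ t₂ ht₂ h12 => (mono r hr t₁ ht₁ t₂ ht₂ h12).2⟩
end

section
/- (Existence of a finite-time blowing-up subsolution of the mass-function system.) Let d ≥ 5 be an integer and t₀ ∈ ℝ. Then there exist real numbers A, B, k > 0 satisfying B > 4, A/B > (2d−3+√((2d−3)²+32))/2, and 2B(d+2)/(A−B) < k < min{A/B − 2(d−2), (d/2)·B}, such that the functions f(r,t) := A/(r⁴ + k·(1−(t−t₀))²) and g(r,t) := B/(r² + k·(1−(t−t₀))) satisfy, for all r ∈ (0,∞) and all t ∈ (t₀, t₀+1): ∂_t f − ∂_{rr} f − ((d+1)/r)∂_r f − r·(∂_r f)·g − d·f·g ≤ 0 and ∂_t g − ∂_{rr} g − ((d+1)/r)∂_r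 g − f ≤ 0. -/
lemma deriv_q4 (A c r : ℝ) (hall : ∀ ρ : ℝ, ρ^4 + c ≠ 0) :
    deriv (fun ρ : ℝ => -(4*A*ρ^3) / (ρ ^ 4 + c)^2) r
      = (-12*A*r^2*(r ^ 4 + c) + 32*A*r^6) / (r ^ 4 + c)^3 := by
  have hu : HasDerivAt (fun ρ : ℝ => -(4*A*ρ^3)) (-(12*A*r^2)) r := by
    have := ((hasDerivAt_pow 3 r).const_mul (4*A)).neg
    refine this.congr_deriv ?_
    push_cast
    ring
  have hv : HasDerivAt (fun ρ : ℝ => (ρ ^ 4 + c)^2) (2*(r^4+c)*(4*r^3)) r := by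
    have := ((hasDerivAt_pow 4 r).add_const c).pow 2
    refine this.congr_deriv ?_
    push_cast
    ring
  have h3 : HasDerivAt (fun ρ : ℝ => -(4*A*ρ^3) / (ρ ^ 4 + c)^2) _ r := hu.div hv (pow_ne_zero 2 (hall r))
  rw [h3.deriv, div_eq_div_iff (pow_ne_zero 2 (pow_ne_zero 2 (hall r))) (pow_ne_zero 3 (hall r))]
  ring

lemma deriv_q2 (B c r : ℝ) (hall : ∀ ρ : ℝ, ρ^2 + c ≠ 0) :
    deriv (fun ρ : ℝ => -(2*B*ρ) / (ρ ^ 2 + c)^2) r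
      = (-2*B*(r ^ 2 + c) + 8*B*r^2) / (r ^ 2 + c)^3 := by
  have hu : HasDerivAt (fun ρ : ℝ => -(2*B*ρ)) (-(2*B)) r := by
    have := ((hasDerivAt_id r).const_mul (2*B)).neg
    refine this.congr_deriv ?_
    ring
  have hv : HasDerivAt (fun ρ : ℝ => (ρ ^ 2 + c)^2) (2*(r^2+c)*(2*r)) r := by
    have := ((hasDerivAt_pow 2 r).add_const c).pow 2
    refine this.congr_deriv ?_
    push_cast
    ring
  have h3 : HasDerivAt (fun ρ : ℝ => -(2*B*ρ) / (ρ ^ 2 + c)^2) _ r := hu.div hv (pow_ne_zero 2 (hall r))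
  rw [h3.deriv, div_eq_div_iff (pow_ne_zero 2 (pow_ne_zero 2 (hall r))) (pow_ne_zero 3 (hall r))]
  ring

lemma pdT_f (A k t₀ r t : ℝ) (h : r^4 + k*(1-(t-t₀))^2 ≠ 0) :
    pderivT (fun r t => A / (r ^ 4 + k * (1 - (t - t₀)) ^ 2)) r t
      = 2*A*k*(1-(t-t₀)) / (r ^ 4 + k * (1 - (t - t₀)) ^ 2)^2 := by
  unfold pderivT
  show deriv (fun τ : ℝ => A / (r ^ 4 + k * (1 - (τ - t₀)) ^ 2)) t = _
  have h1 : HasDerivAt (fun τ : ℝ => 1 - (τ - t₀)) (-1) t := by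
    simpa using ((hasDerivAt_id t).sub_const t₀).const_sub 1
  have h2 : HasDerivAt (fun τ : ℝ => r^4 + k*(1-(τ-t₀))^2) (-(2*k*(1-(t-t₀)))) t := by
    have := ((h1.pow 2).const_mul k).const_add (r^4)
    refine this.congr_deriv ?_
    push_cast
    ring
  have h3 : HasDerivAt (fun τ : ℝ => A / (r ^ 4 + k * (1 - (τ - t₀)) ^ 2))
      ((0 * (r^4 + k*(1-(t-t₀))^2) - A * (-(2*k*(1-(t-t₀))))) / (r^4 + k*(1-(t-t₀))^2)^2) t :=
    (hasDerivAt_const t A).div h2 h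
  rw [h3.deriv]
  ring

lemma pdR_f (A k t₀ r t : ℝ) (h : r^4 + k*(1-(t-t₀))^2 ≠ 0) :
    pderivR (fun r t => A / (r ^ 4 + k * (1 - (t - t₀)) ^ 2)) r t
      = -(4*A*r^3) / (r ^ 4 + k * (1 - (t - t₀)) ^ 2)^2 := by
  unfold pderivR
  show deriv (fun ρ : ℝ => A / (ρ ^ 4 + k * (1 - (t - t₀)) ^ 2)) r = _
  have h2 : HasDerivAt (fun ρ : ℝ => ρ^4 + k*(1-(t-t₀))^2) (4*r^3) r := by
    have := (hasDerivAt_pow 4 r).add_const (k*(1-(t-t₀))^2)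
    refine this.congr_deriv ?_
    norm_num
  have h3 : HasDerivAt (fun ρ : ℝ => A / (ρ ^ 4 + k * (1 - (t - t₀)) ^ 2))
      ((0 * (r^4 + k*(1-(t-t₀))^2) - A * (4*r^3)) / (r^4 + k*(1-(t-t₀))^2)^2) r :=
    (hasDerivAt_const r A).div h2 h
  rw [h3.deriv]
  ring

lemma pdRR_f (A k t₀ r t : ℝ) (hall : ∀ ρ : ℝ, ρ^4 + k*(1-(t-t₀))^2 ≠ 0) :
    pderivRR (fun r t => A / (r ^ 4 + k * (1 - (t - t₀)) ^ 2)) r t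
      = (-12*A*r^2*(r ^ 4 + k * (1 - (t - t₀)) ^ 2) + 32*A*r^6)
          / (r ^ 4 + k * (1 - (t - t₀)) ^ 2)^3 := by
  unfold pderivRR
  have hfun : (fun ρ => pderivR (fun r t => A / (r ^ 4 + k * (1 - (t - t₀)) ^ 2)) ρ t)
      = fun ρ => -(4*A*ρ^3) / (ρ ^ 4 + k * (1 - (t - t₀)) ^ 2)^2 :=
    funext fun ρ => pdR_f A k t₀ ρ t (hall ρ)
  rw [hfun]
  exact deriv_q4 A (k * (1 - (t - t₀)) ^ 2) r hall

lemma pdT_g (B k t₀ r t : ℝ) (h : r^2 + k*(1-(t-t₀)) ≠ 0) :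
    pderivT (fun r t => B / (r ^ 2 + k * (1 - (t - t₀)))) r t
      = B*k / (r ^ 2 + k * (1 - (t - t₀)))^2 := by
  unfold pderivT
  show deriv (fun τ : ℝ => B / (r ^ 2 + k * (1 - (τ - t₀)))) t = _
  have h1 : HasDerivAt (fun τ : ℝ => 1 - (τ - t₀)) (-1) t := by
    simpa using ((hasDerivAt_id t).sub_const t₀).const_sub 1
  have h2 : HasDerivAt (fun τ : ℝ => r^2 + k*(1-(τ-t₀))) (-k) t := by
    have := (h1.const_mul k).const_add (r^2)
    refine this.congr_deriv ?_
    ring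
  have h3 : HasDerivAt (fun τ : ℝ => B / (r ^ 2 + k * (1 - (τ - t₀))))
      ((0 * (r^2 + k*(1-(t-t₀))) - B * (-k)) / (r^2 + k*(1-(t-t₀)))^2) t :=
    (hasDerivAt_const t B).div h2 h
  rw [h3.deriv]
  ring

lemma pdR_g (B k t₀ r t : ℝ) (h : r^2 + k*(1-(t-t₀)) ≠ 0) :
    pderivR (fun r t => B / (r ^ 2 + k * (1 - (t - t₀)))) r t
      = -(2*B*r) / (r ^ 2 + k * (1 - (t - t₀)))^2 := by
  unfold pderivR
  show deriv (fun ρ : ℝ => B / (ρ ^ 2 + k * (1 - (t - t₀)))) r = _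
  have h2 : HasDerivAt (fun ρ : ℝ => ρ^2 + k*(1-(t-t₀))) (2*r) r := by
    have := (hasDerivAt_pow 2 r).add_const (k*(1-(t-t₀)))
    refine this.congr_deriv ?_
    norm_num
  have h3 : HasDerivAt (fun ρ : ℝ => B / (ρ ^ 2 + k * (1 - (t - t₀))))
      ((0 * (r^2 + k*(1-(t-t₀))) - B * (2*r)) / (r^2 + k*(1-(t-t₀)))^2) r :=
    (hasDerivAt_const r B).div h2 h
  rw [h3.deriv]
  ring

lemma pdRR_g (B k t₀ r t : ℝ) (hall : ∀ ρ : ℝ, ρ^2 + k*(1-(t-t₀)) ≠ 0) :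
    pderivRR (fun r t => B / (r ^ 2 + k * (1 - (t - t₀)))) r t
      = (-2*B*(r ^ 2 + k * (1 - (t - t₀))) + 8*B*r^2)
          / (r ^ 2 + k * (1 - (t - t₀)))^3 := by
  unfold pderivRR
  have hfun : (fun ρ => pderivR (fun r t => B / (r ^ 2 + k * (1 - (t - t₀)))) ρ t)
      = fun ρ => -(2*B*ρ) / (ρ ^ 2 + k * (1 - (t - t₀)))^2 :=
    funext fun ρ => pdR_g B k t₀ ρ t (hall ρ)
  rw [hfun]
  exact deriv_q2 B (k * (1 - (t - t₀))) r hall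

lemma main_ineq1 (D a b u r : ℝ) (hD : 5 ≤ D) (hb : b = 6*D+25) (ha : a = b*(b+2*D+10))
    (hu : 0 < u) (hr : 0 < r) :
    2*a*2*u / (r ^ 4 + 2 * u ^ 2)^2
      - (-12*a*r^2*(r ^ 4 + 2 * u ^ 2) + 32*a*r^6) / (r ^ 4 + 2 * u ^ 2)^3
      - (D + 1) / r * (-(4*a*r^3) / (r ^ 4 + 2 * u ^ 2)^2)
      - r * (-(4*a*r^3) / (r ^ 4 + 2 * u ^ 2)^2) * (b / (r ^ 2 + 2 * u))
      - D * (a / (r ^ 4 + 2 * u ^ 2)) * (b / (r ^ 2 + 2 * u)) ≤ 0 := by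
  subst ha hb
  have hE1 : (0:ℝ) < r ^ 4 + 2 * u ^ 2 := by nlinarith [pow_pos hr 4, mul_pos hu hu]
  have hE2 : (0:ℝ) < r ^ 2 + 2 * u := by nlinarith [pow_pos hr 2]
  have key : 2*((6*D+25)*(6*D+25+2*D+10))*2*u / (r ^ 4 + 2 * u ^ 2)^2
      - (-12*((6*D+25)*(6*D+25+2*D+10))*r^2*(r ^ 4 + 2 * u ^ 2) + 32*((6*D+25)*(6*D+25+2*D+10))*r^6) / (r ^ 4 + 2 * u ^ 2)^3
      - (D + 1) / r * (-(4*((6*D+25)*(6*D+25+2*D+10))*r^3) / (r ^ 4 + 2 * u ^ 2)^2)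
      - r * (-(4*((6*D+25)*(6*D+25+2*D+10))*r^3) / (r ^ 4 + 2 * u ^ 2)^2) * ((6*D+25) / (r ^ 2 + 2 * u))
      - D * ((6*D+25)*(6*D+25+2*D+10) / (r ^ 4 + 2 * u ^ 2)) * ((6*D+25) / (r ^ 2 + 2 * u))
      = ((6*D+25)*(6*D+25+2*D+10)
          * ((r ^ 4 + 2 * u ^ 2) * (4*u*(r ^ 2 + 2 * u) + (4*D+16)*r^2*(r ^ 2 + 2 * u)
              + 4*(6*D+25)*r^4 - D*(6*D+25)*(r ^ 4 + 2 * u ^ 2))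
            - 32*r^6*(r ^ 2 + 2 * u)))
        / ((r ^ 4 + 2 * u ^ 2)^3 * (r ^ 2 + 2 * u)) := by
    field_simp
    ring
  rw [key]
  apply div_nonpos_of_nonpos_of_nonneg
  · have hQ : 4*u*(r ^ 2 + 2 * u) + (4*D+16)*r^2*(r ^ 2 + 2 * u)
        + 4*(6*D+25)*r^4 - D*(6*D+25)*(r ^ 4 + 2 * u ^ 2) ≤ 0 := by
      nlinarith [mul_nonneg (mul_nonneg (by linarith : (0:ℝ) ≤ D-5) (by linarith : (0:ℝ) ≤ 6*D+25)) (sq_nonneg (r^2)),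
        mul_nonneg (by linarith : (0:ℝ) ≤ 2*D+9) (sq_nonneg (r^2-2*u)),
        mul_nonneg (by nlinarith : (0:ℝ) ≤ 12*D^2+42*D-44) (sq_nonneg u)]
    have h1 : (r ^ 4 + 2 * u ^ 2) * (4*u*(r ^ 2 + 2 * u) + (4*D+16)*r^2*(r ^ 2 + 2 * u)
        + 4*(6*D+25)*r^4 - D*(6*D+25)*(r ^ 4 + 2 * u ^ 2)) ≤ 0 :=
      mul_nonpos_of_nonneg_of_nonpos hE1.le hQ
    have h2 : (0:ℝ) ≤ 32*r^6*(r ^ 2 + 2 * u) := by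
      have := mul_nonneg (pow_nonneg hr.le 6) hE2.le
      nlinarith [this]
    apply mul_nonpos_of_nonneg_of_nonpos (by nlinarith : (0:ℝ) ≤ (6*D+25)*(6*D+25+2*D+10))
    linarith
  · exact (mul_pos (pow_pos hE1 3) hE2).le

lemma main_ineq2 (D a b u r : ℝ) (hD : 5 ≤ D) (hb : b = 6*D+25) (ha : a = b*(b+2*D+10))
    (hu : 0 < u) (hr : 0 < r) :
    b*2 / (r ^ 2 + 2 * u)^2
      - (-2*b*(r ^ 2 + 2 * u) + 8*b*r^2) / (r ^ 2 + 2 * u)^3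
      - (D + 1) / r * (-(2*b*r) / (r ^ 2 + 2 * u)^2)
      - a / (r ^ 4 + 2 * u ^ 2) ≤ 0 := by
  subst ha hb
  have hE1 : (0:ℝ) < r ^ 4 + 2 * u ^ 2 := by nlinarith [pow_pos hr 4, mul_pos hu hu]
  have hE2 : (0:ℝ) < r ^ 2 + 2 * u := by nlinarith [pow_pos hr 2]
  have key : (6*D+25)*2 / (r ^ 2 + 2 * u)^2
      - (-2*(6*D+25)*(r ^ 2 + 2 * u) + 8*(6*D+25)*r^2) / (r ^ 2 + 2 * u)^3
      - (D + 1) / r * (-(2*(6*D+25)*r) / (r ^ 2 + 2 * u)^2)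
      - (6*D+25)*(6*D+25+2*D+10) / (r ^ 4 + 2 * u ^ 2)
      = ((6*D+25) * ((2*D+6)*(r ^ 4 + 2 * u ^ 2)*(r ^ 2 + 2 * u)
          - 8*r^2*(r ^ 4 + 2 * u ^ 2) - (6*D+25+2*D+10)*(r ^ 2 + 2 * u)^3))
        / ((r ^ 2 + 2 * u)^3 * (r ^ 4 + 2 * u ^ 2)) := by
    field_simp
    ring
  rw [key]
  apply div_nonpos_of_nonpos_of_nonneg
  · apply mul_nonpos_of_nonneg_of_nonpos (by linarith : (0:ℝ) ≤ 6*D+25)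
    have h12 : (0:ℝ) ≤ (r ^ 2 + 2 * u)^2 - (r ^ 4 + 2 * u ^ 2) := by
      nlinarith [mul_nonneg hu.le (sq_nonneg r), sq_nonneg u]
    nlinarith [mul_nonneg (mul_nonneg (by linarith : (0:ℝ) ≤ 2*D+6) h12) hE2.le,
      mul_nonneg (by linarith : (0:ℝ) ≤ 6*D+29) (pow_nonneg hE2.le 3),
      mul_nonneg (sq_nonneg r) hE1.le]
  · exact (mul_pos (pow_pos hE2 3) hE1).le

/-- Existence of a finite-time blowing-up subsolution
`f(r,t) = A/(r⁴ + k(1−(t−t₀))²)`, `g(r,t) = B/(r² + k(1−(t−t₀)))` of the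
mass-function system. -/
theorem stmt11 (d : ℕ) (hd : 5 ≤ d) (t₀ : ℝ) :
    ∃ A B k : ℝ, 0 < A ∧ 0 < B ∧ 0 < k ∧ 4 < B ∧
      (2 * (d : ℝ) - 3 + Real.sqrt ((2 * (d : ℝ) - 3) ^ 2 + 32)) / 2 < A / B ∧
      2 * B * ((d : ℝ) + 2) / (A - B) < k ∧
      k < min (A / B - 2 * ((d : ℝ) - 2)) ((d : ℝ) / 2 * B) ∧
      ∀ r ∈ Set.Ioi (0 : ℝ), ∀ t ∈ Set.Ioo t₀ (t₀ + 1),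
        (pderivT (fun r t => A / (r ^ 4 + k * (1 - (t - t₀)) ^ 2)) r t
            - pderivRR (fun r t => A / (r ^ 4 + k * (1 - (t - t₀)) ^ 2)) r t
            - ((d : ℝ) + 1) / r * pderivR (fun r t => A / (r ^ 4 + k * (1 - (t - t₀)) ^ 2)) r t
            - r * pderivR (fun r t => A / (r ^ 4 + k * (1 - (t - t₀)) ^ 2)) r t
              * (B / (r ^ 2 + k * (1 - (t - t₀))))
            - (d : ℝ) * (A / (r ^ 4 + k * (1 - (t - t₀)) ^ 2))
              * (B / (r ^ 2 + k * (1 - (t - t₀)))) ≤ 0) ∧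
        (pderivT (fun r t => B / (r ^ 2 + k * (1 - (t - t₀)))) r t
            - pderivRR (fun r t => B / (r ^ 2 + k * (1 - (t - t₀)))) r t
            - ((d : ℝ) + 1) / r * pderivR (fun r t => B / (r ^ 2 + k * (1 - (t - t₀)))) r t
            - A / (r ^ 4 + k * (1 - (t - t₀)) ^ 2) ≤ 0) := by
  have hD : (5:ℝ) ≤ (d:ℝ) := by exact_mod_cast hd
  set D : ℝ := (d:ℝ) with hDdef
  refine ⟨(6*D+25)*(6*D+25+2*D+10), 6*D+25, 2, ?_, ?_, ?_, ?_, ?_, ?_, ?_, ?_⟩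
  · nlinarith
  · nlinarith
  · norm_num
  · nlinarith
  · have hBne : (6*D+25) ≠ 0 := by nlinarith
    have hq : (6*D+25)*(6*D+25+2*D+10)/(6*D+25) = 8*D+35 := by
      field_simp
      ring
    rw [hq]
    have hsqrt : Real.sqrt ((2*D-3)^2+32) ≤ 2*D+1 := by
      rw [show (2*D+1) = Real.sqrt ((2*D+1)^2) from (Real.sqrt_sq (by linarith)).symm]
      exact Real.sqrt_le_sqrt (by nlinarith)
    linarith
  · have hden : (0:ℝ) < (6*D+25)*(6*D+25+2*D+10) - (6*D+25) := by nlinarith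
    rw [div_lt_iff₀ hden]
    nlinarith
  · rw [lt_min_iff]
    constructor
    · have hBne : (6*D+25) ≠ 0 := by nlinarith
      have hq : (6*D+25)*(6*D+25+2*D+10)/(6*D+25) = 8*D+35 := by
        field_simp
        ring
      rw [hq]
      nlinarith
    · nlinarith
  · intro r hr t ht
    have hr0 : (0:ℝ) < r := hr
    have hu : (0:ℝ) < 1 - (t - t₀) := by
      simp only [Set.mem_Ioo] at ht
      linarith [ht.2]
    have hE1 : (0:ℝ) < r ^ 4 + 2 * (1 - (t - t₀)) ^ 2 := by
      nlinarith [pow_pos hr0 4, mul_pos hu hu]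
    have hE2 : (0:ℝ) < r ^ 2 + 2 * (1 - (t - t₀)) := by nlinarith [pow_pos hr0 2]
    have hall1 : ∀ ρ : ℝ, ρ^4 + 2*(1-(t-t₀))^2 ≠ 0 := fun ρ =>
      ne_of_gt (by nlinarith [sq_nonneg (ρ^2), mul_pos hu hu])
    have hall2 : ∀ ρ : ℝ, ρ^2 + 2*(1-(t-t₀)) ≠ 0 := fun ρ =>
      ne_of_gt (by nlinarith [sq_nonneg ρ])
    constructor
    · rw [pdT_f ((6*D+25)*(6*D+25+2*D+10)) 2 t₀ r t hE1.ne',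
        pdRR_f ((6*D+25)*(6*D+25+2*D+10)) 2 t₀ r t hall1,
        pdR_f ((6*D+25)*(6*D+25+2*D+10)) 2 t₀ r t hE1.ne']
      exact main_ineq1 D ((6*D+25)*(6*D+25+2*D+10)) (6*D+25) (1-(t-t₀)) r hD rfl rfl hu hr0
    · rw [pdT_g (6*D+25) 2 t₀ r t hE2.ne',
        pdRR_g (6*D+25) 2 t₀ r t hall2,
        pdR_g (6*D+25) 2 t₀ r t hE2.ne']
      exact main_ineq2 D ((6*D+25)*(6*D+25+2*D+10)) (6*D+25) (1-(t-t₀)) r hD rfl rfl hu hr0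
end

section
/- (Vanishing of r^d·M and r^d·W at the origin for stationary mass functions.) Let d ≥ 5 be an integer. Let M, W : (0,∞) → ℝ be twice continuously differentiable, nonnegative, with M'(r) ≤ 0 and W'(r) ≤ 0 for all r > 0, such that r ↦ r^d·M(r) and r ↦ r^d·W(r) are nondecreasing on (0,∞), there exists r_* > 0 with r_*·M'(r_*) + d·M(r_*) > 0, and for all r > 0: M''(r) + ((d+1)/r)·M'(r) + r·M'(r)·W(r) + d·M(r)·W(r) = 0 and W''(r) + ((d+1)/r)·W'(r) + M(r) = 0. Then r^d·M(r) → 0 and r^d·W(r) → 0 as r → 0⁺. -/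
open Set Filter Real

lemma myMono {f f' : ℝ → ℝ} {s : Set ℝ} (hs : Convex ℝ s) (hso : s ⊆ Ioi 0)
    (hder : ∀ r ∈ Ioi (0:ℝ), HasDerivAt f (f' r) r)
    (hle : ∀ r ∈ interior s, 0 ≤ f' r) : MonotoneOn f s := by
  apply monotoneOn_of_deriv_nonneg hs
  · exact fun r hr => (hder r (hso hr)).continuousAt.continuousWithinAt
  · exact fun r hr =>
      (hder r (hso (interior_subset hr))).differentiableAt.differentiableWithinAt
  · intro r hr
    rw [(hder r (hso (interior_subset hr))).deriv]
    exact hle r hr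

lemma myAnti {f f' : ℝ → ℝ} {s : Set ℝ} (hs : Convex ℝ s) (hso : s ⊆ Ioi 0)
    (hder : ∀ r ∈ Ioi (0:ℝ), HasDerivAt f (f' r) r)
    (hle : ∀ r ∈ interior s, f' r ≤ 0) : AntitoneOn f s := by
  apply antitoneOn_of_deriv_nonpos hs
  · exact fun r hr => (hder r (hso hr)).continuousAt.continuousWithinAt
  · exact fun r hr =>
      (hder r (hso (interior_subset hr))).differentiableAt.differentiableWithinAt
  · intro r hr
    rw [(hder r (hso (interior_subset hr))).deriv]
    exact hle r hr

lemma nonpos_of_mul_right {a p : ℝ} (hp : 0 < p) (h : a * p ≤ 0) : a ≤ 0 := by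
  nlinarith

lemma blowup (d : ℕ) (hd : 5 ≤ d) (M W : ℝ → ℝ)
    (hM_diff : ∀ r ∈ Set.Ioi (0 : ℝ),
      DifferentiableAt ℝ M r ∧ DifferentiableAt ℝ (deriv M) r)
    (hMnn : ∀ r ∈ Set.Ioi (0 : ℝ), 0 ≤ M r)
    (hWc : ContinuousOn W (Set.Ioi 0))
    (hode1 : ∀ r ∈ Set.Ioi (0 : ℝ),
      deriv (deriv M) r + ((d : ℝ) + 1) / r * deriv M r
        + r * deriv M r * W r + (d : ℝ) * M r * W r = 0)
    (rs : ℝ) (hrs : 0 < rs) (hu0 : 0 < rs * deriv M rs + (d : ℝ) * M rs)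
    (c K : ℝ) (hc : 0 < c) (hK : 0 ≤ K) (m : ℤ) (hm : m ≤ 4 - (d : ℤ))
    (hWlb : ∀ r ∈ Set.Ioc (0:ℝ) rs, c * r ^ (m - 1) - K * r ≤ r * W r) : False := by
  have hd5 : (5:ℤ) ≤ (d:ℤ) := by exact_mod_cast hd
  have hm0 : (m:ℝ) ≠ 0 := by
    have : m < 0 := by omega
    exact_mod_cast this.ne
  set u : ℝ → ℝ := fun r => r * deriv M r + (d : ℝ) * M r with hu_def
  -- derivative of u
  have hu_der : ∀ r ∈ Ioi (0:ℝ), HasDerivAt u (-(r * W r * u r)) r := by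
    intro r hr
    have hr0 : (0:ℝ) < r := hr
    have h1 : HasDerivAt M (deriv M r) r := ((hM_diff r hr).1).hasDerivAt
    have h2 : HasDerivAt (deriv M) (deriv (deriv M) r) r := ((hM_diff r hr).2).hasDerivAt
    have h3 : HasDerivAt (fun r => r * deriv M r) (1 * deriv M r + r * deriv (deriv M) r) r :=
      (hasDerivAt_id r).mul h2
    have h4 : HasDerivAt u (1 * deriv M r + r * deriv (deriv M) r + (d:ℝ) * deriv M r) r :=
      h3.add (h1.const_mul _)
    convert h4 using 1
    have hode := hode1 r hr
    have hm2 : deriv (deriv M) r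
        = -(((d:ℝ)+1)/r * deriv M r + r * deriv M r * W r + (d:ℝ) * M r * W r) := by
      linarith
    rw [hm2]
    field_simp
    ring
  -- the integral and FTC
  have hWc' : ∀ r ∈ Ioi (0:ℝ), ContinuousAt W r := fun r hr =>
    hWc.continuousAt (isOpen_Ioi.mem_nhds hr)
  set I : ℝ → ℝ := fun r => ∫ t in rs..r, t * W t with hI_def
  have hint : ∀ r ∈ Ioi (0:ℝ), IntervalIntegrable (fun t => t * W t) MeasureTheory.volume rs r := by
    intro r hr
    apply ContinuousOn.intervalIntegrable
    have hsub : uIcc rs r ⊆ Ioi 0 := fun t ht =>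
      lt_of_lt_of_le (lt_min hrs hr) ht.1
    exact (continuousOn_id.mul (hWc.mono hsub))
  have hI_der : ∀ r ∈ Ioi (0:ℝ), HasDerivAt I (r * W r) r := by
    intro r hr
    exact intervalIntegral.integral_hasDerivAt_right (hint r hr)
      (ContinuousOn.stronglyMeasurableAtFilter isOpen_Ioi (continuousOn_id.mul hWc) r hr)
      (continuousAt_id.mul (hWc' r hr))
  -- J is constant
  set J : ℝ → ℝ := fun r => u r * Real.exp (I r) with hJ_def
  have hJ_der : ∀ r ∈ Ioi (0:ℝ), HasDerivAt J 0 r := by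
    intro r hr
    have : HasDerivAt (fun x => u x * Real.exp (I x))
        (-(r * W r * u r) * Real.exp (I r) + u r * (Real.exp (I r) * (r * W r))) r :=
      (hu_der r hr).mul ((hI_der r hr).exp)
    convert this using 1
    ring
  have hJ_mono : MonotoneOn J (Ioi 0) :=
    myMono (convex_Ioi 0) (fun _ h => h) hJ_der (fun r _ => le_refl 0)
  have hJ_anti : AntitoneOn J (Ioi 0) :=
    myAnti (convex_Ioi 0) (fun _ h => h) hJ_der (fun r _ => le_refl 0)
  have hJ_const : ∀ r ∈ Ioc (0:ℝ) rs, J r = J rs := by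
    intro r hr
    exact le_antisymm (hJ_mono hr.1 (mem_Ioi.2 hrs) hr.2) (hJ_anti hr.1 (mem_Ioi.2 hrs) hr.2)
  have hIrs : I rs = 0 := intervalIntegral.integral_same
  have hJrs : J rs = u rs := by simp [hJ_def, hIrs]
  have hu_eq : ∀ r ∈ Ioc (0:ℝ) rs, u r = u rs * Real.exp (-(I r)) := by
    intro r hr
    have h := hJ_const r hr
    rw [hJrs] at h
    have hexp : Real.exp (I r) ≠ 0 := (Real.exp_pos _).ne'
    simp only [hJ_def] at h
    rw [Real.exp_neg, eq_mul_inv_iff_mul_eq₀ hexp]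
    linarith [h]
  -- explicit antiderivative comparison for I
  set A : ℝ → ℝ := fun r => (c / (m:ℝ)) * r ^ m - K / 2 * r ^ 2 with hA_def
  have hA_der : ∀ r ∈ Ioi (0:ℝ), HasDerivAt A (c * r ^ (m - 1) - K * r) r := by
    intro r hr
    have hr0 : (0:ℝ) < r := hr
    have h1 : HasDerivAt (fun x : ℝ => x ^ m) ((m:ℝ) * r ^ (m - 1)) r :=
      hasDerivAt_zpow m r (Or.inl hr0.ne')
    have h2 : HasDerivAt (fun x : ℝ => x ^ (2:ℕ)) ((2:ℝ) * r ^ (1:ℕ)) r := by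
      simpa using hasDerivAt_pow 2 r
    have h3 := (h1.const_mul (c / (m:ℝ))).sub (h2.const_mul (K / 2))
    refine h3.congr_deriv ?_
    rw [pow_one, ← mul_assoc, div_mul_cancel₀ c hm0]
    ring
  have hIA : MonotoneOn (fun r => I r - A r) (Ioc 0 rs) := by
    apply myMono (convex_Ioc 0 rs) Ioc_subset_Ioi_self
      (f' := fun r => r * W r - (c * r ^ (m - 1) - K * r))
    · intro r hr
      exact (hI_der r hr).sub (hA_der r hr)
    · intro r hr
      rw [interior_Ioc] at hr
      have := hWlb r (Ioo_subset_Ioc_self hr)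
      linarith
  -- lower bound for u
  set c' : ℝ := c / (-(m:ℝ)) with hc'_def
  have hc' : 0 < c' := by
    apply div_pos hc
    have : m < 0 := by omega
    have : (m:ℝ) < 0 := by exact_mod_cast this
    linarith
  set C : ℝ := u rs * Real.exp (A rs) with hC_def
  have hC : 0 < C := mul_pos hu0 (Real.exp_pos _)
  have hu_lb : ∀ r ∈ Ioc (0:ℝ) rs, C * Real.exp (c' * r ^ m) ≤ u r := by
    intro r hr
    have hr0 : (0:ℝ) < r := hr.1
    have h1 : I r - A r ≤ I rs - A rs := hIA hr (right_mem_Ioc.2 hrs) hr.2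
    rw [hIrs] at h1
    have h2 : A rs - A r ≤ -(I r) := by linarith
    have h3 : c' * r ^ m ≤ -A r := by
      have hz : (0:ℝ) < r ^ m := zpow_pos hr0 m
      have hz2 : (0:ℝ) ≤ K / 2 * r ^ 2 := by positivity
      have : c / (m:ℝ) * r ^ m + c' * r ^ m = 0 := by
        rw [hc'_def, div_neg]; ring
      simp only [hA_def]
      linarith
    have h4 : A rs + c' * r ^ m ≤ -(I r) := by linarith
    calc C * Real.exp (c' * r ^ m) = u rs * Real.exp (A rs + c' * r ^ m) := by
          rw [hC_def, Real.exp_add]; ring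
      _ ≤ u rs * Real.exp (-(I r)) :=
          mul_le_mul_of_nonneg_left (Real.exp_le_exp.2 h4) hu0.le
      _ = u r := (hu_eq r hr).symm
  -- derivative of f
  set f : ℝ → ℝ := fun r => r ^ d * M r with hf_def
  have hf_der : ∀ r ∈ Ioi (0:ℝ),
      HasDerivAt f ((d:ℝ) * r ^ (d - 1) * M r + r ^ d * deriv M r) r := by
    intro r hr
    exact (hasDerivAt_pow d r).mul ((hM_diff r hr).1).hasDerivAt
  have hf_eq : ∀ r ∈ Ioi (0:ℝ),
      (d:ℝ) * r ^ (d - 1) * M r + r ^ d * deriv M r = r ^ (d - 1) * u r := by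
    intro r hr
    have hpow : r ^ d = r ^ (d - 1) * r := by
      rw [← pow_succ, Nat.sub_add_cancel (by omega)]
    rw [hpow, hu_def]
    ring
  -- exponent arithmetic
  set e : ℤ := ((d:ℤ) - 1) + m * (d:ℤ) with he_def
  have he1 : e + 1 ≤ 0 := by
    have h1 : m * (d:ℤ) ≤ (4 - (d:ℤ)) * (d:ℤ) := by
      apply mul_le_mul_of_nonneg_right hm
      omega
    nlinarith
  -- lower bound on f'
  set C2 : ℝ := C * c' ^ d / (Nat.factorial d) with hC2_def
  have hC2 : 0 < C2 := by
    apply div_pos (mul_pos hC (pow_pos hc' d))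
    exact_mod_cast Nat.factorial_pos d
  have hfp_lb : ∀ r ∈ Ioc (0:ℝ) rs, C2 * r ^ e ≤ r ^ (d - 1) * u r := by
    intro r hr
    have hr0 : (0:ℝ) < r := hr.1
    have hx : (0:ℝ) ≤ c' * r ^ m := by positivity
    have hexp : (c' * r ^ m) ^ d / (Nat.factorial d) ≤ Real.exp (c' * r ^ m) :=
      Real.pow_div_factorial_le_exp _ hx d
    have hru : C * ((c' * r ^ m) ^ d / (Nat.factorial d)) ≤ u r := by
      calc C * ((c' * r ^ m) ^ d / (Nat.factorial d))
          ≤ C * Real.exp (c' * r ^ m) := mul_le_mul_of_nonneg_left hexp hC.le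
        _ ≤ u r := hu_lb r hr
    have hkey : r ^ (d-1) * (C * ((c' * r ^ m) ^ d / (Nat.factorial d))) = C2 * r ^ e := by
      have h1 : (r ^ m) ^ d = r ^ (m * (d:ℤ)) := by
        rw [← zpow_natCast (r ^ m) d, ← zpow_mul]
      have h2 : (r:ℝ) ^ (d - 1 : ℕ) = r ^ ((d:ℤ) - 1) := by
        rw [← zpow_natCast r (d-1)]
        congr 1
        omega
      rw [mul_pow, h1, hC2_def, h2, he_def, zpow_add₀ hr0.ne']
      ring
    calc C2 * r ^ e = r ^ (d-1) * (C * ((c' * r ^ m) ^ d / (Nat.factorial d))) := hkey.symm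
      _ ≤ r ^ (d-1) * u r := by
        apply mul_le_mul_of_nonneg_left hru (by positivity)
  -- replace r^e by C3 / r on (0, ε]
  set ε : ℝ := min rs 1 with hε_def
  have hε0 : 0 < ε := lt_min hrs one_pos
  have hεrs : ε ≤ rs := min_le_left _ _
  set n : ℕ := (-(e + 1)).toNat with hn_def
  have hne : (n:ℤ) = -(e+1) := Int.toNat_of_nonneg (by omega)
  set C3 : ℝ := C2 * (ε ^ n)⁻¹ with hC3_def
  have hC3 : 0 < C3 := mul_pos hC2 (inv_pos.2 (pow_pos hε0 n))
  have hre : ∀ r ∈ Ioc (0:ℝ) ε, C3 / r ≤ C2 * r ^ e := by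
    intro r hr
    have hr0 : (0:ℝ) < r := hr.1
    have h1 : r ^ n ≤ ε ^ n := pow_le_pow_left₀ hr0.le hr.2 n
    have h2 : (ε ^ n)⁻¹ ≤ (r ^ n)⁻¹ :=
      (inv_anti₀ (pow_pos hr0 n) h1)
    have h3 : (r:ℝ) ^ (e+1) = (r ^ n)⁻¹ := by
      rw [← zpow_natCast r n, ← zpow_neg, hne]
      ring_nf
    have h4 : r ^ e = r ^ (e+1) / r := by
      rw [eq_div_iff hr0.ne']
      rw [← zpow_add_one₀ hr0.ne']
    rw [h4, h3, ← mul_div_assoc, hC3_def]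
    gcongr
  -- the log comparison
  set G : ℝ → ℝ := fun r => f r - C3 * Real.log r with hG_def
  have hG_mono : MonotoneOn G (Ioc 0 ε) := by
    apply myMono (convex_Ioc 0 ε) Ioc_subset_Ioi_self
      (f' := fun r => ((d:ℝ) * r ^ (d - 1) * M r + r ^ d * deriv M r) - C3 * r⁻¹)
    · intro r hr
      have hr0 : (0:ℝ) < r := hr
      exact (hf_der r hr).sub ((Real.hasDerivAt_log hr0.ne').const_mul C3)
    · intro r hr
      rw [interior_Ioc] at hr
      have hr' : r ∈ Ioc (0:ℝ) ε := Ioo_subset_Ioc_self hr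
      have hrIoi : r ∈ Ioi (0:ℝ) := hr'.1
      have hrrs : r ∈ Ioc (0:ℝ) rs := ⟨hr'.1, hr'.2.trans hεrs⟩
      have h1 := hfp_lb r hrrs
      have h2 := hre r hr'
      rw [hf_eq r hrIoi]
      rw [div_eq_mul_inv] at h2
      exact sub_nonneg.2 (h2.trans h1)
  -- final contradiction
  set r₀ : ℝ := ε * Real.exp (-(f ε / C3) - 1) with hr₀_def
  have hfε : 0 ≤ f ε := by
    have := hMnn ε (mem_Ioi.2 hε0)
    positivity
  have hr₀0 : 0 < r₀ := mul_pos hε0 (Real.exp_pos _)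
  have hr₀ε : r₀ ≤ ε := by
    rw [hr₀_def]
    apply mul_le_of_le_one_right hε0.le
    rw [Real.exp_le_one_iff]
    have : 0 ≤ f ε / C3 := div_nonneg hfε hC3.le
    linarith
  have hlog : Real.log r₀ = Real.log ε + (-(f ε / C3) - 1) := by
    rw [hr₀_def, Real.log_mul hε0.ne' (Real.exp_pos _).ne', Real.log_exp]
  have hcomp : G r₀ ≤ G ε := hG_mono ⟨hr₀0, hr₀ε⟩ ⟨hε0, le_refl ε⟩ hr₀ε
  have hfr₀ : 0 ≤ f r₀ := by
    have := hMnn r₀ (mem_Ioi.2 hr₀0)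
    positivity
  have hdiv : C3 * (f ε / C3) = f ε := by
    field_simp
  simp only [hG_def, hlog] at hcomp
  nlinarith [hcomp, hfr₀, hC3, hdiv]

/-- For stationary mass functions `(M, W)` of the chemotaxis
system in dimension `d ≥ 5`, the quantities `r^d·M(r)` and `r^d·W(r)` vanish as
`r → 0⁺`. -/
theorem stmt12 (d : ℕ) (hd : 5 ≤ d) (M W : ℝ → ℝ)
    (hM_diff : ∀ r ∈ Set.Ioi (0 : ℝ),
      DifferentiableAt ℝ M r ∧ DifferentiableAt ℝ (deriv M) r)
    (hM_cont : ContinuousOn (deriv (deriv M)) (Set.Ioi 0))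
    (hW_diff : ∀ r ∈ Set.Ioi (0 : ℝ),
      DifferentiableAt ℝ W r ∧ DifferentiableAt ℝ (deriv W) r)
    (hW_cont : ContinuousOn (deriv (deriv W)) (Set.Ioi 0))
    (h_nonneg : ∀ r ∈ Set.Ioi (0 : ℝ), 0 ≤ M r ∧ 0 ≤ W r)
    (h_mono : ∀ r ∈ Set.Ioi (0 : ℝ), deriv M r ≤ 0 ∧ deriv W r ≤ 0)
    (hrdM_mono : MonotoneOn (fun r : ℝ => r ^ d * M r) (Set.Ioi 0))
    (hrdW_mono : MonotoneOn (fun r : ℝ => r ^ d * W r) (Set.Ioi 0))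
    (h_pos : ∃ rs : ℝ, 0 < rs ∧ 0 < rs * deriv M rs + (d : ℝ) * M rs)
    (hode1 : ∀ r ∈ Set.Ioi (0 : ℝ),
      deriv (deriv M) r + ((d : ℝ) + 1) / r * deriv M r
        + r * deriv M r * W r + (d : ℝ) * M r * W r = 0)
    (hode2 : ∀ r ∈ Set.Ioi (0 : ℝ),
      deriv (deriv W) r + ((d : ℝ) + 1) / r * deriv W r + M r = 0) :
    Filter.Tendsto (fun r : ℝ => r ^ d * M r) (nhdsWithin 0 (Set.Ioi 0)) (nhds 0) ∧
    Filter.Tendsto (fun r : ℝ => r ^ d * W r) (nhdsWithin 0 (Set.Ioi 0)) (nhds 0) := by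
  obtain ⟨rs, hrs, hu0⟩ := h_pos
  have hMnn : ∀ r ∈ Ioi (0:ℝ), 0 ≤ M r := fun r hr => (h_nonneg r hr).1
  have hWnn : ∀ r ∈ Ioi (0:ℝ), 0 ≤ W r := fun r hr => (h_nonneg r hr).2
  have hWc : ContinuousOn W (Ioi 0) := fun r hr =>
    ((hW_diff r hr).1.continuousAt).continuousWithinAt
  have hd2' : (0:ℝ) < (d:ℝ) - 2 := by
    have : (5:ℝ) ≤ (d:ℝ) := by exact_mod_cast hd
    linarith
  -- Part 1 : the M limit
  set f := fun r : ℝ => r ^ d * M r with hf_def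
  have hbdd : BddBelow (f '' Ioi 0) := by
    refine ⟨0, ?_⟩
    rintro y ⟨r, hr, rfl⟩
    have h1 := hMnn r hr
    have hr0 : (0:ℝ) < r := hr
    positivity
  have htend := hrdM_mono.tendsto_nhdsGT hbdd
  set L := sInf (f '' Ioi 0) with hL_def
  have hL0 : 0 ≤ L := by
    apply le_csInf (Set.nonempty_Ioi.image f)
    rintro y ⟨r, hr, rfl⟩
    have h1 := hMnn r hr
    have hr0 : (0:ℝ) < r := hr
    positivity
  have hLle : ∀ r ∈ Ioi (0:ℝ), L ≤ f r := fun r hr => csInf_le hbdd ⟨r, hr, rfl⟩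
  have hLzero : L = 0 := by
    by_contra hne
    have hL : 0 < L := lt_of_le_of_ne hL0 (Ne.symm hne)
    -- derivative of V
    set V := fun r : ℝ => r ^ (d+1) * deriv W r with hV_def
    have hV_der : ∀ r ∈ Ioi (0:ℝ), HasDerivAt V (-(r ^ (d+1) * M r)) r := by
      intro r hr
      have hr0 : (0:ℝ) < r := hr
      have h1 : HasDerivAt (deriv W) (deriv (deriv W) r) r := ((hW_diff r hr).2).hasDerivAt
      have h2 := (hasDerivAt_pow (d+1) r).mul h1
      refine h2.congr_deriv ?_
      have hode := hode2 r hr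
      have hW2 : deriv (deriv W) r = -(((d:ℝ)+1)/r * deriv W r + M r) := by linarith
      rw [hW2]
      simp only [Nat.add_sub_cancel]
      push_cast
      field_simp
      ring
    have hVq_anti : AntitoneOn (fun r => V r + L/2 * r ^ 2) (Ioi 0) := by
      apply myAnti (convex_Ioi 0) (fun _ h => h)
        (f' := fun r => -(r ^ (d+1) * M r) + L * r)
      · intro r hr
        have h2 : HasDerivAt (fun r : ℝ => L/2 * r ^ 2) (L * r) r := by
          have h3 := (hasDerivAt_pow 2 r).const_mul (L/2)
          refine h3.congr_deriv ?_
          push_cast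
          ring
        exact (hV_der r hr).add h2
      · intro r hr
        rw [interior_Ioi] at hr
        have hr0 : (0:ℝ) < r := hr
        have h1 : L ≤ r ^ d * M r := hLle r hr
        have h4 : L * r ≤ r ^ (d+1) * M r := by
          calc L * r ≤ r ^ d * M r * r := mul_le_mul_of_nonneg_right h1 hr0.le
            _ = r ^ (d+1) * M r := by rw [pow_succ]; ring
        show -(r ^ (d+1) * M r) + L * r ≤ 0
        linarith
    have hVle : ∀ s ∈ Ioi (0:ℝ), V s + L/2 * s ^ 2 ≤ 0 := by
      intro s hs
      have hs0 : (0:ℝ) < s := hs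
      have key : ∀ ε > (0:ℝ), V s + L/2 * s ^ 2 ≤ 0 + ε := by
        intro ε hε
        set r := min s (Real.sqrt (2 * ε / L)) with hr_def
        have hsq : 0 < Real.sqrt (2 * ε / L) := Real.sqrt_pos.2 (by positivity)
        have hr0 : 0 < r := lt_min hs0 hsq
        have hrles : r ≤ s := min_le_left _ _
        have h1 := hVq_anti (mem_Ioi.2 hr0) hs hrles
        simp only [] at h1
        have hVr : V r ≤ 0 :=
          mul_nonpos_of_nonneg_of_nonpos (pow_nonneg hr0.le _) ((h_mono r hr0).2)
        have hr2 : r ^ 2 ≤ 2 * ε / L := by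
          have h5 : r ≤ Real.sqrt (2*ε/L) := min_le_right _ _
          calc r ^ 2 ≤ Real.sqrt (2*ε/L) ^ 2 := pow_le_pow_left₀ hr0.le h5 2
            _ = 2*ε/L := Real.sq_sqrt (by positivity)
        have h6 : L/2 * r ^ 2 ≤ ε := by
          calc L/2 * r^2 ≤ L/2 * (2*ε/L) := mul_le_mul_of_nonneg_left hr2 (by positivity)
            _ = ε := by field_simp
        linarith
      linarith [le_of_forall_pos_le_add key]
    -- the comparison function ψ
    set c₁ : ℝ := L / (2 * ((d:ℝ) - 2)) with hc₁_def
    have hc₁ : 0 < c₁ := div_pos hL (by linarith)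
    have hψ_anti : AntitoneOn (fun r => W r - c₁ * r ^ ((2:ℤ) - (d:ℤ))) (Ioi 0) := by
      apply myAnti (convex_Ioi 0) (fun _ h => h)
        (f' := fun r => deriv W r - c₁ * (((2:ℤ) - (d:ℤ) : ℤ) : ℝ) * r ^ ((2:ℤ) - (d:ℤ) - 1))
      · intro r hr
        have hr0 : (0:ℝ) < r := hr
        have h1 := (hasDerivAt_zpow ((2:ℤ) - (d:ℤ)) r (Or.inl hr0.ne')).const_mul c₁
        have h2 := ((hW_diff r hr).1).hasDerivAt
        have h3 := h2.sub h1
        refine h3.congr_deriv ?_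
        ring
      · intro r hr
        rw [interior_Ioi] at hr
        have hr0 : (0:ℝ) < r := hr
        have hV := hVle r hr
        have hcd : c₁ * (((2:ℤ) - (d:ℤ) : ℤ) : ℝ) = -(L/2) := by
          rw [hc₁_def]
          push_cast
          field_simp
          ring
        show deriv W r - c₁ * (((2:ℤ) - (d:ℤ) : ℤ) : ℝ) * r ^ ((2:ℤ) - (d:ℤ) - 1) ≤ 0
        refine nonpos_of_mul_right (pow_pos hr0 (d+1)) ?_
        have hzz : (r:ℝ) ^ ((2:ℤ) - (d:ℤ) - 1) * r ^ (d+1 : ℕ) = r ^ 2 := by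
          rw [← zpow_natCast r (d+1), ← zpow_add₀ hr0.ne']
          have h7 : (2:ℤ) - (d:ℤ) - 1 + ((d:ℕ)+1 : ℕ) = 2 := by push_cast; ring
          rw [h7]
          norm_cast
        have hexpand : (deriv W r - c₁ * (((2:ℤ) - (d:ℤ) : ℤ) : ℝ) * r ^ ((2:ℤ) - (d:ℤ) - 1))
            * r ^ (d+1) = V r + L/2 * r ^ 2 := by
          have hVr : V r = r ^ (d+1) * deriv W r := rfl
          rw [hVr, ← hzz, hcd]
          ring
        rw [hexpand]
        exact hV
    -- the lower bound for r * W r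
    have hWlb : ∀ r ∈ Ioc (0:ℝ) rs,
        c₁ * r ^ (4 - (d:ℤ) - 1) - (c₁ * rs ^ ((2:ℤ) - (d:ℤ))) * r ≤ r * W r := by
      intro r hr
      have hr0 : (0:ℝ) < r := hr.1
      have h1 := hψ_anti (mem_Ioi.2 hr0) (mem_Ioi.2 hrs) hr.2
      simp only [] at h1
      have h2 : 0 ≤ W rs := hWnn rs (mem_Ioi.2 hrs)
      have h3 : c₁ * r ^ ((2:ℤ) - (d:ℤ)) - c₁ * rs ^ ((2:ℤ) - (d:ℤ)) ≤ W r := by linarith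
      have h4 := mul_le_mul_of_nonneg_left h3 hr0.le
      have h5 : r * (c₁ * r ^ ((2:ℤ) - (d:ℤ))) = c₁ * r ^ (4 - (d:ℤ) - 1) := by
        have h6 : (4:ℤ) - (d:ℤ) - 1 = 1 + ((2:ℤ) - (d:ℤ)) := by ring
        rw [h6, zpow_add₀ hr0.ne', zpow_one]
        ring
      rw [mul_sub, h5] at h4
      linarith
    have hK : 0 ≤ c₁ * rs ^ ((2:ℤ) - (d:ℤ)) := by positivity
    exact blowup d hd M W hM_diff hMnn hWc hode1 rs hrs hu0 c₁ _ hc₁ hK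
      (4 - (d:ℤ)) le_rfl hWlb
  -- Part 2 : the W limit
  set g := fun r : ℝ => r ^ d * W r with hg_def
  have hbddW : BddBelow (g '' Ioi 0) := by
    refine ⟨0, ?_⟩
    rintro y ⟨r, hr, rfl⟩
    have h1 := hWnn r hr
    have hr0 : (0:ℝ) < r := hr
    positivity
  have htendW := hrdW_mono.tendsto_nhdsGT hbddW
  set LW := sInf (g '' Ioi 0) with hLW_def
  have hLW0 : 0 ≤ LW := by
    apply le_csInf (Set.nonempty_Ioi.image g)
    rintro y ⟨r, hr, rfl⟩
    have h1 := hWnn r hr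
    have hr0 : (0:ℝ) < r := hr
    positivity
  have hLWle : ∀ r ∈ Ioi (0:ℝ), LW ≤ g r := fun r hr => csInf_le hbddW ⟨r, hr, rfl⟩
  have hLWzero : LW = 0 := by
    by_contra hne
    have hLW : 0 < LW := lt_of_le_of_ne hLW0 (Ne.symm hne)
    have hWlb : ∀ r ∈ Ioc (0:ℝ) rs, LW * r ^ (2 - (d:ℤ) - 1) - 0 * r ≤ r * W r := by
      intro r hr
      have hr0 : (0:ℝ) < r := hr.1
      have h1 : LW ≤ r ^ d * W r := hLWle r (mem_Ioi.2 hr0)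
      have h2 : r ^ ((1:ℤ) - (d:ℤ)) * LW ≤ r ^ ((1:ℤ) - (d:ℤ)) * (r ^ d * W r) :=
        mul_le_mul_of_nonneg_left h1 (zpow_pos hr0 _).le
      have h3 : r ^ ((1:ℤ)-(d:ℤ)) * (r ^ (d:ℕ) * W r) = r * W r := by
        rw [← zpow_natCast r d, ← mul_assoc, ← zpow_add₀ hr0.ne']
        norm_num
      have h4 : (2:ℤ) - (d:ℤ) - 1 = 1 - (d:ℤ) := by ring
      rw [h4]
      rw [h3] at h2
      nlinarith [h2]
    have hmle : (2:ℤ) - (d:ℤ) ≤ 4 - (d:ℤ) := by omega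
    exact blowup d hd M W hM_diff hMnn hWc hode1 rs hrs hu0 LW 0 hLW le_rfl
      (2 - (d:ℤ)) hmle hWlb
  rw [hLzero] at htend
  rw [hLWzero] at htendW
  exact ⟨htend, htendW⟩
end

section
/- (Reconstruction of a stationary solution from stationary mass functions.) Let d ≥ 5 be an integer. Let M, W : (0,∞) → ℝ be twice continuously differentiable with (r^d·M(r))' ≥ 0 and (r^d·W(r))' ≥ 0 on (0,∞), r^d·M(r) → 0 and r^d·W(r) → 0 as r → 0⁺, and satisfying for all r > 0: M''(r) + ((d+1)/r)·M'(r) + r·M'(r)·W(r) + d·M(r)·W(r) = 0 and W''(r) + ((d+1)/r)·W'(r) + M(r) = 0. Define u(r) := d·M(r) + r·M'(r), w(r) := d·W(r) + r·W'(r), and, for a fixed r₀ > 0 and constant c, v(r) := c − ∫_{r₀}^r ρ·W(ρ) dρ. Then u ≥ 0 and w ≥ 0 on (0,∞); for every r > 0 the improper integrals converge and M(r) = r^{−d}∫_0^r ρ^{d−1}u(ρ)dρ and W(r) = r^{−d}∫_0^r ρ^{d−1}w(ρ)dρ; and for all r > 0 the radial stationary system holds: u''(r) + ((d−1)/r)·u'(r)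 = r^{1−d}·(r^{d−1}·u(r)·v'(r))', v''(r) + ((d−1)/r)·v'(r) = −w(r), and w''(r) + ((d−1)/r)·w'(r) = −u(r). -/
open Set Filter MeasureTheory intervalIntegral

/-- FTC on `(0, b)` for a nonnegative derivative with vanishing limit at `0⁺`. -/
lemma ftc_aux (g f : ℝ → ℝ) (b : ℝ) (hb : 0 < b)
    (hderiv : ∀ x ∈ Set.Ioi (0:ℝ), HasDerivAt g (f x) x)
    (hpos : ∀ x ∈ Set.Ioi (0:ℝ), 0 ≤ f x)
    (hlim : Filter.Tendsto g (nhdsWithin 0 (Set.Ioi 0)) (nhds 0)) :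
    MeasureTheory.IntegrableOn f (Set.Ioo 0 b) ∧
      (∫ x in Set.Ioo (0:ℝ) b, f x) = g b := by
  set G : ℝ → ℝ := fun s => if 0 < s then g s else 0 with hGdef
  have hGg : ∀ x ∈ Ioi (0:ℝ), G x = g x := fun x hx => if_pos hx
  have hGeq : ∀ x ∈ Ioi (0:ℝ), G =ᶠ[nhds x] g := fun x hx =>
    Filter.eventually_of_mem (isOpen_Ioi.mem_nhds hx) hGg
  have hGderiv : ∀ x ∈ Ioo (0:ℝ) b, HasDerivAt G (f x) x := fun x hx =>
    (hderiv x hx.1).congr_of_eventuallyEq (hGeq x hx.1)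
  have hG0 : G 0 = 0 := if_neg (lt_irrefl 0)
  have hGcont : ContinuousOn G (Icc 0 b) := by
    intro x hx
    rcases eq_or_lt_of_le hx.1 with h0 | h0
    · have : Tendsto G (nhdsWithin 0 (Ici 0)) (nhds 0) := by
        rw [← Set.Ioi_insert, nhdsWithin_insert]
        rw [Filter.tendsto_sup]
        constructor
        · simpa [hG0] using tendsto_pure_nhds G 0
        · exact hlim.congr' (Filter.eventually_of_mem self_mem_nhdsWithin
            (fun y hy => (hGg y hy).symm))
      have : Tendsto G (nhdsWithin 0 (Icc 0 b)) (nhds 0) :=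
        this.mono_left (nhdsWithin_mono _ Icc_subset_Ici_self)
      subst h0
      simpa [ContinuousWithinAt, hG0] using this
    · exact (((hderiv x h0).continuousAt.congr (hGeq x h0).symm)).continuousWithinAt
  have hInt : IntegrableOn f (Ioc 0 b) :=
    intervalIntegral.integrableOn_deriv_of_nonneg hGcont hGderiv (fun x hx => hpos x hx.1)
  have hInt' : IntegrableOn f (Ioo 0 b) := hInt.mono_set Ioo_subset_Ioc_self
  have hval : ∫ y in (0:ℝ)..b, f y = G b - G 0 :=
    intervalIntegral.integral_eq_sub_of_hasDeriv_right_of_le hb.le hGcont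
      (fun x hx => (hGderiv x hx).hasDerivWithinAt)
      ((intervalIntegrable_iff_integrableOn_Ioc_of_le hb.le).2 hInt)
  refine ⟨hInt', ?_⟩
  rw [← MeasureTheory.integral_Ioc_eq_integral_Ioo, ← intervalIntegral.integral_of_le hb.le,
    hval, hG0, hGg b hb, sub_zero]

/-- Reconstruction of a radial stationary solution `(u, v, w)` of the
chemotaxis system from stationary mass functions `(M, W)`. -/
theorem stmt13 (d : ℕ) (hd : 5 ≤ d) (M W : ℝ → ℝ)
    (hM_diff : ∀ r ∈ Set.Ioi (0 : ℝ),
      DifferentiableAt ℝ M r ∧ DifferentiableAt ℝ (deriv M) r)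
    (hM_cont : ContinuousOn (deriv (deriv M)) (Set.Ioi 0))
    (hW_diff : ∀ r ∈ Set.Ioi (0 : ℝ),
      DifferentiableAt ℝ W r ∧ DifferentiableAt ℝ (deriv W) r)
    (hW_cont : ContinuousOn (deriv (deriv W)) (Set.Ioi 0))
    (hrdM_mono : ∀ r ∈ Set.Ioi (0 : ℝ), 0 ≤ deriv (fun s : ℝ => s ^ d * M s) r)
    (hrdW_mono : ∀ r ∈ Set.Ioi (0 : ℝ), 0 ≤ deriv (fun s : ℝ => s ^ d * W s) r)
    (hMlim : Filter.Tendsto (fun r : ℝ => r ^ d * M r) (nhdsWithin 0 (Set.Ioi 0)) (nhds 0))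
    (hWlim : Filter.Tendsto (fun r : ℝ => r ^ d * W r) (nhdsWithin 0 (Set.Ioi 0)) (nhds 0))
    (hode1 : ∀ r ∈ Set.Ioi (0 : ℝ),
      deriv (deriv M) r + ((d : ℝ) + 1) / r * deriv M r
        + r * deriv M r * W r + (d : ℝ) * M r * W r = 0)
    (hode2 : ∀ r ∈ Set.Ioi (0 : ℝ),
      deriv (deriv W) r + ((d : ℝ) + 1) / r * deriv W r + M r = 0)
    (r₀ : ℝ) (hr₀ : 0 < r₀) (c : ℝ) :
    let u : ℝ → ℝ := fun r => (d : ℝ) * M r + r * deriv M r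
    let w : ℝ → ℝ := fun r => (d : ℝ) * W r + r * deriv W r
    let v : ℝ → ℝ := fun r => c - ∫ ρ in r₀..r, ρ * W ρ
    (∀ r ∈ Set.Ioi (0 : ℝ), 0 ≤ u r ∧ 0 ≤ w r) ∧
    (∀ r ∈ Set.Ioi (0 : ℝ),
      MeasureTheory.IntegrableOn (fun ρ => ρ ^ (d - 1) * u ρ) (Set.Ioo 0 r) ∧
      MeasureTheory.IntegrableOn (fun ρ => ρ ^ (d - 1) * w ρ) (Set.Ioo 0 r) ∧
      M r = (∫ ρ in Set.Ioo (0 : ℝ) r, ρ ^ (d - 1) * u ρ) / r ^ d ∧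
      W r = (∫ ρ in Set.Ioo (0 : ℝ) r, ρ ^ (d - 1) * w ρ) / r ^ d) ∧
    (∀ r ∈ Set.Ioi (0 : ℝ),
      deriv (deriv u) r + ((d : ℝ) - 1) / r * deriv u r
          = r ^ ((1 : ℤ) - (d : ℤ)) * deriv (fun s => s ^ (d - 1) * u s * deriv v s) r ∧
      deriv (deriv v) r + ((d : ℝ) - 1) / r * deriv v r = -(w r) ∧
      deriv (deriv w) r + ((d : ℝ) - 1) / r * deriv w r = -(u r)) := by
  intro u w v
  -- derivative of `s ^ d * M s`
  have hpow : ∀ x : ℝ, x ≠ 0 → x ^ (d - 1) * x = x ^ d := by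
    intro x hx
    rw [← pow_succ]
    congr 1
    omega
  have hgM : ∀ x ∈ Set.Ioi (0:ℝ), HasDerivAt (fun s : ℝ => s ^ d * M s)
      (x ^ (d - 1) * u x) x := by
    intro x hx
    have h1 := (hasDerivAt_pow d x).fun_mul ((hM_diff x hx).1.hasDerivAt)
    refine h1.congr_deriv (Eq.symm ?_)
    show x ^ (d - 1) * ((d:ℝ) * M x + x * deriv M x) = _
    rw [mul_add, ← hpow x (ne_of_gt hx)]
    ring
  have hgW : ∀ x ∈ Set.Ioi (0:ℝ), HasDerivAt (fun s : ℝ => s ^ d * W s)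
      (x ^ (d - 1) * w x) x := by
    intro x hx
    have h1 := (hasDerivAt_pow d x).fun_mul ((hW_diff x hx).1.hasDerivAt)
    refine h1.congr_deriv (Eq.symm ?_)
    show x ^ (d - 1) * ((d:ℝ) * W x + x * deriv W x) = _
    rw [mul_add, ← hpow x (ne_of_gt hx)]
    ring
  -- nonnegativity
  have hu_nonneg : ∀ r ∈ Set.Ioi (0:ℝ), 0 ≤ u r := by
    intro r hr
    have h := hrdM_mono r hr
    rw [(hgM r hr).deriv] at h
    have hp : (0:ℝ) < r ^ (d - 1) := pow_pos hr _
    nlinarith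
  have hw_nonneg : ∀ r ∈ Set.Ioi (0:ℝ), 0 ≤ w r := by
    intro r hr
    have h := hrdW_mono r hr
    rw [(hgW r hr).deriv] at h
    have hp : (0:ℝ) < r ^ (d - 1) := pow_pos hr _
    nlinarith
  -- first derivatives of u, w, v
  have hu' : ∀ r ∈ Set.Ioi (0:ℝ), HasDerivAt u (-(r * W r * u r)) r := by
    intro r hr
    have hr0 : r ≠ 0 := ne_of_gt hr
    have hM1 : HasDerivAt M (deriv M r) r := (hM_diff r hr).1.hasDerivAt
    have hM2 : HasDerivAt (deriv M) (deriv (deriv M) r) r := (hM_diff r hr).2.hasDerivAt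
    have h : HasDerivAt u ((d:ℝ) * deriv M r + (1 * deriv M r + r * deriv (deriv M) r)) r :=
      (hM1.const_mul (d:ℝ)).add ((hasDerivAt_id r).mul hM2)
    convert h using 1
    have hode := hode1 r hr
    have key : deriv (deriv M) r =
        -(((d:ℝ) + 1) / r * deriv M r + r * deriv M r * W r + (d:ℝ) * M r * W r) := by
      linarith
    rw [key]
    simp only [u]
    field_simp
    ring
  have hw' : ∀ r ∈ Set.Ioi (0:ℝ), HasDerivAt w (-(r * M r)) r := by
    intro r hr
    have hr0 : r ≠ 0 := ne_of_gt hr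
    have hW1 : HasDerivAt W (deriv W r) r := (hW_diff r hr).1.hasDerivAt
    have hW2 : HasDerivAt (deriv W) (deriv (deriv W) r) r := (hW_diff r hr).2.hasDerivAt
    have h : HasDerivAt w ((d:ℝ) * deriv W r + (1 * deriv W r + r * deriv (deriv W) r)) r :=
      (hW1.const_mul (d:ℝ)).add ((hasDerivAt_id r).mul hW2)
    convert h using 1
    have hode := hode2 r hr
    have key : deriv (deriv W) r = -(((d:ℝ) + 1) / r * deriv W r + M r) := by
      linarith
    rw [key]
    field_simp
    ring
  have hWc : ContinuousOn (fun ρ : ℝ => ρ * W ρ) (Set.Ioi 0) :=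
    continuous_id.continuousOn.mul (fun x hx => (hW_diff x hx).1.continuousAt.continuousWithinAt)
  have hv' : ∀ r ∈ Set.Ioi (0:ℝ), HasDerivAt v (-(r * W r)) r := by
    intro r hr
    have hsub : Set.uIcc r₀ r ⊆ Set.Ioi (0:ℝ) := fun x hx =>
      lt_of_lt_of_le (lt_min hr₀ hr) hx.1
    have hint : IntervalIntegrable (fun ρ : ℝ => ρ * W ρ) volume r₀ r :=
      (hWc.mono hsub).intervalIntegrable
    have hmeas : StronglyMeasurableAtFilter (fun ρ : ℝ => ρ * W ρ) (nhds r) volume :=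
      AEStronglyMeasurable.stronglyMeasurableAtFilter_of_mem
        (hWc.aestronglyMeasurable measurableSet_Ioi) (isOpen_Ioi.mem_nhds hr)
    have hcont : ContinuousAt (fun ρ : ℝ => ρ * W ρ) r :=
      continuousAt_id.mul (hW_diff r hr).1.continuousAt
    have h := intervalIntegral.integral_hasDerivAt_right hint hmeas hcont
    have h2 : HasDerivAt v (0 - r * W r) r := (hasDerivAt_const r c).sub h
    simpa using h2
  -- part 2: integral representation
  have part2 : ∀ r ∈ Set.Ioi (0:ℝ),
      MeasureTheory.IntegrableOn (fun ρ => ρ ^ (d - 1) * u ρ) (Set.Ioo 0 r) ∧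
      MeasureTheory.IntegrableOn (fun ρ => ρ ^ (d - 1) * w ρ) (Set.Ioo 0 r) ∧
      M r = (∫ ρ in Set.Ioo (0 : ℝ) r, ρ ^ (d - 1) * u ρ) / r ^ d ∧
      W r = (∫ ρ in Set.Ioo (0 : ℝ) r, ρ ^ (d - 1) * w ρ) / r ^ d := by
    intro r hr
    have hrd : (r:ℝ) ^ d ≠ 0 := pow_ne_zero _ (ne_of_gt hr)
    have hM := ftc_aux (fun s : ℝ => s ^ d * M s) (fun ρ => ρ ^ (d - 1) * u ρ) r hr
      hgM (fun x hx => mul_nonneg (pow_nonneg (le_of_lt hx) _) (hu_nonneg x hx)) hMlim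
    have hW := ftc_aux (fun s : ℝ => s ^ d * W s) (fun ρ => ρ ^ (d - 1) * w ρ) r hr
      hgW (fun x hx => mul_nonneg (pow_nonneg (le_of_lt hx) _) (hw_nonneg x hx)) hWlim
    refine ⟨hM.1, hW.1, ?_, ?_⟩
    · rw [hM.2, mul_div_cancel_left₀ _ hrd]
    · rw [hW.2, mul_div_cancel_left₀ _ hrd]
  -- second derivative transfer
  have hdd : ∀ (f g : ℝ → ℝ), (∀ s ∈ Set.Ioi (0:ℝ), deriv f s = g s) →
      ∀ r ∈ Set.Ioi (0:ℝ), deriv (deriv f) r = deriv g r := by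
    intro f g h r hr
    exact Filter.EventuallyEq.deriv_eq
      (Filter.eventually_of_mem (isOpen_Ioi.mem_nhds hr) h)
  have hderiv_u : ∀ s ∈ Set.Ioi (0:ℝ), deriv u s = -(s * W s * u s) :=
    fun s hs => (hu' s hs).deriv
  have hderiv_w : ∀ s ∈ Set.Ioi (0:ℝ), deriv w s = -(s * M s) :=
    fun s hs => (hw' s hs).deriv
  have hderiv_v : ∀ s ∈ Set.Ioi (0:ℝ), deriv v s = -(s * W s) :=
    fun s hs => (hv' s hs).deriv
  refine ⟨fun r hr => ⟨hu_nonneg r hr, hw_nonneg r hr⟩, part2, ?_⟩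
  intro r hr
  have hr0 : r ≠ 0 := ne_of_gt hr
  have hW1 : HasDerivAt W (deriv W r) r := (hW_diff r hr).1.hasDerivAt
  have hM1 : HasDerivAt M (deriv M r) r := (hM_diff r hr).1.hasDerivAt
  have hSW : HasDerivAt (fun s : ℝ => s * W s) (1 * W r + r * deriv W r) r :=
    (hasDerivAt_id r).mul hW1
  have hSM : HasDerivAt (fun s : ℝ => s * M s) (1 * M r + r * deriv M r) r :=
    (hasDerivAt_id r).mul hM1
  refine ⟨?_, ?_, ?_⟩
  · -- u equation
    have hdd_u : deriv (deriv u) r = deriv (fun s => -(s * W s * u s)) r := hdd _ _ hderiv_u r hr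
    have h2 : HasDerivAt (fun s : ℝ => -(s * W s * u s))
        (-((1 * W r + r * deriv W r) * u r + r * W r * -(r * W r * u r))) r :=
      (hSW.mul (hu' r hr)).neg
    -- RHS: rewrite deriv v inside
    have hG : deriv (fun s => s ^ (d - 1) * u s * deriv v s) r
        = deriv (fun s => s ^ (d - 1) * u s * -(s * W s)) r := by
      apply Filter.EventuallyEq.deriv_eq
      filter_upwards [isOpen_Ioi.mem_nhds hr] with s hs
      rw [hderiv_v s hs]
    have h3 : HasDerivAt (fun s : ℝ => s ^ (d - 1) * u s * -(s * W s))
        (((↑(d - 1) * r ^ (d - 1 - 1)) * u r + r ^ (d - 1) * -(r * W r * u r)) * -(r * W r)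
          + r ^ (d - 1) * u r * -(1 * W r + r * deriv W r)) r :=
      ((hasDerivAt_pow (d - 1) r).mul (hu' r hr)).mul hSW.neg
    rw [hdd_u, h2.deriv, hderiv_u r hr, hG, h3.deriv]
    -- now pure arithmetic with powers
    have hd11 : d - 1 - 1 = d - 2 := by omega
    rw [hd11]
    have hcast : ((d - 1 : ℕ) : ℝ) = (d : ℝ) - 1 := by
      rw [Nat.cast_sub (by omega : 1 ≤ d)]; norm_num
    rw [hcast]
    have e1 : (r:ℝ) ^ ((1:ℤ) - (d:ℤ)) = (r ^ (d - 1))⁻¹ := by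
      rw [← zpow_natCast r (d - 1), ← zpow_neg]
      congr 1
      rw [Nat.cast_sub (by omega : 1 ≤ d)]
      push_cast
      ring
    rw [e1]
    have hQR : (r:ℝ) ^ (d - 2) * r = r ^ (d - 1) := by
      rw [← pow_succ]; congr 1; omega
    rw [← hQR]
    have hQ : (r:ℝ) ^ (d - 2) ≠ 0 := pow_ne_zero _ hr0
    field_simp
    ring
  · -- v equation
    have hdd_v : deriv (deriv v) r = deriv (fun s => -(s * W s)) r := hdd _ _ hderiv_v r hr
    rw [hdd_v, hSW.fun_neg.deriv, hderiv_v r hr]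
    simp only [w]
    field_simp
    ring
  · -- w equation
    have hdd_w : deriv (deriv w) r = deriv (fun s => -(s * M s)) r := hdd _ _ hderiv_w r hr
    rw [hdd_w, hSM.fun_neg.deriv, hderiv_w r hr]
    simp only [u]
    field_simp
    ring
end

section
/- (Qualitative properties of the stationary chemical concentration.) Let d ≥ 5 be an integer. Let φ : [0,∞) → ℝ be continuously differentiable with φ'(0) = 0 and twice continuously differentiable on (0,∞), and let w : [0,∞) → ℝ be continuously differentiable with w'(0) = 0, w(0) > 0, twice continuously differentiable on (0,∞), such that for all r > 0: φ''(r) + ((d−1)/r)·φ'(r) = −w(r) and w''(r) + ((d−1)/r)·w'(r) = −e^{φ(r)}, and such that w(r) → 0 as r → ∞. Then w(r) > 0 for all r ≥ 0, w'(r) < 0 for all r > 0 (so w is strictly decreasing on (0,∞)), and φ'(r) < 0 for all r > 0 (so φ and e^{φ} are strictly decreasing on (0,∞)). -/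
/-- Key lemma: if `g` is continuous on `[0,∞)`, `g 0 = 0`, differentiable on `(0,∞)`,
and satisfies `g' + (n/r) g = -h` with `h > 0`, then `g < 0` on `(0,∞)`. -/
lemma aux_neg (n : ℕ) (hn : 1 ≤ n) (g h : ℝ → ℝ)
    (hgc : ContinuousOn g (Set.Ici 0)) (hg0 : g 0 = 0)
    (hg2 : ∀ r ∈ Set.Ioi (0 : ℝ), DifferentiableAt ℝ g r)
    (heq : ∀ r ∈ Set.Ioi (0 : ℝ), deriv g r + (n : ℝ) / r * g r = -(h r))
    (hh : ∀ r ∈ Set.Ioi (0 : ℝ), 0 < h r) :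
    ∀ r ∈ Set.Ioi (0 : ℝ), g r < 0 := by
  set F : ℝ → ℝ := fun r => r ^ n * g r with hF
  have hFc : ContinuousOn F (Set.Ici 0) := (continuous_pow n).continuousOn.mul hgc
  have hanti : StrictAntiOn F (Set.Ici 0) := by
    apply strictAntiOn_of_deriv_neg (convex_Ici 0) hFc
    intro r hr
    rw [interior_Ici] at hr
    have hr0 : (0:ℝ) < r := hr
    have hrne : r ≠ 0 := ne_of_gt hr0
    have hd : HasDerivAt F ((n : ℝ) * r ^ (n - 1) * g r + r ^ n * deriv g r) r :=
      (hasDerivAt_pow n r).mul ((hg2 r hr).hasDerivAt)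
    rw [hd.deriv]
    have heqr := heq r hr
    have hder : deriv g r = -(h r) - (n : ℝ) / r * g r := by linarith
    have hpow : r ^ n = r ^ (n - 1) * r := by
      conv_lhs => rw [show n = (n - 1) + 1 by omega]
      rw [pow_succ]
    have key : (n : ℝ) * r ^ (n - 1) * g r + r ^ n * deriv g r = r ^ n * (-(h r)) := by
      rw [hder, hpow]; field_simp; ring
    rw [key]
    exact mul_neg_of_pos_of_neg (pow_pos hr0 n) (neg_neg_iff_pos.mpr (hh r hr))
  intro r hr
  have h1 : F r < F 0 := hanti Set.self_mem_Ici (Set.mem_Ici.mpr (le_of_lt hr)) hr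
  have h2 : F 0 = 0 := by simp [hF, hg0]
  rw [h2] at h1
  have hp : 0 < r ^ n := pow_pos hr n
  have h1' : r ^ n * g r < 0 := h1
  nlinarith

/-- Qualitative properties of the stationary chemical concentration
attached to a radial entire solution of the biharmonic Gel'fand problem:
`w > 0`, `w' < 0` and `φ' < 0`. -/
theorem stmt15 (d : ℕ) (hd : 5 ≤ d) (φ w : ℝ → ℝ)
    (hφ_diff : ∀ r ∈ Set.Ici (0 : ℝ), DifferentiableAt ℝ φ r)
    (hφ_contd : ContinuousOn (deriv φ) (Set.Ici 0))
    (hφ0 : deriv φ 0 = 0)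
    (hφ2 : ∀ r ∈ Set.Ioi (0 : ℝ), DifferentiableAt ℝ (deriv φ) r)
    (hφ2c : ContinuousOn (deriv (deriv φ)) (Set.Ioi 0))
    (hw_diff : ∀ r ∈ Set.Ici (0 : ℝ), DifferentiableAt ℝ w r)
    (hw_contd : ContinuousOn (deriv w) (Set.Ici 0))
    (hw0 : deriv w 0 = 0) (hwpos0 : 0 < w 0)
    (hw2 : ∀ r ∈ Set.Ioi (0 : ℝ), DifferentiableAt ℝ (deriv w) r)
    (hw2c : ContinuousOn (deriv (deriv w)) (Set.Ioi 0))
    (heq1 : ∀ r ∈ Set.Ioi (0 : ℝ),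
      deriv (deriv φ) r + ((d : ℝ) - 1) / r * deriv φ r = -(w r))
    (heq2 : ∀ r ∈ Set.Ioi (0 : ℝ),
      deriv (deriv w) r + ((d : ℝ) - 1) / r * deriv w r = -Real.exp (φ r))
    (hlim : Filter.Tendsto w Filter.atTop (nhds 0)) :
    (∀ r ∈ Set.Ici (0 : ℝ), 0 < w r) ∧
    (∀ r ∈ Set.Ioi (0 : ℝ), deriv w r < 0) ∧
    (∀ r ∈ Set.Ioi (0 : ℝ), deriv φ r < 0) := by
  have hcast : ((d - 1 : ℕ) : ℝ) = (d : ℝ) - 1 := by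
    rw [Nat.cast_sub (by omega)]; simp
  -- w' < 0 on (0,∞)
  have hw' : ∀ r ∈ Set.Ioi (0 : ℝ), deriv w r < 0 := by
    apply aux_neg (d - 1) (by omega) (deriv w) (fun r => Real.exp (φ r))
      hw_contd hw0 hw2
    · intro r hr; rw [hcast]; exact heq2 r hr
    · intro r hr; exact Real.exp_pos _
  -- w strictly decreasing on [0,∞)
  have hwc : ContinuousOn w (Set.Ici 0) :=
    fun r hr => (hw_diff r hr).continuousAt.continuousWithinAt
  have hwanti : StrictAntiOn w (Set.Ici 0) := by
    apply strictAntiOn_of_deriv_neg (convex_Ici 0) hwc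
    intro r hr; rw [interior_Ici] at hr; exact hw' r hr
  -- w > 0 on [0,∞)
  have hwpos : ∀ r ∈ Set.Ici (0 : ℝ), 0 < w r := by
    intro r hr
    have h0le : (0:ℝ) ≤ r := hr
    have hle : 0 ≤ w (r + 1) := by
      apply le_of_tendsto hlim
      filter_upwards [Filter.eventually_ge_atTop (r + 1)] with s hs
      rcases eq_or_lt_of_le hs with h | h
      · rw [← h]
      · exact le_of_lt (hwanti (Set.mem_Ici.mpr (by linarith)) (Set.mem_Ici.mpr (by linarith)) h)
    have : w (r + 1) < w r := hwanti hr (Set.mem_Ici.mpr (by linarith)) (by linarith)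
    linarith
  refine ⟨hwpos, hw', ?_⟩
  -- φ' < 0 on (0,∞)
  apply aux_neg (d - 1) (by omega) (deriv φ) w hφ_contd hφ0 hφ2
  · intro r hr; rw [hcast]; exact heq1 r hr
  · intro r hr; exact hwpos r (Set.mem_Ici.mpr (le_of_lt hr))
end

section
/- (Scaled stationary solutions are sub/supersolutions.) Let d ≥ 1 be an integer and let u, v, w : ℝ^d → ℝ be twice differentiable functions satisfying, at every x ∈ ℝ^d: Δu(x) = div(u∇v)(x), Δv(x) = −w(x), Δw(x) = −u(x), together with u(x) > 0 and div(u∇v)(x) < 0 for all x. Then: (i) for every λ > 1, −Δ(λu)(x) + div((λu)·∇(λv))(x) ≤ 0 and −Δ(λw)(x) − λ·u(x) ≤ 0 for all x; (ii) for all λ₀ > λ₁ ≥ 1, −Δ(λ₀u)(x) + div((λ₀u)·∇(λ₁v))(x) ≤ 0 and −Δ(λ₁w)(x) − λ₀·u(x) ≤ 0 for all x; (iii) for every λ ∈ (0,1], −Δ(λu)(x) + div((λu)·∇(λv))(x) ≥ 0 and −Δ(λw)(x) − λ·u(x) ≥ 0 for all x. -/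
/-- The Laplacian of a real-valued function on `ℝ^d`, as the sum of second
partial derivatives along the standard coordinate directions. -/
noncomputable def lap (d : ℕ) (f : EuclideanSpace ℝ (Fin d) → ℝ)
    (x : EuclideanSpace ℝ (Fin d)) : ℝ :=
  ∑ i : Fin d,
    fderiv ℝ (fun y => fderiv ℝ f y (EuclideanSpace.single i 1)) x (EuclideanSpace.single i 1)

/-- `div (u ∇v) = ⟨∇u, ∇v⟩ + u · Δv`. -/
noncomputable def divGrad (d : ℕ) (u v : EuclideanSpace ℝ (Fin d) → ℝ)
    (x : EuclideanSpace ℝ (Fin d)) : ℝ :=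
  (inner ℝ (gradient u x) (gradient v x) : ℝ) + u x * lap d v x

lemma lap_const_mul (d : ℕ) (f : EuclideanSpace ℝ (Fin d) → ℝ) (hf : ContDiff ℝ 2 f)
    (l : ℝ) (x : EuclideanSpace ℝ (Fin d)) :
    lap d (fun y => l * f y) x = l * lap d f x := by
  unfold lap
  rw [Finset.mul_sum]
  refine Finset.sum_congr rfl fun i _ => ?_
  have hdf : Differentiable ℝ f := hf.differentiable (by norm_num)
  have h1 : (fun y => fderiv ℝ (fun z => l * f z) y (EuclideanSpace.single i 1))
      = fun y => l * fderiv ℝ f y (EuclideanSpace.single i 1) := by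
    funext y
    rw [fderiv_const_mul (hdf y)]
    simp
  rw [h1]
  have hdf' : Differentiable ℝ (fun y => fderiv ℝ f y (EuclideanSpace.single i 1)) := by
    have h2 : ContDiff ℝ 1 (fderiv ℝ f) := hf.fderiv_right (by norm_num)
    exact (ContinuousLinearMap.apply ℝ ℝ (EuclideanSpace.single i 1)).differentiable.comp
      (h2.differentiable one_ne_zero)
  rw [fderiv_const_mul (hdf' x)]
  simp

lemma gradient_const_mul (d : ℕ) (f : EuclideanSpace ℝ (Fin d) → ℝ) (hf : Differentiable ℝ f)
    (l : ℝ) (x : EuclideanSpace ℝ (Fin d)) :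
    gradient (fun y => l * f y) x = l • gradient f x := by
  unfold gradient
  have : fderiv ℝ (fun y => l * f y) x = l • fderiv ℝ f x := by
    rw [fderiv_const_mul (hf x)]
  rw [this, map_smul]

lemma divGrad_const_mul (d : ℕ) (u v : EuclideanSpace ℝ (Fin d) → ℝ)
    (hu : ContDiff ℝ 2 u) (hv : ContDiff ℝ 2 v) (l₀ l₁ : ℝ)
    (x : EuclideanSpace ℝ (Fin d)) :
    divGrad d (fun y => l₀ * u y) (fun y => l₁ * v y) x = l₀ * l₁ * divGrad d u v x := by
  unfold divGrad
  rw [gradient_const_mul d u (hu.differentiable (by norm_num)) l₀ x,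
    gradient_const_mul d v (hv.differentiable (by norm_num)) l₁ x,
    lap_const_mul d v hv l₁ x, real_inner_smul_left, real_inner_smul_right]
  ring

/-- Scaled stationary solutions of the chemotaxis system are
supersolutions (for `λ > 1`, or `λ₀ > λ₁ ≥ 1`) resp. subsolutions (for `0 < λ ≤ 1`)
of the stationary problem. -/
theorem stmt16 (d : ℕ) (hd : 1 ≤ d) (u v w : EuclideanSpace ℝ (Fin d) → ℝ)
    (hu : ContDiff ℝ 2 u) (hv : ContDiff ℝ 2 v) (hw : ContDiff ℝ 2 w)
    (heq1 : ∀ x, lap d u x = divGrad d u v x)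
    (heq2 : ∀ x, lap d v x = -(w x))
    (heq3 : ∀ x, lap d w x = -(u x))
    (hpos : ∀ x, 0 < u x)
    (hneg : ∀ x, divGrad d u v x < 0) :
    (∀ l : ℝ, 1 < l → ∀ x,
      (-(lap d (fun y => l * u y) x)
          + divGrad d (fun y => l * u y) (fun y => l * v y) x ≤ 0) ∧
      (-(lap d (fun y => l * w y) x) - l * u x ≤ 0)) ∧
    (∀ l₀ l₁ : ℝ, 1 ≤ l₁ → l₁ < l₀ → ∀ x,
      (-(lap d (fun y => l₀ * u y) x)
          + divGrad d (fun y => l₀ * u y) (fun y => l₁ * v y) x ≤ 0) ∧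
      (-(lap d (fun y => l₁ * w y) x) - l₀ * u x ≤ 0)) ∧
    (∀ l : ℝ, l ∈ Set.Ioc (0 : ℝ) 1 → ∀ x,
      (0 ≤ -(lap d (fun y => l * u y) x)
          + divGrad d (fun y => l * u y) (fun y => l * v y) x) ∧
      (0 ≤ -(lap d (fun y => l * w y) x) - l * u x)) := by
  refine ⟨fun l hl x => ?_, fun l₀ l₁ hl₁ hl x => ?_, fun l hl x => ?_⟩
  · rw [lap_const_mul d u hu l x, lap_const_mul d w hw l x,
      divGrad_const_mul d u v hu hv l l x, heq1 x, heq3 x]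
    refine ⟨?_, by nlinarith [hpos x]⟩
    have h : -(l * divGrad d u v x) + l * l * divGrad d u v x
        = l * (l - 1) * divGrad d u v x := by ring
    rw [h]
    exact mul_nonpos_of_nonneg_of_nonpos (by nlinarith) (hneg x).le
  · rw [lap_const_mul d u hu l₀ x, lap_const_mul d w hw l₁ x,
      divGrad_const_mul d u v hu hv l₀ l₁ x, heq1 x, heq3 x]
    refine ⟨?_, by nlinarith [hpos x]⟩
    have h : -(l₀ * divGrad d u v x) + l₀ * l₁ * divGrad d u v x
        = l₀ * (l₁ - 1) * divGrad d u v x := by ring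
    rw [h]
    exact mul_nonpos_of_nonneg_of_nonpos (by nlinarith) (hneg x).le
  · obtain ⟨hl0, hl1⟩ := hl
    rw [lap_const_mul d u hu l x, lap_const_mul d w hw l x,
      divGrad_const_mul d u v hu hv l l x, heq1 x, heq3 x]
    refine ⟨?_, by nlinarith [hpos x]⟩
    have h : -(l * divGrad d u v x) + l * l * divGrad d u v x
        = l * (l - 1) * divGrad d u v x := by ring
    rw [h]
    have h2 : (0:ℝ) ≤ l * (1 - l) * (-(divGrad d u v x)) :=
      mul_nonneg (mul_nonneg hl0.le (by linarith)) (by linarith [hneg x])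
    nlinarith [h2]
end

section
/- (Asymptotic upper bounds for radial stationary solutions with logarithmically bounded potential.) Let d ≥ 5 be an integer and r₀ ≥ 0. Let v, w : (r₀,∞) → ℝ be twice continuously differentiable and u : (r₀,∞) → ℝ continuous, with u(r) ≥ 0 and w(r) ≥ 0 for all r > r₀, and suppose for all r > r₀: v''(r) + ((d−1)/r)·v'(r) = −w(r) and w''(r) + ((d−1)/r)·w'(r) = −u(r). If liminf_{r→∞} (v(r) + 4·log r) > −∞, then liminf_{r→∞} r⁴·u(r) ≤ 8(d−4)(d−2) and liminf_{r→∞} r²·w(r) ≤ 4(d−2). -/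
open Filter Set

private lemma myAnti_s17 {f f' : ℝ → ℝ} {R : ℝ}
    (hd : ∀ x ∈ Set.Ici R, HasDerivAt f (f' x) x)
    (h' : ∀ x ∈ Set.Ici R, f' x ≤ 0) : AntitoneOn f (Set.Ici R) :=
  antitoneOn_of_deriv_nonpos (convex_Ici R)
    (fun x hx => (hd x hx).continuousAt.continuousWithinAt)
    (fun x hx => ((hd x (interior_subset hx)).differentiableAt).differentiableWithinAt)
    (fun x hx => by
      rw [(hd x (interior_subset hx)).deriv]; exact h' x (interior_subset hx))

private lemma keyW (k : ℕ) (r₀ : ℝ) (hr₀ : 0 ≤ r₀) (v w : ℝ → ℝ)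
    (hv_diff : ∀ r ∈ Set.Ioi r₀, DifferentiableAt ℝ v r ∧ DifferentiableAt ℝ (deriv v) r)
    (heq1 : ∀ r ∈ Set.Ioi r₀,
      deriv (deriv v) r + ((k : ℝ) + 4) / r * deriv v r = -(w r))
    (a R : ℝ) (ha : 4 * ((k : ℝ) + 3) < a) (hr₀R : r₀ < R) (hR1 : 1 ≤ R)
    (hw : ∀ r, R ≤ r → a / r ^ 2 ≤ w r) :
    Filter.Tendsto (fun r => v r + 4 * Real.log r) Filter.atTop Filter.atBot := by
  have hk3 : (0:ℝ) < (k:ℝ) + 3 := by positivity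
  set m : ℝ := a / ((k:ℝ) + 3) with hm_def
  have hm : 4 < m := (lt_div_iff₀ hk3).2 (by linarith)
  have hma : m * ((k:ℝ) + 3) = a := div_mul_cancel₀ a hk3.ne'
  -- basic facts for x ∈ Ici R
  have hfacts : ∀ x : ℝ, R ≤ x → 0 < x ∧ r₀ < x ∧ 1 ≤ x := fun x hx =>
    ⟨lt_of_lt_of_le (by linarith) hx, lt_of_lt_of_le hr₀R hx, le_trans hR1 hx⟩
  set F₁ : ℝ → ℝ := fun r => r ^ (k+4) * deriv v r + m * r ^ (k+3) with hF₁def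
  have hF₁ : ∀ x ∈ Set.Ici R, HasDerivAt F₁
      (((k:ℝ)+4) * x ^ (k+3) * deriv v x + x ^ (k+4) * deriv (deriv v) x
        + m * (((k:ℝ)+3) * x ^ (k+2))) x := by
    intro x hx
    obtain ⟨hx0, hxr, hx1⟩ := hfacts x hx
    have h1 := (hasDerivAt_pow (k+4) x).mul ((hv_diff x hxr).2.hasDerivAt)
    have h2 := ((hasDerivAt_pow (k+3) x)).const_mul m
    have := h1.add h2
    refine this.congr_deriv ?_
    push_cast
    ring_nf
  have hF₁le : ∀ x ∈ Set.Ici R,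
      ((k:ℝ)+4) * x ^ (k+3) * deriv v x + x ^ (k+4) * deriv (deriv v) x
        + m * (((k:ℝ)+3) * x ^ (k+2)) ≤ 0 := by
    intro x hx
    obtain ⟨hx0, hxr, hx1⟩ := hfacts x hx
    have he := heq1 x hxr
    have hwx := hw x hx
    have hx0' : x ≠ 0 := hx0.ne'
    have he' : deriv (deriv v) x = -(w x) - ((k:ℝ)+4) / x * deriv v x := by linarith
    rw [he', show m * (((k:ℝ)+3) * x ^ (k+2)) = a * x ^ (k+2) from by rw [← hma]; ring]
    have key : ((k:ℝ)+4) * x ^ (k+3) * deriv v x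
        + x ^ (k+4) * (-(w x) - ((k:ℝ)+4) / x * deriv v x) + a * x ^ (k+2)
        = -(x ^ (k+2) * (x ^ 2 * w x - a)) := by
      field_simp
      ring
    rw [key]
    have hxw : a ≤ x ^ 2 * w x := by
      have := (div_le_iff₀ (by positivity : (0:ℝ) < x ^ 2)).1 hwx
      linarith [this]
    have : (0:ℝ) ≤ x ^ (k+2) * (x ^ 2 * w x - a) :=
      mul_nonneg (by positivity) (by linarith)
    linarith
  have hanti₁ := myAnti_s17 hF₁ hF₁le
  set A : ℝ := F₁ R with hA
  have hv' : ∀ x : ℝ, R ≤ x → deriv v x ≤ A / x ^ (k+4) - m / x := by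
    intro x hx
    obtain ⟨hx0, hxr, hx1⟩ := hfacts x hx
    have h := hanti₁ (self_mem_Ici) hx hx
    have hx4 : (0:ℝ) < x ^ (k+4) := by positivity
    have hco : A / x ^ (k+4) - m / x = (A - m * x ^ (k+3)) / x ^ (k+4) := by
      field_simp
      ring
    rw [hco, le_div_iff₀ hx4]
    have : x ^ (k+4) * deriv v x + m * x ^ (k+3) ≤ A := h
    nlinarith [this]
  set B : ℝ := A / ((k:ℝ)+3) with hB
  set G₂ : ℝ → ℝ := fun r => v r + B * (r ^ (k+3))⁻¹ + m * Real.log r with hG₂def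
  have hG₂ : ∀ x ∈ Set.Ici R, HasDerivAt G₂
      (deriv v x + B * (-(((k:ℝ)+3) * x ^ (k+2)) / (x ^ (k+3)) ^ 2) + m * x⁻¹) x := by
    intro x hx
    obtain ⟨hx0, hxr, hx1⟩ := hfacts x hx
    have h1 := (hv_diff x hxr).1.hasDerivAt
    have h2 := (((hasDerivAt_pow (k+3) x)).inv (pow_ne_zero _ hx0.ne')).const_mul B
    have h3 := (Real.hasDerivAt_log hx0.ne').const_mul m
    have := (h1.add h2).add h3
    refine this.congr_deriv ?_
    push_cast
    ring_nf
  have hG₂le : ∀ x ∈ Set.Ici R,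
      deriv v x + B * (-(((k:ℝ)+3) * x ^ (k+2)) / (x ^ (k+3)) ^ 2) + m * x⁻¹ ≤ 0 := by
    intro x hx
    obtain ⟨hx0, hxr, hx1⟩ := hfacts x hx
    have hid : B * (-(((k:ℝ)+3) * x ^ (k+2)) / (x ^ (k+3)) ^ 2) = -(A / x ^ (k+4)) := by
      rw [hB]
      field_simp
      ring
    rw [hid]
    have h := hv' x hx
    have e1 : m / x = m * x⁻¹ := div_eq_mul_inv m x
    linarith
  have hanti₂ := myAnti_s17 hG₂ hG₂le
  set C : ℝ := G₂ R with hC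
  have hbound : ∀ x : ℝ, R ≤ x → v x + 4 * Real.log x ≤ C + |B| - (m - 4) * Real.log x := by
    intro x hx
    obtain ⟨hx0, hxr, hx1⟩ := hfacts x hx
    have h := hanti₂ (self_mem_Ici) hx hx
    have hGx : v x + B * (x ^ (k+3))⁻¹ + m * Real.log x ≤ C := h
    have hp : (1:ℝ) ≤ x ^ (k+3) := one_le_pow₀ hx1
    have habs : -(B * (x ^ (k+3))⁻¹) ≤ |B| := by
      have h1 : (x ^ (k+3))⁻¹ ≤ 1 := inv_le_one_of_one_le₀ hp
      have h2 : (0:ℝ) ≤ (x ^ (k+3))⁻¹ := by positivity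
      have := neg_le_abs (B * (x ^ (k+3))⁻¹)
      have h3 : |B * (x ^ (k+3))⁻¹| ≤ |B| := by
        rw [abs_mul, abs_of_nonneg h2]
        nlinarith [abs_nonneg B]
      linarith
    calc v x + 4 * Real.log x
        ≤ C - B * (x ^ (k+3))⁻¹ - m * Real.log x + 4 * Real.log x := by linarith
      _ = C - B * (x ^ (k+3))⁻¹ - (m - 4) * Real.log x := by ring
      _ ≤ C + |B| - (m - 4) * Real.log x := by linarith
  have hlog : Tendsto (fun x : ℝ => C + |B| - (m - 4) * Real.log x) atTop atBot := by
    have h1 : Tendsto (fun x : ℝ => (m - 4) * Real.log x) atTop atTop :=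
      Real.tendsto_log_atTop.const_mul_atTop (by linarith)
    have h2 : Tendsto (fun x : ℝ => -((m - 4) * Real.log x)) atTop atBot :=
      tendsto_neg_atTop_atBot.comp h1
    have := tendsto_atBot_add_const_left atTop (C + |B|) h2
    simpa [sub_eq_add_neg] using this
  refine tendsto_atBot_mono' atTop ?_ hlog
  filter_upwards [eventually_ge_atTop R] with x hx using hbound x hx

set_option maxHeartbeats 1000000 in
private lemma keyU (k : ℕ) (r₀ : ℝ) (hr₀ : 0 ≤ r₀) (u w : ℝ → ℝ)
    (hw_diff : ∀ r ∈ Set.Ioi r₀, DifferentiableAt ℝ w r ∧ DifferentiableAt ℝ (deriv w) r)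
    (heq2 : ∀ r ∈ Set.Ioi r₀,
      deriv (deriv w) r + ((k : ℝ) + 4) / r * deriv w r = -(u r))
    (hwpos : ∀ r ∈ Set.Ioi r₀, 0 ≤ w r)
    (c R : ℝ) (hc : 8 * ((k : ℝ) + 1) * ((k : ℝ) + 3) < c) (hr₀R : r₀ < R) (hR1 : 1 ≤ R)
    (hu : ∀ r, R ≤ r → c / r ^ 4 ≤ u r) :
    ∃ a r₁ : ℝ, 4 * ((k : ℝ) + 3) < a ∧ r₀ < r₁ ∧ 1 ≤ r₁ ∧
      ∀ r, r₁ ≤ r → a / r ^ 2 ≤ w r := by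
  have hk1 : (0:ℝ) < (k:ℝ) + 1 := by positivity
  set c₀ : ℝ := 8 * ((k:ℝ)+1) * ((k:ℝ)+3) with hc₀
  set a : ℝ := (c + c₀) / (4 * ((k:ℝ)+1)) with ha_def
  have ha : 4 * ((k:ℝ)+3) < a := by
    rw [ha_def, lt_div_iff₀ (by positivity)]
    nlinarith [hc, hk1]
  have h2a : 2 * a * ((k:ℝ)+1) = (c + c₀) / 2 := by
    rw [ha_def]; field_simp; ring
  set δ : ℝ := (c - c₀) / 2 with hδ_def
  have hδ0 : 0 < δ := by rw [hδ_def]; linarith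
  have hfacts : ∀ x : ℝ, R ≤ x → 0 < x ∧ r₀ < x ∧ 1 ≤ x := fun x hx =>
    ⟨lt_of_lt_of_le (by linarith) hx, lt_of_lt_of_le hr₀R hx, le_trans hR1 hx⟩
  set Q : ℝ → ℝ := fun r => r ^ (k+4) * deriv w r + (2*a) * r ^ (k+1) with hQdef
  have hQ : ∀ x ∈ Set.Ici R, HasDerivAt Q
      (((k:ℝ)+4) * x ^ (k+3) * deriv w x + x ^ (k+4) * deriv (deriv w) x
        + (2*a) * (((k:ℝ)+1) * x ^ k)) x := by
    intro x hx
    obtain ⟨hx0, hxr, hx1⟩ := hfacts x hx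
    have h1 := (hasDerivAt_pow (k+4) x).mul ((hw_diff x hxr).2.hasDerivAt)
    have h2 := ((hasDerivAt_pow (k+1) x)).const_mul (2*a)
    have := h1.add h2
    refine this.congr_deriv ?_
    push_cast
    ring_nf
  have hQle : ∀ x ∈ Set.Ici R,
      ((k:ℝ)+4) * x ^ (k+3) * deriv w x + x ^ (k+4) * deriv (deriv w) x
        + (2*a) * (((k:ℝ)+1) * x ^ k) ≤ -(δ * x ^ k) := by
    intro x hx
    obtain ⟨hx0, hxr, hx1⟩ := hfacts x hx
    have he := heq2 x hxr
    have hux := hu x hx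
    have hx0' : x ≠ 0 := hx0.ne'
    have he' : deriv (deriv w) x = -(u x) - ((k:ℝ)+4) / x * deriv w x := by linarith
    rw [he']
    have key : ((k:ℝ)+4) * x ^ (k+3) * deriv w x
        + x ^ (k+4) * (-(u x) - ((k:ℝ)+4) / x * deriv w x) + (2*a) * (((k:ℝ)+1) * x ^ k)
        = -(x ^ k * (x ^ 4 * u x - 2 * a * ((k:ℝ)+1))) := by
      field_simp
      ring
    rw [key]
    have hxu : c ≤ x ^ 4 * u x := by
      have := (div_le_iff₀ (by positivity : (0:ℝ) < x ^ 4)).1 hux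
      linarith [this]
    have hδc : 2 * a * ((k:ℝ)+1) = c - δ := by rw [h2a, hδ_def]; ring
    have h1 : δ * x ^ k ≤ x ^ k * (x ^ 4 * u x - 2 * a * ((k:ℝ)+1)) := by
      rw [hδc]
      have hxk : (0:ℝ) ≤ x ^ k := by positivity
      nlinarith [hxu, hxk]
    linarith
  have hQanti : AntitoneOn Q (Set.Ici R) := by
    apply myAnti_s17 hQ
    intro x hx
    obtain ⟨hx0, _, _⟩ := hfacts x hx
    have := hQle x hx
    have : (0:ℝ) ≤ δ * x ^ k := by positivity
    linarith [hQle x hx]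
  -- second antitone function to force Q negative eventually
  set F₃ : ℝ → ℝ := fun r => Q r + (δ / ((k:ℝ)+1)) * r ^ (k+1) with hF₃def
  have hF₃ : ∀ x ∈ Set.Ici R, HasDerivAt F₃
      ((((k:ℝ)+4) * x ^ (k+3) * deriv w x + x ^ (k+4) * deriv (deriv w) x
        + (2*a) * (((k:ℝ)+1) * x ^ k)) + (δ / ((k:ℝ)+1)) * (((k:ℝ)+1) * x ^ k)) x := by
    intro x hx
    have h1 := hQ x hx
    have h2 := ((hasDerivAt_pow (k+1) x)).const_mul (δ / ((k:ℝ)+1))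
    have := h1.add h2
    refine this.congr_deriv ?_
    push_cast
    ring_nf
  have hF₃le : ∀ x ∈ Set.Ici R,
      (((k:ℝ)+4) * x ^ (k+3) * deriv w x + x ^ (k+4) * deriv (deriv w) x
        + (2*a) * (((k:ℝ)+1) * x ^ k)) + (δ / ((k:ℝ)+1)) * (((k:ℝ)+1) * x ^ k) ≤ 0 := by
    intro x hx
    have h1 := hQle x hx
    have h2 : (δ / ((k:ℝ)+1)) * (((k:ℝ)+1) * x ^ k) = δ * x ^ k := by
      field_simp
    linarith [h1, h2.le, h2.ge]
  have hF₃anti := myAnti_s17 hF₃ hF₃le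
  -- choose r₁ with Q r₁ < 0
  have hpow : Filter.Tendsto (fun x : ℝ => x ^ (k+1)) atTop atTop :=
    tendsto_pow_atTop (by omega)
  obtain ⟨r₁, hr₁R, hr₁big⟩ : ∃ r₁, R ≤ r₁ ∧
      F₃ R * (((k:ℝ)+1) / δ) < r₁ ^ (k+1) := by
    have := (eventually_ge_atTop R).and (hpow.eventually_gt_atTop (F₃ R * (((k:ℝ)+1) / δ)))
    obtain ⟨r₁, h1, h2⟩ := this.exists
    exact ⟨r₁, h1, h2⟩
  have hr₁facts := hfacts r₁ hr₁R
  have hQr₁ : Q r₁ < 0 := by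
    have h := hF₃anti (self_mem_Ici) hr₁R hr₁R
    have hF₃x : Q r₁ + (δ / ((k:ℝ)+1)) * r₁ ^ (k+1) ≤ F₃ R := h
    have hkd : (0:ℝ) < δ / ((k:ℝ)+1) := by positivity
    have : F₃ R < (δ / ((k:ℝ)+1)) * r₁ ^ (k+1) := by
      rw [show F₃ R = (δ / ((k:ℝ)+1)) * (F₃ R * (((k:ℝ)+1) / δ)) from by field_simp]
      exact mul_lt_mul_of_pos_left hr₁big hkd
    have h5 : Q r₁ + δ / ((k:ℝ)+1) * r₁ ^ (k+1)
        < 0 + δ / ((k:ℝ)+1) * r₁ ^ (k+1) := by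
      rw [zero_add]; exact lt_of_le_of_lt hF₃x this
    exact lt_of_add_lt_add_right h5
  -- on [r₁, ∞), deriv of (w r - a (r²)⁻¹) is negative
  set h : ℝ → ℝ := fun r => w r - a * (r ^ 2)⁻¹ with hhdef
  have hh : ∀ x ∈ Set.Ici r₁, HasDerivAt h
      (deriv w x - a * (-(2 * x ^ 1) / (x ^ 2) ^ 2)) x := by
    intro x hx
    have hxR : R ≤ x := le_trans hr₁R hx
    obtain ⟨hx0, hxr, hx1⟩ := hfacts x hxR
    have h1 := (hw_diff x hxr).1.hasDerivAt
    have h2 := (((hasDerivAt_pow 2 x)).inv (pow_ne_zero _ hx0.ne')).const_mul a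
    have := h1.sub h2
    refine this.congr_deriv ?_
    norm_num
  have hhle : ∀ x ∈ Set.Ici r₁, deriv w x - a * (-(2 * x ^ 1) / (x ^ 2) ^ 2) ≤ 0 := by
    intro x hx
    have hxR : R ≤ x := le_trans hr₁R hx
    obtain ⟨hx0, hxr, hx1⟩ := hfacts x hxR
    have hQx : Q x ≤ Q r₁ := hQanti (by exact hr₁R) hxR hx
    have hQx0 : Q x < 0 := lt_of_le_of_lt hQx hQr₁
    have hQx' : x ^ (k+4) * deriv w x + (2*a) * x ^ (k+1) < 0 := hQx0
    have hid : deriv w x - a * (-(2 * x ^ 1) / (x ^ 2) ^ 2)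
        = (x ^ (k+4) * deriv w x + (2*a) * x ^ (k+1)) / x ^ (k+4) := by
      field_simp
      ring
    rw [hid]
    exact div_nonpos_of_nonpos_of_nonneg hQx'.le (by positivity)
  have hhanti := myAnti_s17 hh hhle
  refine ⟨a, r₁, ha, hr₁facts.2.1, hr₁facts.2.2, ?_⟩
  intro r hr
  have hrR : R ≤ r := le_trans hr₁R hr
  obtain ⟨hr0, hrr₀, hr1⟩ := hfacts r hrR
  have hlim : Filter.Tendsto (fun s : ℝ => -(a * (s ^ 2)⁻¹)) atTop (nhds 0) := by
    have h1 : Filter.Tendsto (fun s : ℝ => (s ^ 2)⁻¹) atTop (nhds 0) :=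
      (tendsto_pow_atTop (by norm_num : (2:ℕ) ≠ 0)).inv_tendsto_atTop
    have := (h1.const_mul a).neg
    simpa using this
  have hkey : 0 ≤ w r - a * (r ^ 2)⁻¹ := by
    apply le_of_tendsto hlim
    filter_upwards [eventually_ge_atTop r] with s hs
    have hs1 : r₁ ≤ s := le_trans hr hs
    have hmono : h s ≤ h r := hhanti hr hs1 hs
    have hws : 0 ≤ w s := hwpos s (lt_of_lt_of_le hrr₀ hs)
    have : w s - a * (s ^ 2)⁻¹ ≤ w r - a * (r ^ 2)⁻¹ := hmono
    linarith
  rw [div_eq_mul_inv]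
  linarith

/-- Asymptotic upper bounds for radial stationary solutions whose
potential satisfies `liminf (v(r) + 4 log r) > −∞`:
`liminf r⁴u(r) ≤ 8(d−4)(d−2)` and `liminf r²w(r) ≤ 4(d−2)`. -/
theorem stmt17 (d : ℕ) (hd : 5 ≤ d) (r₀ : ℝ) (hr₀ : 0 ≤ r₀) (u v w : ℝ → ℝ)
    (hv_diff : ∀ r ∈ Set.Ioi r₀, DifferentiableAt ℝ v r ∧ DifferentiableAt ℝ (deriv v) r)
    (hv_cont : ContinuousOn (deriv (deriv v)) (Set.Ioi r₀))
    (hw_diff : ∀ r ∈ Set.Ioi r₀, DifferentiableAt ℝ w r ∧ DifferentiableAt ℝ (deriv w) r)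
    (hw_cont : ContinuousOn (deriv (deriv w)) (Set.Ioi r₀))
    (hu_cont : ContinuousOn u (Set.Ioi r₀))
    (h_nonneg : ∀ r ∈ Set.Ioi r₀, 0 ≤ u r ∧ 0 ≤ w r)
    (heq1 : ∀ r ∈ Set.Ioi r₀,
      deriv (deriv v) r + ((d : ℝ) - 1) / r * deriv v r = -(w r))
    (heq2 : ∀ r ∈ Set.Ioi r₀,
      deriv (deriv w) r + ((d : ℝ) - 1) / r * deriv w r = -(u r))
    (hliminf : (⊥ : EReal) <
      Filter.liminf (fun r : ℝ => ((v r + 4 * Real.log r : ℝ) : EReal)) Filter.atTop) :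
    Filter.liminf (fun r : ℝ => ((r ^ 4 * u r : ℝ) : EReal)) Filter.atTop
        ≤ ((8 * ((d : ℝ) - 4) * ((d : ℝ) - 2) : ℝ) : EReal) ∧
    Filter.liminf (fun r : ℝ => ((r ^ 2 * w r : ℝ) : EReal)) Filter.atTop
        ≤ ((4 * ((d : ℝ) - 2) : ℝ) : EReal) := by
  obtain ⟨k, rfl⟩ : ∃ k, d = k + 5 := ⟨d - 5, by omega⟩
  have hcast : ((k + 5 : ℕ) : ℝ) - 1 = (k : ℝ) + 4 := by push_cast; ring
  have heq1' : ∀ r ∈ Set.Ioi r₀,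
      deriv (deriv v) r + ((k : ℝ) + 4) / r * deriv v r = -(w r) := by
    intro r hrr; rw [← hcast]; exact heq1 r hrr
  have heq2' : ∀ r ∈ Set.Ioi r₀,
      deriv (deriv w) r + ((k : ℝ) + 4) / r * deriv w r = -(u r) := by
    intro r hrr; rw [← hcast]; exact heq2 r hrr
  have hwpos : ∀ r ∈ Set.Ioi r₀, 0 ≤ w r := fun r hrr => (h_nonneg r hrr).2
  -- the core contradiction machine
  have contra : ∀ a R : ℝ, 4 * ((k : ℝ) + 3) < a → r₀ < R → 1 ≤ R →
      (∀ r, R ≤ r → a / r ^ 2 ≤ w r) → False := by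
    intro a R h1 h2 h3 h4
    have htd := keyW k r₀ hr₀ v w hv_diff heq1' a R h1 h2 h3 h4
    obtain ⟨z, hz1, hz2⟩ := EReal.exists_between_coe_real hliminf
    have hev : ∀ᶠ r in Filter.atTop, v r + 4 * Real.log r ≤ z - 1 :=
      htd.eventually (Filter.eventually_le_atBot (z - 1))
    have hle : Filter.liminf (fun r : ℝ => ((v r + 4 * Real.log r : ℝ) : EReal))
        Filter.atTop ≤ ((z - 1 : ℝ) : EReal) := by
      refine Filter.liminf_le_of_frequently_le ?_ ?_
      · apply Filter.Eventually.frequently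
        filter_upwards [hev] with r hr
        exact_mod_cast EReal.coe_le_coe_iff.2 hr
      · exact Filter.isBoundedUnder_of ⟨⊥, fun _ => bot_le⟩
    have : ((z : ℝ) : EReal) ≤ ((z - 1 : ℝ) : EReal) := le_trans hz2.le hle
    have := EReal.coe_le_coe_iff.1 this
    linarith
  constructor
  · -- liminf r⁴ u ≤ 8(d−4)(d−2)
    have hcast2 : (8 * (((k + 5 : ℕ) : ℝ) - 4) * (((k + 5 : ℕ) : ℝ) - 2) : ℝ)
        = 8 * ((k : ℝ) + 1) * ((k : ℝ) + 3) := by push_cast; ring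
    rw [hcast2]
    by_contra hcon
    push_neg at hcon
    obtain ⟨c, hc1, hc2⟩ := EReal.exists_between_coe_real hcon
    have hc1' : 8 * ((k : ℝ) + 1) * ((k : ℝ) + 3) < c := EReal.coe_lt_coe_iff.1 hc1
    have hev := Filter.eventually_lt_of_lt_liminf hc2
    obtain ⟨R₁, hR₁⟩ := Filter.eventually_atTop.1 hev
    set R : ℝ := max R₁ (max (r₀ + 1) 1) with hRdef
    have hRr₀ : r₀ < R := lt_of_lt_of_le (by linarith) (le_trans (le_max_left _ _) (le_max_right _ _))
    have hR1 : 1 ≤ R := le_trans (le_max_right _ _) (le_max_right _ _)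
    have hu' : ∀ r, R ≤ r → c / r ^ 4 ≤ u r := by
      intro r hrR
      have hr0 : 0 < r := lt_of_lt_of_le (by linarith) hrR
      have h := hR₁ r (le_trans (le_max_left _ _) hrR)
      have h' : c < r ^ 4 * u r := by exact_mod_cast h
      rw [div_le_iff₀ (by positivity)]
      nlinarith [h']
    obtain ⟨a, r₁, ha, hr₁, hr₁1, hw'⟩ :=
      keyU k r₀ hr₀ u w hw_diff heq2' hwpos c R hc1' hRr₀ hR1 hu'
    exact absurd (contra a r₁ ha hr₁ hr₁1 hw') (not_false)
  · -- liminf r² w ≤ 4(d−2)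
    have hcast3 : (4 * (((k + 5 : ℕ) : ℝ) - 2) : ℝ) = 4 * ((k : ℝ) + 3) := by
      push_cast; ring
    rw [hcast3]
    by_contra hcon
    push_neg at hcon
    obtain ⟨b, hb1, hb2⟩ := EReal.exists_between_coe_real hcon
    have hb1' : 4 * ((k : ℝ) + 3) < b := EReal.coe_lt_coe_iff.1 hb1
    have hev := Filter.eventually_lt_of_lt_liminf hb2
    obtain ⟨R₁, hR₁⟩ := Filter.eventually_atTop.1 hev
    set R : ℝ := max R₁ (max (r₀ + 1) 1) with hRdef
    have hRr₀ : r₀ < R := lt_of_lt_of_le (by linarith) (le_trans (le_max_left _ _) (le_max_right _ _))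
    have hR1 : 1 ≤ R := le_trans (le_max_right _ _) (le_max_right _ _)
    have hw' : ∀ r, R ≤ r → b / r ^ 2 ≤ w r := by
      intro r hrR
      have hr0 : 0 < r := lt_of_lt_of_le (by linarith) hrR
      have h := hR₁ r (le_trans (le_max_left _ _) hrR)
      have h' : b < r ^ 2 * w r := by exact_mod_cast h
      rw [div_le_iff₀ (by positivity)]
      nlinarith [h']
    exact absurd (contra b R hb1' hRr₀ hR1 hw') (not_false)
end

section
/- (Critical Morrey values of the regular stationary profile in high dimensions.) Let d ≥ 5 be an integer and let φ : [0,∞) → ℝ be continuously differentiable with φ'(0) = 0 and twice continuously differentiable on (0,∞), and write Δφ(r) := φ''(r) + ((d−1)/r)·φ'(r). Assume: (a) φ(r) + 4·log r < log(8(d−4)(d−2)) for all r > 0; (b) φ(r) + 4·log r → log(8(d−4)(d−2)) as r → ∞; (c) −Δφ(r) < 4(d−2)/r² for all r > 0; (d) r²·Δφ(r) → −4(d−2) as r → ∞. Then sup_{R>0} R^{4−d}·∫_0^R r^{d−1}·e^{φ(r)} dr = 8(d−2) and sup_{R>0} R^{2−d}·∫_0^R r^{d−1}·(−Δφ(r))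 dr = 4. -/
/-- The radial Laplacian `Δf(r) = f''(r) + ((d−1)/r) f'(r)`. -/
noncomputable def lapR (d : ℕ) (f : ℝ → ℝ) (r : ℝ) : ℝ :=
  deriv (deriv f) r + ((d : ℝ) - 1) / r * deriv f r


open MeasureTheory Filter Set

private lemma pow_mul_rpow_neg' {R : ℝ} (hR : 0 < R) (k : ℕ) :
    R ^ (-((k : ℝ) + 1)) * R ^ (k + 1) = 1 := by
  rw [← Real.rpow_natCast R (k + 1), ← Real.rpow_add hR]
  have h : -((k : ℝ) + 1) + ((k + 1 : ℕ) : ℝ) = 0 := by push_cast; ring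
  rw [h, Real.rpow_zero]

lemma morreyA (k : ℕ) (c : ℝ) (f : ℝ → ℝ) {R : ℝ} (hR : 0 < R)
    (hint : IntervalIntegrable f volume 0 R)
    (hle : ∀ r, 0 ≤ r → f r ≤ c * r ^ k) :
    R ^ (-((k : ℝ) + 1)) * ∫ r in (0:ℝ)..R, f r ≤ c / ((k : ℝ) + 1) := by
  have h1 : (∫ r in (0:ℝ)..R, f r) ≤ ∫ r in (0:ℝ)..R, c * r ^ k := by
    apply intervalIntegral.integral_mono_on hR.le hint
    · exact Continuous.intervalIntegrable (by continuity) 0 R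
    · intro x hx; exact hle x hx.1
  have h2 : (∫ r in (0:ℝ)..R, c * r ^ k) = c * (R ^ (k + 1) / ((k : ℝ) + 1)) := by
    rw [intervalIntegral.integral_const_mul, integral_pow]
    try push_cast
    try ring
  have hp : 0 < R ^ (-((k : ℝ) + 1)) := Real.rpow_pos_of_pos hR _
  have h3 := pow_mul_rpow_neg' hR k
  calc R ^ (-((k : ℝ) + 1)) * ∫ r in (0:ℝ)..R, f r
      ≤ R ^ (-((k : ℝ) + 1)) * (c * (R ^ (k + 1) / ((k : ℝ) + 1))) := by
        rw [← h2]; exact mul_le_mul_of_nonneg_left h1 hp.le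
    _ = (R ^ (-((k : ℝ) + 1)) * R ^ (k + 1)) * (c / ((k : ℝ) + 1)) := by ring
    _ = c / ((k : ℝ) + 1) := by rw [h3, one_mul]

lemma morreyB (k : ℕ) (c : ℝ) (f : ℝ → ℝ)
    (hint : ∀ R : ℝ, 0 < R → IntervalIntegrable f volume 0 R)
    (hlow : ∀ ε : ℝ, 0 < ε → ∃ M : ℝ, 0 < M ∧ ∀ r, M ≤ r → (c - ε) * r ^ k ≤ f r)
    (w : ℝ) (hw : w < c / ((k : ℝ) + 1)) :
    ∃ R : ℝ, 0 < R ∧ w < R ^ (-((k : ℝ) + 1)) * ∫ r in (0:ℝ)..R, f r := by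
  have hk1 : (0:ℝ) < (k : ℝ) + 1 := by positivity
  set ε := ((k : ℝ) + 1) * (c / ((k : ℝ) + 1) - w) / 2 with hε
  have hw' : 0 < c / ((k : ℝ) + 1) - w := by linarith
  have hε0 : 0 < ε := by rw [hε]; positivity
  obtain ⟨M, hM, hMlow⟩ := hlow ε hε0
  set A := ∫ r in (0:ℝ)..M, f r with hA
  have hεval : (c - ε) / ((k : ℝ) + 1) = (c / ((k : ℝ) + 1) + w) / 2 := by
    rw [hε]; field_simp; ring
  have hgt : w < A * 0 + (c - ε) / ((k : ℝ) + 1) - (c - ε) * M ^ (k + 1) / ((k : ℝ) + 1) * 0 := by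
    rw [mul_zero, mul_zero, zero_add, sub_zero, hεval]; linarith
  have hlim : Tendsto (fun R : ℝ => A * R ^ (-((k : ℝ) + 1)) + (c - ε) / ((k : ℝ) + 1)
      - (c - ε) * M ^ (k + 1) / ((k : ℝ) + 1) * R ^ (-((k : ℝ) + 1))) atTop
      (nhds (A * 0 + (c - ε) / ((k : ℝ) + 1) - (c - ε) * M ^ (k + 1) / ((k : ℝ) + 1) * 0)) := by
    have h0 : Tendsto (fun R : ℝ => R ^ (-((k : ℝ) + 1))) atTop (nhds 0) :=
      tendsto_rpow_neg_atTop (by positivity)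
    exact ((h0.const_mul A).add tendsto_const_nhds).sub (h0.const_mul _)
  have hev := (hlim.eventually (lt_mem_nhds hgt)).and (eventually_ge_atTop (M + 1))
  obtain ⟨R, hhR, hRM1⟩ := hev.exists
  have hMR : M ≤ R := by linarith
  have hR0 : 0 < R := lt_of_lt_of_le hM hMR
  refine ⟨R, hR0, ?_⟩
  have hi1 := hint M hM
  have hi2 := hint R hR0
  have hi3 : IntervalIntegrable f volume M R := hi1.symm.trans hi2
  have hsplit : (∫ r in (0:ℝ)..R, f r) = A + ∫ r in M..R, f r :=
    (intervalIntegral.integral_add_adjacent_intervals hi1 hi3).symm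
  have htail : (∫ r in M..R, (c - ε) * r ^ k) ≤ ∫ r in M..R, f r := by
    apply intervalIntegral.integral_mono_on hMR
      (Continuous.intervalIntegrable (by continuity) M R) hi3
    intro x hx; exact hMlow x hx.1
  have htailval : (∫ r in M..R, (c - ε) * r ^ k)
      = (c - ε) * ((R ^ (k + 1) - M ^ (k + 1)) / ((k : ℝ) + 1)) := by
    rw [intervalIntegral.integral_const_mul, integral_pow]
    try push_cast
    try ring
  set p := R ^ (-((k : ℝ) + 1)) with hp'
  have hp : 0 < p := Real.rpow_pos_of_pos hR0 _
  have hpR : p * R ^ (k + 1) = 1 := pow_mul_rpow_neg' hR0 k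
  have h4 : (c - ε) * ((R ^ (k + 1) - M ^ (k + 1)) / ((k : ℝ) + 1)) ≤ ∫ r in M..R, f r :=
    htailval ▸ htail
  have h5 : p * ((c - ε) * ((R ^ (k + 1) - M ^ (k + 1)) / ((k : ℝ) + 1)))
      ≤ p * (∫ r in M..R, f r) := mul_le_mul_of_nonneg_left h4 hp.le
  have heq : (c - ε) / ((k : ℝ) + 1) - (c - ε) * M ^ (k + 1) / ((k : ℝ) + 1) * p
      = p * ((c - ε) * ((R ^ (k + 1) - M ^ (k + 1)) / ((k : ℝ) + 1))) := by
    linear_combination (-(c - ε) / ((k : ℝ) + 1)) * hpR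
  have key : A * p + (c - ε) / ((k : ℝ) + 1) - (c - ε) * M ^ (k + 1) / ((k : ℝ) + 1) * p
      ≤ p * (A + ∫ r in M..R, f r) := by
    calc A * p + (c - ε) / ((k : ℝ) + 1) - (c - ε) * M ^ (k + 1) / ((k : ℝ) + 1) * p
        = p * A + ((c - ε) / ((k : ℝ) + 1) - (c - ε) * M ^ (k + 1) / ((k : ℝ) + 1) * p) := by
          ring
      _ = p * A + p * ((c - ε) * ((R ^ (k + 1) - M ^ (k + 1)) / ((k : ℝ) + 1))) := by rw [heq]
      _ ≤ p * A + p * ∫ r in M..R, f r := by linarith [h5]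
      _ = p * (A + ∫ r in M..R, f r) := by ring
  rw [hsplit]
  calc w < A * p + (c - ε) / ((k : ℝ) + 1) - (c - ε) * M ^ (k + 1) / ((k : ℝ) + 1) * p := hhR
    _ ≤ p * (A + ∫ r in M..R, f r) := key

lemma morreySup (k : ℕ) (c : ℝ) (f : ℝ → ℝ)
    (hint : ∀ R : ℝ, 0 < R → IntervalIntegrable f volume 0 R)
    (hle : ∀ r, 0 ≤ r → f r ≤ c * r ^ k)
    (hlow : ∀ ε : ℝ, 0 < ε → ∃ M : ℝ, 0 < M ∧ ∀ r, M ≤ r → (c - ε) * r ^ k ≤ f r) :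
    sSup ((fun R : ℝ => R ^ (-((k : ℝ) + 1)) * ∫ r in (0:ℝ)..R, f r) '' Set.Ioi 0)
      = c / ((k : ℝ) + 1) := by
  apply csSup_eq_of_forall_le_of_forall_lt_exists_gt
  · exact ⟨_, Set.mem_image_of_mem _ (Set.mem_Ioi.2 one_pos)⟩
  · rintro a ⟨R, hR, rfl⟩
    exact morreyA k c f hR (hint R hR) hle
  · intro w hw
    obtain ⟨R, hR, h⟩ := morreyB k c f hint hlow w hw
    exact ⟨_, Set.mem_image_of_mem _ (Set.mem_Ioi.2 hR), h⟩

/-- Critical Morrey values of the regular stationary profile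
`(e^φ, −Δφ)` in high dimensions: under the pointwise bounds and the asymptotics of
`φ` by the singular solution, the Morrey suprema equal `8(d−2)` and `4`. -/
theorem stmt18 (d : ℕ) (hd : 5 ≤ d) (φ : ℝ → ℝ)
    (hφ_diff : ∀ r ∈ Set.Ici (0 : ℝ), DifferentiableAt ℝ φ r)
    (hφ_contd : ContinuousOn (deriv φ) (Set.Ici 0))
    (hφ0 : deriv φ 0 = 0)
    (hφ2 : ∀ r ∈ Set.Ioi (0 : ℝ), DifferentiableAt ℝ (deriv φ) r)
    (hφ2c : ContinuousOn (deriv (deriv φ)) (Set.Ioi 0))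
    (ha : ∀ r ∈ Set.Ioi (0 : ℝ),
      φ r + 4 * Real.log r < Real.log (8 * ((d : ℝ) - 4) * ((d : ℝ) - 2)))
    (hb : Filter.Tendsto (fun r => φ r + 4 * Real.log r) Filter.atTop
      (nhds (Real.log (8 * ((d : ℝ) - 4) * ((d : ℝ) - 2)))))
    (hc : ∀ r ∈ Set.Ioi (0 : ℝ), -(lapR d φ r) < 4 * ((d : ℝ) - 2) / r ^ 2)
    (hd' : Filter.Tendsto (fun r => r ^ 2 * lapR d φ r) Filter.atTop
      (nhds (-(4 * ((d : ℝ) - 2))))) :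
    sSup ((fun R : ℝ =>
        R ^ ((4 : ℝ) - (d : ℝ)) * ∫ r in (0 : ℝ)..R, r ^ (d - 1) * Real.exp (φ r)) ''
      Set.Ioi 0) = 8 * ((d : ℝ) - 2) ∧
    sSup ((fun R : ℝ =>
        R ^ ((2 : ℝ) - (d : ℝ)) * ∫ r in (0 : ℝ)..R, r ^ (d - 1) * (-(lapR d φ r))) ''
      Set.Ioi 0) = 4 := by
  have hd5 : (5 : ℝ) ≤ (d : ℝ) := by exact_mod_cast hd
  have hφcont : ContinuousOn φ (Set.Ici 0) :=
    fun r hr => (hφ_diff r hr).continuousAt.continuousWithinAt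
  -- Part 1
  set c1 : ℝ := 8 * ((d : ℝ) - 4) * ((d : ℝ) - 2) with hc1def
  have hc1 : 0 < c1 := by rw [hc1def]; nlinarith
  have hr4 : ∀ r : ℝ, 0 < r → Real.exp (φ r + 4 * Real.log r) = r ^ 4 * Real.exp (φ r) := by
    intro r hr
    rw [Real.exp_add]
    have : Real.exp (4 * Real.log r) = r ^ 4 := by
      rw [show (4 : ℝ) * Real.log r = Real.log r * (4 : ℝ) by ring, ← Real.rpow_def_of_pos hr,
        show ((4 : ℝ) : ℝ) = ((4 : ℕ) : ℝ) by norm_num, Real.rpow_natCast]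
    rw [this]; ring
  have hpowsplit : ∀ r : ℝ, r ^ (d - 1) = r ^ (d - 5) * r ^ 4 := by
    intro r; rw [← pow_add]; congr 1; omega
  have hint1 : ∀ R : ℝ, 0 < R →
      IntervalIntegrable (fun r => r ^ (d - 1) * Real.exp (φ r)) MeasureTheory.volume 0 R := by
    intro R hR
    apply ContinuousOn.intervalIntegrable
    rw [Set.uIcc_of_le hR.le]
    exact (continuous_pow _).continuousOn.mul
      (Real.continuous_exp.comp_continuousOn (hφcont.mono Set.Icc_subset_Ici_self))
  have hle1 : ∀ r : ℝ, 0 ≤ r → r ^ (d - 1) * Real.exp (φ r) ≤ c1 * r ^ (d - 5) := by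
    intro r hr
    rcases hr.eq_or_lt with h | h
    · rw [← h, zero_pow (by omega : d - 1 ≠ 0), zero_mul]
      positivity
    · have key : r ^ 4 * Real.exp (φ r) ≤ c1 := by
        rw [← hr4 r h, ← Real.exp_log hc1]
        exact (Real.exp_lt_exp.2 (ha r h)).le
      calc r ^ (d - 1) * Real.exp (φ r) = r ^ (d - 5) * (r ^ 4 * Real.exp (φ r)) := by
            rw [hpowsplit]; ring
        _ ≤ r ^ (d - 5) * c1 := mul_le_mul_of_nonneg_left key (pow_nonneg h.le _)
        _ = c1 * r ^ (d - 5) := mul_comm _ _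
  have hlow1 : ∀ ε : ℝ, 0 < ε → ∃ M : ℝ, 0 < M ∧ ∀ r, M ≤ r →
      (c1 - ε) * r ^ (d - 5) ≤ r ^ (d - 1) * Real.exp (φ r) := by
    intro ε hε
    by_cases hεc : ε < c1
    · have hlog : Real.log (c1 - ε) < Real.log c1 := Real.log_lt_log (by linarith) (by linarith)
      have hev := (hb.eventually (lt_mem_nhds hlog)).and (Filter.eventually_ge_atTop 1)
      rw [Filter.eventually_atTop] at hev
      obtain ⟨M, hM⟩ := hev
      refine ⟨max M 1, lt_of_lt_of_le one_pos (le_max_right _ _), fun r hr => ?_⟩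
      obtain ⟨hgt, hr1⟩ := hM r (le_trans (le_max_left _ _) hr)
      have hr0 : 0 < r := lt_of_lt_of_le one_pos hr1
      have key : c1 - ε ≤ r ^ 4 * Real.exp (φ r) := by
        rw [← hr4 r hr0, ← Real.exp_log (show 0 < c1 - ε by linarith)]
        exact (Real.exp_lt_exp.2 hgt).le
      calc (c1 - ε) * r ^ (d - 5) ≤ (r ^ 4 * Real.exp (φ r)) * r ^ (d - 5) :=
            mul_le_mul_of_nonneg_right key (pow_nonneg hr0.le _)
        _ = r ^ (d - 1) * Real.exp (φ r) := by rw [hpowsplit]; ring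
    · refine ⟨1, one_pos, fun r hr => ?_⟩
      have hr0 : (0 : ℝ) ≤ r := le_trans zero_le_one hr
      have h1 : (c1 - ε) * r ^ (d - 5) ≤ 0 :=
        mul_nonpos_of_nonpos_of_nonneg (by linarith) (pow_nonneg hr0 _)
      exact le_trans h1 (by positivity)
  have part1 : sSup ((fun R : ℝ =>
      R ^ ((4 : ℝ) - (d : ℝ)) * ∫ r in (0 : ℝ)..R, r ^ (d - 1) * Real.exp (φ r)) ''
      Set.Ioi 0) = 8 * ((d : ℝ) - 2) := by
    have e1 : ((4 : ℝ) - (d : ℝ)) = -(((d - 5 : ℕ) : ℝ) + 1) := by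
      rw [Nat.cast_sub hd]; push_cast; ring
    have hsup := morreySup (d - 5) c1 (fun r => r ^ (d - 1) * Real.exp (φ r)) hint1 hle1 hlow1
    have hval : c1 / (((d - 5 : ℕ) : ℝ) + 1) = 8 * ((d : ℝ) - 2) := by
      rw [Nat.cast_sub hd, hc1def]
      push_cast
      rw [div_eq_iff (show ((d:ℝ) - 5) + 1 ≠ 0 from ne_of_gt (by linarith))]
      ring
    rw [e1]
    rw [hsup, hval]
  -- Part 2
  set c2 : ℝ := 4 * ((d : ℝ) - 2) with hc2def
  have hneg : ∀ r : ℝ, 0 < r → -(lapR d φ r) * r ^ 2 < c2 := by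
    intro r hr
    exact (lt_div_iff₀ (pow_pos hr 2)).1 (hc r hr)
  have hpowsplit2 : ∀ r : ℝ, r ^ (d - 1) = r ^ (d - 3) * r ^ 2 := by
    intro r; rw [← pow_add]; congr 1; omega
  have hint2 : ∀ R : ℝ, 0 < R →
      IntervalIntegrable (fun r => r ^ (d - 1) * (-(lapR d φ r))) MeasureTheory.volume 0 R := by
    intro R hR
    set W' : ℝ → ℝ := fun r => r ^ (d - 1) * lapR d φ r + c2 * r ^ (d - 3)
      with hW'
    have hwcont : ContinuousOn (fun r : ℝ => r ^ (d - 1) * deriv φ r + 4 * r ^ (d - 2))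
        (Set.Icc 0 R) :=
      (((continuous_pow _).continuousOn.mul (hφ_contd.mono Set.Icc_subset_Ici_self)).add
        ((continuous_const.mul (continuous_pow _)).continuousOn))
    have hwderiv : ∀ r ∈ Set.Ioo (0 : ℝ) R,
        HasDerivAt (fun r : ℝ => r ^ (d - 1) * deriv φ r + 4 * r ^ (d - 2)) (W' r) r := by
      intro r hr
      have hr0 : 0 < r := hr.1
      have h1 : HasDerivAt (fun r : ℝ => r ^ (d - 1)) (((d : ℝ) - 1) * r ^ (d - 2)) r := by
        have h := hasDerivAt_pow (d - 1) r
        have e1 : ((d - 1 : ℕ) : ℝ) = (d : ℝ) - 1 := by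
          rw [Nat.cast_sub (by omega)]; norm_num
        have e2 : d - 1 - 1 = d - 2 := by omega
        rw [e1, e2] at h
        exact h
      have h2 : HasDerivAt (deriv φ) (deriv (deriv φ) r) r := (hφ2 r hr0).hasDerivAt
      have h3 := h1.mul h2
      have h4 : HasDerivAt (fun r : ℝ => 4 * r ^ (d - 2))
          (4 * (((d : ℝ) - 2) * r ^ (d - 3))) r := by
        have h := (hasDerivAt_pow (d - 2) r).const_mul (4 : ℝ)
        have e1 : ((d - 2 : ℕ) : ℝ) = (d : ℝ) - 2 := by
          rw [Nat.cast_sub (by omega)]; norm_num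
        have e2 : d - 2 - 1 = d - 3 := by omega
        rw [e1, e2] at h
        exact h
      have h5 : HasDerivAt (fun r : ℝ => r ^ (d - 1) * deriv φ r + 4 * r ^ (d - 2)) _ r :=
        h3.add h4
      convert h5 using 1
      show r ^ (d - 1) * lapR d φ r + c2 * r ^ (d - 3) = _
      rw [hc2def, lapR]
      have hsp : r ^ (d - 1) = r ^ (d - 2) * r := by rw [← pow_succ]; congr 1; omega
      rw [hsp]
      field_simp
      try ring
    have hW'nonneg : ∀ r ∈ Set.Ioo (0 : ℝ) R, 0 ≤ W' r := by
      intro r hr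
      have hr0 : 0 < r := hr.1
      have h2 := hneg r hr0
      have h3 : r ^ (d - 3) * (-(lapR d φ r) * r ^ 2) ≤ r ^ (d - 3) * c2 :=
        mul_le_mul_of_nonneg_left h2.le (pow_nonneg hr0.le _)
      have heq : r ^ (d - 1) * lapR d φ r = -(r ^ (d - 3) * (-(lapR d φ r) * r ^ 2)) := by
        rw [hpowsplit2]; ring
      show 0 ≤ r ^ (d - 1) * lapR d φ r + c2 * r ^ (d - 3)
      linarith [h3, heq]
    have hWint : MeasureTheory.IntegrableOn W' (Set.Ioc 0 R) :=
      intervalIntegral.integrableOn_deriv_of_nonneg hwcont hwderiv hW'nonneg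
    have hfeq : (fun r : ℝ => r ^ (d - 1) * (-(lapR d φ r)))
        = fun r : ℝ => c2 * r ^ (d - 3) - W' r := by
      funext r; show _ = c2 * r ^ (d - 3) - (r ^ (d - 1) * lapR d φ r + c2 * r ^ (d - 3)); ring
    rw [intervalIntegrable_iff, Set.uIoc_of_le hR.le, hfeq]
    exact ((Continuous.integrableOn_Ioc (by continuity)).sub hWint)
  have hle2 : ∀ r : ℝ, 0 ≤ r → r ^ (d - 1) * (-(lapR d φ r)) ≤ c2 * r ^ (d - 3) := by
    intro r hr
    rcases hr.eq_or_lt with h | h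
    · rw [← h, zero_pow (by omega : d - 1 ≠ 0), zero_mul,
        zero_pow (by omega : d - 3 ≠ 0), mul_zero]
    · have h2 := hneg r h
      have h3 : r ^ (d - 3) * (-(lapR d φ r) * r ^ 2) ≤ r ^ (d - 3) * c2 :=
        mul_le_mul_of_nonneg_left h2.le (pow_nonneg h.le _)
      calc r ^ (d - 1) * (-(lapR d φ r)) = r ^ (d - 3) * (-(lapR d φ r) * r ^ 2) := by
            rw [hpowsplit2]; ring
        _ ≤ r ^ (d - 3) * c2 := h3
        _ = c2 * r ^ (d - 3) := mul_comm _ _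
  have hlow2 : ∀ ε : ℝ, 0 < ε → ∃ M : ℝ, 0 < M ∧ ∀ r, M ≤ r →
      (c2 - ε) * r ^ (d - 3) ≤ r ^ (d - 1) * (-(lapR d φ r)) := by
    intro ε hε
    have hlim : Filter.Tendsto (fun r : ℝ => -(r ^ 2 * lapR d φ r)) Filter.atTop (nhds c2) := by
      have := hd'.neg
      rw [neg_neg] at this
      exact this
    have hev := (hlim.eventually (lt_mem_nhds (show c2 - ε < c2 by linarith))).and
      (Filter.eventually_ge_atTop 1)
    rw [Filter.eventually_atTop] at hev
    obtain ⟨M, hM⟩ := hev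
    refine ⟨max M 1, lt_of_lt_of_le one_pos (le_max_right _ _), fun r hr => ?_⟩
    obtain ⟨hgt, hr1⟩ := hM r (le_trans (le_max_left _ _) hr)
    have hr0 : 0 < r := lt_of_lt_of_le one_pos hr1
    calc (c2 - ε) * r ^ (d - 3) ≤ (-(r ^ 2 * lapR d φ r)) * r ^ (d - 3) :=
          mul_le_mul_of_nonneg_right hgt.le (pow_nonneg hr0.le _)
      _ = r ^ (d - 1) * (-(lapR d φ r)) := by rw [hpowsplit2]; ring
  have part2 : sSup ((fun R : ℝ =>
      R ^ ((2 : ℝ) - (d : ℝ)) * ∫ r in (0 : ℝ)..R, r ^ (d - 1) * (-(lapR d φ r))) ''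
      Set.Ioi 0) = 4 := by
    have e2 : ((2 : ℝ) - (d : ℝ)) = -(((d - 3 : ℕ) : ℝ) + 1) := by
      rw [Nat.cast_sub (by omega : 3 ≤ d)]; push_cast; ring
    have hsup := morreySup (d - 3) c2 (fun r => r ^ (d - 1) * (-(lapR d φ r))) hint2 hle2 hlow2
    have hval : c2 / (((d - 3 : ℕ) : ℝ) + 1) = 4 := by
      rw [Nat.cast_sub (by omega : 3 ≤ d), hc2def]
      push_cast
      rw [div_eq_iff (show ((d:ℝ) - 3) + 1 ≠ 0 from ne_of_gt (by linarith))]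
      ring
    rw [e2]
    rw [hsup, hval]
  exact ⟨part1, part2⟩
end
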